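/- arXiv:2508.11164 — 6 statements merged into one kernel-verified Lean document; each statement's English description precedes it below -/
import Mathlib

section
/- Let G be a finite abelian group and let G = A ⊕ B be a factorization of G such that A is periodic. Then for any subset D of G with A = L_A ⊕ D, the quotient group G/L_A admits the factorization G/L_A = ((D + L_A)/L_A) ⊕ ((B + L_A)/L_A). Moreover, (D + L_A)/L_A is an aperiodic subset of G/L_A, |(D + L_A)/L_A| = |D|, and |(B + L_A)/L_A| = |B|. -/
open Pointwise

/-- `G = A ⊕ B`: every element of `G` can be written uniquely as `a + b`
with `a ∈ A` and `b ∈ B`. -/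
def IsFactorization {G : Type*} [AddCommGroup G] (A B : Set G) : Prop :=
  ∀ g : G, ∃! ab : G × G, ab.1 ∈ A ∧ ab.2 ∈ B ∧ ab.1 + ab.2 = g

/-- The subgroup of periods `L_A = {g : g + A = A}` of a subset `A`. -/
def periods {G : Type*} [AddCommGroup G] (A : Set G) : AddSubgroup G :=
  AddAction.stabilizer G A

/-- A subset is periodic if it has a non-zero period. -/
def IsPeriodic {G : Type*} [AddCommGroup G] (A : Set G) : Prop :=
  periods A ≠ ⊥

/-- A Hajós group: a (finite abelian) group in which, for every factorization,
at least one factor is periodic. -/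
def IsHajos (G : Type*) [AddCommGroup G] : Prop :=
  ∀ A B : Set G, IsFactorization A B → IsPeriodic A ∨ IsPeriodic B

/-- `C` is a perfect code in the Cayley graph `Cay(G,S)`: every element of `G`
can be written uniquely as `s + c` with `s ∈ S₀ = S ∪ {0}` and `c ∈ C`. -/
def IsPerfectCode {G : Type*} [AddCommGroup G] (S C : Set G) : Prop :=
  IsFactorization (insert 0 S) C

/-- `A = X ⊕ Y` for subsets: `X + Y = A` and representations are unique. -/
def IsSubsetDirectSum {G : Type*} [AddCommGroup G] (X Y A : Set G) : Prop :=
  X + Y = A ∧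
    ∀ x₁ ∈ X, ∀ y₁ ∈ Y, ∀ x₂ ∈ X, ∀ y₂ ∈ Y,
      x₁ + y₁ = x₂ + y₂ → x₁ = x₂ ∧ y₁ = y₂

/-- Lemma (quotient): if `G = A ⊕ B` is a factorization of a finite abelian group
with `A` periodic and `A = L_A ⊕ D`, then
`G/L_A = ((D + L_A)/L_A) ⊕ ((B + L_A)/L_A)`; moreover `(D + L_A)/L_A` is aperiodic
in `G/L_A`, `|(D + L_A)/L_A| = |D|`, and `|(B + L_A)/L_A| = |B|`. -/
theorem quotient_factorization {G : Type*} [AddCommGroup G] [Fintype G]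
    (A B D : Set G)
    (hAB : IsFactorization A B)
    (hA : IsPeriodic A)
    (hD : IsSubsetDirectSum (↑(periods A)) D A) :
    IsFactorization
        (QuotientAddGroup.mk '' D : Set (G ⧸ periods A))
        (QuotientAddGroup.mk '' B : Set (G ⧸ periods A)) ∧
      ¬ IsPeriodic (QuotientAddGroup.mk '' D : Set (G ⧸ periods A)) ∧
      (QuotientAddGroup.mk '' D : Set (G ⧸ periods A)).ncard = D.ncard ∧
      (QuotientAddGroup.mk '' B : Set (G ⧸ periods A)).ncard = B.ncard := by
  classical
  obtain ⟨hsum, huniq⟩ := hD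
  set L := periods A with hLdef
  -- basic facts
  have hmemL : ∀ l ∈ L, ∀ a ∈ A, l + a ∈ A := by
    intro l hl a ha
    have h : l +ᵥ A = A := hl
    rw [← h]
    exact Set.vadd_mem_vadd_set ha
  have hDA : D ⊆ A := by
    intro d hd
    rw [← hsum]
    exact ⟨0, L.zero_mem, d, hd, by simp⟩
  have hABuniq : ∀ a₁ ∈ A, ∀ b₁ ∈ B, ∀ a₂ ∈ A, ∀ b₂ ∈ B,
      a₁ + b₁ = a₂ + b₂ → a₁ = a₂ ∧ b₁ = b₂ := by
    intro a₁ ha₁ b₁ hb₁ a₂ ha₂ b₂ hb₂ h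
    obtain ⟨ab, -, hu⟩ := hAB (a₂ + b₂)
    have h1 := hu (a₁, b₁) ⟨ha₁, hb₁, h⟩
    have h2 := hu (a₂, b₂) ⟨ha₂, hb₂, rfl⟩
    have h3 : (a₁, b₁) = (a₂, b₂) := h1.trans h2.symm
    exact ⟨congrArg Prod.fst h3, congrArg Prod.snd h3⟩
  have hsplit : ∀ a ∈ A, ∃ l ∈ L, ∃ d ∈ D, l + d = a := by
    intro a ha
    rw [← hsum] at ha
    obtain ⟨l, hl, d, hd, h⟩ := ha
    exact ⟨l, hl, d, hd, h⟩
  -- the factorization of the quotient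
  have hfac : IsFactorization
      (QuotientAddGroup.mk '' D : Set (G ⧸ L))
      (QuotientAddGroup.mk '' B : Set (G ⧸ L)) := by
    intro q
    obtain ⟨g, rfl⟩ := QuotientAddGroup.mk_surjective q
    obtain ⟨⟨a, b⟩, ⟨ha, hb, hab⟩, -⟩ := hAB g
    dsimp only at ha hb hab
    obtain ⟨l, hl, d, hd, hld⟩ := hsplit a ha
    refine ⟨(QuotientAddGroup.mk d, QuotientAddGroup.mk b),
      ⟨⟨d, hd, rfl⟩, ⟨b, hb, rfl⟩, ?_⟩, ?_⟩
    · show (QuotientAddGroup.mk (d + b) : G ⧸ L) = QuotientAddGroup.mk g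
      rw [QuotientAddGroup.eq]
      have : -(d + b) + g = l := by
        rw [← hab, ← hld]; abel
      rw [this]; exact hl
    · rintro ⟨x, y⟩ ⟨⟨d', hd', rfl⟩, ⟨b', hb', rfl⟩, hsum'⟩
      have heq : (QuotientAddGroup.mk (d' + b') : G ⧸ L) = QuotientAddGroup.mk (d + b) := by
        show (QuotientAddGroup.mk d' + QuotientAddGroup.mk b' : G ⧸ L) = _
        rw [hsum']
        rw [QuotientAddGroup.eq]
        have : -g + (d + b) = -l := by rw [← hab, ← hld]; abel
        rw [this]; exact L.neg_mem hl
      rw [QuotientAddGroup.eq] at heq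
      set l' : G := -(d' + b') + (d + b) with hl'def
      have hl' : l' ∈ L := heq
      have hkey : (l' + d') + b' = d + b := by rw [hl'def]; abel
      have hl'd'A : l' + d' ∈ A := by
        rw [← hsum]; exact ⟨l', hl', d', hd', rfl⟩
      have h12 := hABuniq (l' + d') hl'd'A b' hb' d (hDA hd) b hb hkey
      have h34 := huniq l' hl' d' hd' 0 L.zero_mem d (by exact hd) (by rw [h12.1]; abel)
      have : d' = d := h34.2
      rw [this, h12.2]
  refine ⟨hfac, ?_, ?_, ?_⟩
  · -- aperiodic
    rw [IsPeriodic, not_not, AddSubgroup.eq_bot_iff_forall]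
    intro x hx
    obtain ⟨g, rfl⟩ := QuotientAddGroup.mk_surjective x
    have hx' : (QuotientAddGroup.mk g : G ⧸ L) +ᵥ
        (QuotientAddGroup.mk '' D : Set (G ⧸ L)) = QuotientAddGroup.mk '' D := hx
    have hgL : g ∈ L := by
      have hfwd : ∀ a ∈ A, g + a ∈ A := by
        intro a ha
        obtain ⟨l, hl, d, hd, hld⟩ := hsplit a ha
        have hmem : (QuotientAddGroup.mk g : G ⧸ L) + QuotientAddGroup.mk d ∈
            (QuotientAddGroup.mk '' D : Set (G ⧸ L)) := by
          rw [← hx']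
          exact Set.vadd_mem_vadd_set ⟨d, hd, rfl⟩
        obtain ⟨d', hd', hEq⟩ := hmem
        have hEq2 : (QuotientAddGroup.mk d' : G ⧸ L) = QuotientAddGroup.mk (g + d) := hEq
        rw [QuotientAddGroup.eq] at hEq2
        set l'' : G := -d' + (g + d) with hl''def
        have : g + a = (l + l'') + d' := by rw [← hld, hl''def]; abel
        rw [this, ← hsum]
        exact ⟨l + l'', L.add_mem hl hEq2, d', hd', rfl⟩
      have hbwd : ∀ a ∈ A, -g + a ∈ A := by
        intro a ha
        obtain ⟨l, hl, d, hd, hld⟩ := hsplit a ha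
        have hmem : (QuotientAddGroup.mk d : G ⧸ L) ∈
            (QuotientAddGroup.mk g : G ⧸ L) +ᵥ (QuotientAddGroup.mk '' D : Set (G ⧸ L)) := by
          rw [hx']; exact ⟨d, hd, rfl⟩
        obtain ⟨y, ⟨d'', hd'', rfl⟩, hEq⟩ := hmem
        have hEq2 : (QuotientAddGroup.mk (g + d'') : G ⧸ L) = QuotientAddGroup.mk d := hEq
        rw [QuotientAddGroup.eq] at hEq2
        set l'' : G := -(g + d'') + d with hl''def
        have : -g + a = (l + l'') + d'' := by rw [← hld, hl''def]; abel
        rw [this, ← hsum]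
        exact ⟨l + l'', L.add_mem hl hEq2, d'', hd'', rfl⟩
      show g +ᵥ A = A
      ext x
      constructor
      · rintro ⟨a, ha, rfl⟩
        exact hfwd a ha
      · intro hxA
        exact ⟨-g + x, hbwd x hxA, by simp⟩
    exact (QuotientAddGroup.eq_zero_iff g).2 hgL
  · -- |D̄| = |D|
    apply Set.ncard_image_of_injOn
    intro d₁ hd₁ d₂ hd₂ h
    rw [QuotientAddGroup.eq] at h
    have := huniq (-d₁ + d₂) h d₁ hd₁ 0 L.zero_mem d₂ hd₂ (by abel)
    have h0 : -d₁ + d₂ = 0 := this.1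
    have := neg_add_eq_zero.mp h0
    exact this
  · -- |B̄| = |B|
    apply Set.ncard_image_of_injOn
    intro b₁ hb₁ b₂ hb₂ h
    rw [QuotientAddGroup.eq] at h
    set l : G := -b₁ + b₂ with hldef
    obtain ⟨⟨a, b⟩, ⟨ha, hb, -⟩, -⟩ := hAB 0
    have hla : l + a ∈ A := hmemL l h a ha
    have hkey : a + b₂ = (l + a) + b₁ := by rw [hldef]; abel
    exact (hABuniq a ha b₂ hb₂ (l + a) hla b₁ hb₁ hkey).2.symm
end

section
/- Let G be a finite abelian group, let G = A ⊕ B be a factorization of G with A periodic, and let D ⊆ G satisfy A = L_A ⊕ D. Suppose |(D + L_A)/L_A| = n and |(B + L_A)/L_A| = m, and write L_A = {l_i : i ∈ [t]}, (D + L_A)/L_A = {d_j + L_A : j ∈ [n]}, and (B + L_A)/L_A = {b_k + L_A : k ∈ [m]}. Then A = {l_i + d_j : i ∈ [t], j ∈ [n]}, and there exist elements ℓ_k ∈ L_A (k ∈ [m]) such that B = {b_k + ℓ_k : k ∈ [m]}. -/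
open Pointwise

/-- `G = A ⊕ B`: every element of `G` can be written uniquely as `a + b`
with `a ∈ A` and `b ∈ B`. -/
private lemma period_add_mem {G : Type*} [AddCommGroup G] {A : Set G} {x a : G}
    (hx : x ∈ AddAction.stabilizer G A) (ha : a ∈ A) : x + a ∈ A := by
  have h : x +ᵥ A = A := AddAction.mem_stabilizer_iff.mp hx
  rw [← h]
  exact Set.vadd_mem_vadd_set ha

/-- If `G = A ⊕ B` with `A` periodic, `A = L_A ⊕ D`,
`|(D + L_A)/L_A| = n`, `|(B + L_A)/L_A| = m`, and
`L_A = {l_i : i ∈ [t]}`, `(D + L_A)/L_A = {d_j + L_A : j ∈ [n]}`,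
`(B + L_A)/L_A = {b_k + L_A : k ∈ [m]}`, then
`A = {l_i + d_j : i ∈ [t], j ∈ [n]}` and `B = {b_k + ℓ_k : k ∈ [m]}`
for some `ℓ_k ∈ L_A`. -/
theorem factors_from_quotient {G : Type*} [AddCommGroup G] [Fintype G]
    (A B D : Set G) (t n m : ℕ)
    (l : Fin t → G) (d : Fin n → G) (b : Fin m → G)
    (hAB : IsFactorization A B)
    (hA : IsPeriodic A)
    (hD : IsSubsetDirectSum (↑(periods A)) D A)
    (hn : (QuotientAddGroup.mk '' D : Set (G ⧸ periods A)).ncard = n)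
    (hm : (QuotientAddGroup.mk '' B : Set (G ⧸ periods A)).ncard = m)
    (hl : (periods A : Set G) = Set.range l)
    (hd : (QuotientAddGroup.mk '' D : Set (G ⧸ periods A)) =
      Set.range fun j : Fin n => (QuotientAddGroup.mk (d j) : G ⧸ periods A))
    (hb : (QuotientAddGroup.mk '' B : Set (G ⧸ periods A)) =
      Set.range fun k : Fin m => (QuotientAddGroup.mk (b k) : G ⧸ periods A)) :
    A = Set.range (fun ij : Fin t × Fin n => l ij.1 + d ij.2) ∧
      ∃ ℓ : Fin m → G, (∀ k, ℓ k ∈ periods A) ∧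
        B = Set.range fun k : Fin m => b k + ℓ k := by
  have hper : ∀ {x a : G}, x ∈ periods A → a ∈ A → x + a ∈ A := fun hx ha =>
    period_add_mem hx ha
  -- two elements of B in the same coset of periods A are equal
  have hBuniq : ∀ x ∈ B, ∀ y ∈ B, -x + y ∈ periods A → x = y := by
    intro x hx y hy hxy
    obtain ⟨⟨a, _⟩, ⟨ha, _, _⟩, _⟩ := hAB 0
    have ha' : (-x + y) + a ∈ A := hper hxy ha
    have huniq := hAB (a + y)
    have h1 : ((-x + y) + a, x) = (a, y) := by
      refine huniq.unique ⟨ha', hx, by show -x + y + a + x = a + y; abel⟩ ⟨ha, hy, rfl⟩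
    have := congrArg Prod.snd h1
    simpa using this
  constructor
  · ext a
    constructor
    · intro haA
      rw [← hD.1] at haA
      obtain ⟨x, hxL, δ, hδ, rfl⟩ := Set.mem_add.mp haA
      have hδq : (QuotientAddGroup.mk δ : G ⧸ periods A) ∈ QuotientAddGroup.mk '' D :=
        ⟨δ, hδ, rfl⟩
      rw [hd] at hδq
      obtain ⟨j, hj⟩ := hδq
      have hμ : -(d j) + δ ∈ periods A := (QuotientAddGroup.eq).mp hj
      have hxμ : x + (-(d j) + δ) ∈ periods A := add_mem hxL hμ
      have : x + (-(d j) + δ) ∈ Set.range l := by rw [← hl]; exact hxμ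
      obtain ⟨i, hi⟩ := this
      exact ⟨(i, j), by simp only; rw [hi]; abel⟩
    · rintro ⟨⟨i, j⟩, rfl⟩
      simp only
      have hli : l i ∈ periods A := by
        have h' : l i ∈ Set.range l := ⟨i, rfl⟩
        rw [← hl] at h'; exact h'
      have hdq : (QuotientAddGroup.mk (d j) : G ⧸ periods A) ∈ QuotientAddGroup.mk '' D := by
        rw [hd]; exact ⟨j, rfl⟩
      obtain ⟨δ, hδ, hδq⟩ := hdq
      have hμ : -δ + d j ∈ periods A := (QuotientAddGroup.eq).mp hδq
      have hmem : (l i + (-δ + d j)) + δ ∈ A := by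
        rw [← hD.1]
        exact Set.add_mem_add (add_mem hli hμ) hδ
      have : l i + d j = (l i + (-δ + d j)) + δ := by abel
      rw [this]; exact hmem
  · have hbk : ∀ k : Fin m, ∃ β ∈ B, (QuotientAddGroup.mk β : G ⧸ periods A) =
        QuotientAddGroup.mk (b k) := by
      intro k
      have : (QuotientAddGroup.mk (b k) : G ⧸ periods A) ∈ QuotientAddGroup.mk '' B := by
        rw [hb]; exact ⟨k, rfl⟩
      obtain ⟨β, hβ, hβq⟩ := this
      exact ⟨β, hβ, hβq⟩
    choose β hβB hβq using hbk
    refine ⟨fun k => β k - b k, fun k => ?_, ?_⟩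
    · have : -(β k) + b k ∈ periods A := (QuotientAddGroup.eq).mp (hβq k)
      have := neg_mem this
      simpa [neg_add_rev, sub_eq_add_neg, add_comm] using this
    · ext x
      constructor
      · intro hx
        have : (QuotientAddGroup.mk x : G ⧸ periods A) ∈ QuotientAddGroup.mk '' B :=
          ⟨x, hx, rfl⟩
        rw [hb] at this
        obtain ⟨k, hk⟩ := this
        have hk' : (QuotientAddGroup.mk (β k) : G ⧸ periods A) = QuotientAddGroup.mk x := by
          rw [hβq k]; exact hk
        have : -(β k) + x ∈ periods A := (QuotientAddGroup.eq).mp hk'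
        have hxβ : β k = x := hBuniq (β k) (hβB k) x hx this
        exact ⟨k, by simp only; rw [← hxβ]; abel⟩
      · rintro ⟨k, rfl⟩
        simp only
        have : b k + (β k - b k) = β k := by abel
        rw [this]
        exact hβB k
end

section
/- Let G be a Hajós group, let Cay(G,S) be a connected non-complete Cayley graph of G, and let C be a perfect code in Cay(G,S). If |S₀| is a prime, then S₀ is aperiodic and C = g + L_C for some element g of G; in particular, C is a coset of a subgroup of G. -/
open Pointwise

namespace PCodeAux


variable {G : Type*} [AddCommGroup G]

lemma fact_unique {A B : Set G} (h : IsFactorization A B) {a₁ a₂ b₁ b₂ : G}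
    (ha₁ : a₁ ∈ A) (hb₁ : b₁ ∈ B) (ha₂ : a₂ ∈ A) (hb₂ : b₂ ∈ B)
    (hsum : a₁ + b₁ = a₂ + b₂) : a₁ = a₂ ∧ b₁ = b₂ := by
  obtain ⟨ab, -, huniq⟩ := h (a₁ + b₁)
  have h1 := huniq (a₁, b₁) ⟨ha₁, hb₁, rfl⟩
  have h2 := huniq (a₂, b₂) ⟨ha₂, hb₂, hsum.symm⟩
  have := h1.trans h2.symm
  exact ⟨congrArg Prod.fst this, congrArg Prod.snd this⟩

lemma fact_cover {A B : Set G} (h : IsFactorization A B) (g : G) :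
    ∃ a ∈ A, ∃ b ∈ B, a + b = g := by
  obtain ⟨ab, ⟨ha, hb, hab⟩, -⟩ := h g
  exact ⟨ab.1, ha, ab.2, hb, hab⟩

lemma mem_periods {A : Set G} {g : G} : g ∈ periods A ↔ g +ᵥ A = A :=
  AddAction.mem_stabilizer_iff

lemma add_mem_of_periods {A : Set G} {g a : G} (hg : g ∈ periods A) (ha : a ∈ A) :
    g + a ∈ A := by
  rw [← mem_periods.mp hg]
  exact Set.mem_vadd_set.mpr ⟨a, ha, rfl⟩

lemma mem_periods_of_forall [Finite G] {A : Set G} {g : G}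
    (h : ∀ a ∈ A, g + a ∈ A) : g ∈ periods A := by
  have hsub : g +ᵥ A ⊆ A := by
    intro x hx
    obtain ⟨a, ha, rfl⟩ := Set.mem_vadd_set.mp hx
    simpa using h a ha
  have : g +ᵥ A = A :=
    Set.eq_of_subset_of_ncard_le hsub (by rw [Set.ncard_vadd_set]) (Set.toFinite A)
  exact mem_periods.mpr this

lemma periods_subset {A : Set G} (h0 : (0 : G) ∈ A) {g : G} (hg : g ∈ periods A) :
    g ∈ A := by simpa using add_mem_of_periods hg h0

lemma fact_card [Finite G] {A B : Set G} (h : IsFactorization A B) :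
    Nat.card G = A.ncard * B.ncard := by
  have e : (↥A × ↥B) ≃ G := by
    refine Equiv.ofBijective (fun x => x.1.1 + x.2.1) ⟨?_, ?_⟩
    · rintro ⟨⟨a₁, ha₁⟩, ⟨b₁, hb₁⟩⟩ ⟨⟨a₂, ha₂⟩, ⟨b₂, hb₂⟩⟩ hh
      have := fact_unique h ha₁ hb₁ ha₂ hb₂ hh
      simp only [Prod.ext_iff, Subtype.ext_iff]
      exact ⟨this.1, this.2⟩
    · intro g
      obtain ⟨a, ha, b, hb, hab⟩ := fact_cover h g
      exact ⟨⟨⟨a, ha⟩, ⟨b, hb⟩⟩, hab⟩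
  calc Nat.card G = Nat.card (↥A × ↥B) := (Nat.card_congr e).symm
  _ = A.ncard * B.ncard := by
      rw [Nat.card_prod, Nat.card_coe_set_eq, Nat.card_coe_set_eq]

lemma eq_univ_of_periodic [Finite G] (A : Set G) (h0 : (0 : G) ∈ A)
    (hp : (A.ncard).Prime) (hgen : AddSubgroup.closure A = ⊤) (hper : IsPeriodic A) :
    A = Set.univ := by
  set K := periods A with hK
  have hKA : (K : Set G) ⊆ A := fun g hg => periods_subset h0 hg
  have hApre : A = QuotientAddGroup.mk ⁻¹' (QuotientAddGroup.mk '' A : Set (G ⧸ K)) := by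
    apply Set.Subset.antisymm
    · exact Set.subset_preimage_image _ _
    · intro x hx
      obtain ⟨a, ha, hax⟩ := hx
      have : -x + a ∈ K := by
        rw [← QuotientAddGroup.eq]
        exact hax.symm
      have hx' : x = (-(-x + a)) + a := by abel
      rw [hx']
      exact add_mem_of_periods (neg_mem this) ha
  have hdvd : Nat.card K ∣ A.ncard := by
    have : A.ncard = Nat.card K * (QuotientAddGroup.mk '' A : Set (G ⧸ K)).ncard := by
      rw [← Nat.card_coe_set_eq, ← Nat.card_coe_set_eq]
      calc Nat.card ↥A
          = Nat.card ↥(QuotientAddGroup.mk ⁻¹' (QuotientAddGroup.mk '' A : Set (G ⧸ K))) := by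
            rw [← hApre]
        _ = Nat.card (↥K × ↥(QuotientAddGroup.mk '' A : Set (G ⧸ K))) :=
            Nat.card_congr (QuotientAddGroup.preimageMkEquivAddSubgroupProdSet K _)
        _ = Nat.card ↥K * Nat.card ↥(QuotientAddGroup.mk '' A : Set (G ⧸ K)) :=
            Nat.card_prod _ _
    exact ⟨_, this⟩
  have hKcard : Nat.card K = 1 ∨ Nat.card K = A.ncard := (Nat.Prime.eq_one_or_self_of_dvd hp _ hdvd)
  have hKne : Nat.card K ≠ 1 := by
    intro h1
    exact hper (AddSubgroup.eq_bot_of_card_eq K h1)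
  have hKcard' : Nat.card K = A.ncard := hKcard.resolve_left hKne
  have hAK : (K : Set G) = A := by
    apply Set.eq_of_subset_of_ncard_le hKA
    rw [← hKcard', ← Nat.card_coe_set_eq, SetLike.coe_sort_coe]
  have hKtop : K = ⊤ := by
    have : AddSubgroup.closure (K : Set G) = K := AddSubgroup.closure_eq K
    rw [hAK, hgen] at this
    exact this.symm
  rw [← hAK, hKtop]
  rfl



lemma exists_injective_quotient_hom {Γ : Type*} [AddCommGroup Γ] [Finite Γ] (L : AddSubgroup Γ) :
    ∃ ψ : (Γ ⧸ L) →+ Γ, Function.Injective ψ := by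
  classical
  haveI : Finite (Γ ⧸ L) := Quotient.finite _
  haveI h1 : NeZero ((Monoid.exponent (Multiplicative (Γ ⧸ L)) : ℂ)) :=
    ⟨Nat.cast_ne_zero.mpr Monoid.exponent_ne_zero_of_finite⟩
  haveI h2 : NeZero ((Monoid.exponent (Multiplicative Γ) : ℂ)) :=
    ⟨Nat.cast_ne_zero.mpr Monoid.exponent_ne_zero_of_finite⟩
  obtain ⟨eQ⟩ := CommGroup.monoidHom_mulEquiv_of_hasEnoughRootsOfUnity (Multiplicative (Γ ⧸ L)) ℂ
  obtain ⟨eΓ⟩ := CommGroup.monoidHom_mulEquiv_of_hasEnoughRootsOfUnity (Multiplicative Γ) ℂ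
  let m : Multiplicative Γ →* Multiplicative (Γ ⧸ L) :=
    AddMonoidHom.toMultiplicative (QuotientAddGroup.mk' L)
  have hm : Function.Surjective m := by
    intro q
    obtain ⟨g, hg⟩ := QuotientAddGroup.mk'_surjective L (Multiplicative.toAdd q)
    refine ⟨Multiplicative.ofAdd g, ?_⟩
    show Multiplicative.ofAdd ((QuotientAddGroup.mk' L) g) = q
    rw [hg]
    rfl
  let mid : (Multiplicative (Γ ⧸ L) →* ℂˣ) →* (Multiplicative Γ →* ℂˣ) :=
    { toFun := fun φ => φ.comp m
      map_one' := rfl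
      map_mul' := fun _ _ => rfl }
  have hmid : Function.Injective mid := by
    intro φ₁ φ₂ h
    refine MonoidHom.ext fun q => Units.ext ?_
    obtain ⟨x, rfl⟩ := hm q
    exact congrArg Units.val (congrArg (fun (ξ : Multiplicative Γ →* ℂˣ) => ξ x) h)
  let e : Multiplicative (Γ ⧸ L) →* Multiplicative Γ :=
    eΓ.toMonoidHom.comp (mid.comp eQ.symm.toMonoidHom)
  have he : Function.Injective e := by
    intro x y hxy
    apply eQ.symm.injective
    apply hmid
    exact eΓ.injective hxy
  refine ⟨AddMonoidHom.toMultiplicative.symm e, ?_⟩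
  intro a b hab
  have : e (Multiplicative.ofAdd a) = e (Multiplicative.ofAdd b) := by
    have h' : Multiplicative.toAdd (e (Multiplicative.ofAdd a))
        = Multiplicative.toAdd (e (Multiplicative.ofAdd b)) := by
      simpa [AddMonoidHom.toMultiplicative_symm_apply_apply] using hab
    exact Multiplicative.toAdd.injective h'
  exact he this


lemma periods_image_eq_bot {Γ G : Type*} [AddCommGroup Γ] [AddCommGroup G] [Finite Γ]
    (ψ : Γ →+ G) (hψ : Function.Injective ψ) {D : Set Γ} (hD : periods D = ⊥)
    (hDne : D.Nonempty) : periods (ψ '' D) = ⊥ := by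
  rw [eq_bot_iff]
  intro t ht
  obtain ⟨d₀, hd₀⟩ := hDne
  have h1 : t + ψ d₀ ∈ ψ '' D := add_mem_of_periods ht ⟨d₀, hd₀, rfl⟩
  obtain ⟨d₁, hd₁, hd₁e⟩ := h1
  have htψ : t = ψ (d₁ - d₀) := by
    rw [map_sub, hd₁e]; abel
  have hu : (d₁ - d₀) ∈ periods D := by
    apply mem_periods_of_forall
    intro d hd
    have h2 : t + ψ d ∈ ψ '' D := add_mem_of_periods ht ⟨d, hd, rfl⟩
    obtain ⟨d₂, hd₂, hd₂e⟩ := h2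
    have h3 : ψ (d₁ - d₀ + d) = ψ d₂ := by
      rw [map_add, ← htψ]; exact hd₂e.symm
    rw [hψ h3]
    exact hd₂
  rw [hD, AddSubgroup.mem_bot] at hu
  rw [AddSubgroup.mem_bot, htψ, hu, map_zero]
lemma exists_aperiodic_transversal [Finite G]
    (H : AddSubgroup G) {h₀ : G} (h₀H : h₀ ∈ H) (h₀2 : h₀ + h₀ ≠ 0) :
    ∃ T : Set G, IsFactorization (H : Set G) T ∧ periods T = ⊥ := by
  classical
  have h₀0 : h₀ ≠ 0 := by
    intro h; apply h₀2; rw [h, add_zero]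
  haveI : Finite (AddSubgroup G) :=
    Finite.of_injective (fun P : AddSubgroup G => (P : Set G)) SetLike.coe_injective
  obtain ⟨P, hP𝒮, hPmax⟩ :=
    Set.Finite.exists_maximalFor (fun P : AddSubgroup G => (P : Set G).ncard)
      {P : AddSubgroup G | P ⊓ H = ⊥} (Set.toFinite _) ⟨⊥, by simp⟩
  have hPH : P ⊓ H = ⊥ := hP𝒮
  set K := H ⊔ P with hK
  have hHK : H ≤ K := le_sup_left
  have hPK : P ≤ K := le_sup_right
  -- unique H ⊕ P decomposition
  have uniqHP : ∀ {h₁ p₁ h₂ p₂ : G}, h₁ ∈ H → p₁ ∈ P → h₂ ∈ H → p₂ ∈ P →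
      h₁ + p₁ = h₂ + p₂ → h₁ = h₂ ∧ p₁ = p₂ := by
    intro h₁ p₁ h₂ p₂ hh₁ hp₁ hh₂ hp₂ heq
    have hmem : p₁ - p₂ ∈ P ⊓ H := by
      rw [AddSubgroup.mem_inf]
      refine ⟨sub_mem hp₁ hp₂, ?_⟩
      · have : p₁ - p₂ = h₂ - h₁ := by
          rw [sub_eq_sub_iff_add_eq_add, add_comm p₁ h₁]
          exact heq
        rw [this]; exact sub_mem hh₂ hh₁
    rw [hPH, AddSubgroup.mem_bot, sub_eq_zero] at hmem
    refine ⟨?_, hmem⟩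
    have heq' := heq
    rw [hmem] at heq'
    exact add_right_cancel heq'
  -- the transversal of K
  set T₀ : Set G := Set.range (fun q : G ⧸ K => (Quotient.out q : G)) with hT₀
  have out_mk : ∀ o ∈ T₀, (Quotient.out ((o : G ⧸ K)) : G) = o := by
    rintro o ⟨q, rfl⟩
    rw [QuotientAddGroup.out_eq']
  have memK_iff : ∀ x : G, (x : G ⧸ K) = 0 ↔ x ∈ K := fun x => QuotientAddGroup.eq_zero_iff x
  -- periods of T₀ lying in K are trivial
  have pK : ∀ s : G, s ∈ K → (∀ o ∈ T₀, s + o ∈ T₀) → s = 0 := by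
    intro s hsK hsT
    set o₀ : G := Quotient.out ((0 : G ⧸ K)) with ho₀
    have ho₀T : o₀ ∈ T₀ := ⟨0, rfl⟩
    have h1 : s + o₀ ∈ T₀ := hsT o₀ ho₀T
    have h2 : ((s + o₀ : G) : G ⧸ K) = ((o₀ : G) : G ⧸ K) := by
      rw [QuotientAddGroup.mk_add]
      rw [(memK_iff s).mpr hsK, zero_add]
    have h3 := out_mk _ h1
    rw [h2, out_mk _ ho₀T] at h3
    -- h3 : o₀ = s + o₀
    have h4 : s + o₀ = (0 : G) + o₀ := by rw [zero_add]; exact h3.symm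
    exact add_right_cancel h4
  -- T₀ is an aperiodic transversal of K
  have period_T₀_zero : ∀ t ∈ periods T₀, t = 0 := by
    intro t ht
    have htT : ∀ o ∈ T₀, t + o ∈ T₀ := fun o ho => add_mem_of_periods ht ho
    have hP' : (P ⊔ AddSubgroup.zmultiples t) ⊓ H = ⊥ := by
      rw [eq_bot_iff]
      intro x hx
      rw [AddSubgroup.mem_inf] at hx
      obtain ⟨hx1, hx2⟩ := hx
      obtain ⟨p, hp, z, hz, hpz⟩ := AddSubgroup.mem_sup.mp hx1
      obtain ⟨n, rfl⟩ := AddSubgroup.mem_zmultiples_iff.mp hz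
      have hntK : n • t ∈ K := by
        have : n • t = x - p := by rw [← hpz]; abel
        rw [this]
        exact sub_mem (hHK hx2) (hPK hp)
      have hntper : n • t ∈ periods T₀ := AddSubgroup.zsmul_mem _ ht n
      have hnt0 : n • t = 0 :=
        pK _ hntK (fun o ho => add_mem_of_periods hntper ho)
      rw [AddSubgroup.mem_bot]
      rw [← hpz, hnt0, add_zero]
      have : p ∈ P ⊓ H := by
        rw [AddSubgroup.mem_inf]
        refine ⟨hp, ?_⟩
        have : x = p := by rw [← hpz, hnt0, add_zero]
        rw [← this]; exact hx2
      rw [hPH, AddSubgroup.mem_bot] at this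
      exact this
    have hle : P ≤ P ⊔ AddSubgroup.zmultiples t := le_sup_left
    have hcard : ((P : Set G)).ncard ≤ ((P ⊔ AddSubgroup.zmultiples t : AddSubgroup G) : Set G).ncard :=
      Set.ncard_le_ncard hle (Set.toFinite _)
    have heqcard := hPmax hP' hcard
    have hsets : (P : Set G) = ((P ⊔ AddSubgroup.zmultiples t : AddSubgroup G) : Set G) :=
      Set.eq_of_subset_of_ncard_le hle heqcard (Set.toFinite _)
    have htP : t ∈ P := by
      have htsup : t ∈ P ⊔ AddSubgroup.zmultiples t :=
        (le_sup_right : AddSubgroup.zmultiples t ≤ P ⊔ AddSubgroup.zmultiples t)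
          (AddSubgroup.mem_zmultiples t)
      have : t ∈ ((P ⊔ AddSubgroup.zmultiples t : AddSubgroup G) : Set G) := htsup
      rw [← hsets] at this
      exact this
    exact pK t (hPK htP) htT
  -- the twisted transversal of H inside K
  set TP : Set G := insert h₀ ((P : Set G) \ {0}) with hTP
  have mem_TP_iff : ∀ τ : G, τ ∈ TP ↔ τ = h₀ ∨ (τ ∈ P ∧ τ ≠ 0) := by
    intro τ
    simp [hTP, Set.mem_insert_iff, Set.mem_diff, SetLike.mem_coe]
  have h₀TP : h₀ ∈ TP := (mem_TP_iff h₀).mpr (Or.inl rfl)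
  have TPK : ∀ τ ∈ TP, τ ∈ K := by
    intro τ hτ
    rcases (mem_TP_iff τ).mp hτ with h | h
    · rw [h]; exact hHK h₀H
    · exact hPK h.1
  -- decomposition of TP elements
  have decTP : ∀ τ ∈ TP, ∃ a b : G, a ∈ H ∧ b ∈ P ∧ τ = a + b ∧
      (b = 0 → τ = h₀) ∧ (b ≠ 0 → b = τ) := by
    intro τ hτ
    rcases (mem_TP_iff τ).mp hτ with h | h
    · exact ⟨h₀, 0, h₀H, zero_mem P, by rw [h, add_zero], fun _ => h, fun hb => (hb rfl).elim⟩
    · exact ⟨0, τ, zero_mem H, h.1, by rw [zero_add], fun hb => ((h.2) hb).elim, fun _ => rfl⟩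
  -- the core sublemma about TP
  have sub_TP : ∀ δ : G, δ ∈ K → (∀ τ ∈ TP, τ + δ ∈ TP) → δ = 0 := by
    intro δ hδK hδTP
    obtain ⟨hδ, hhδ, pδ, hpδ, hsum⟩ := AddSubgroup.mem_sup.mp hδK
    by_cases hpδ0 : pδ = 0
    · -- δ ∈ H
      have hδH : δ ∈ H := by rw [← hsum, hpδ0, add_zero]; exact hhδ
      rcases (mem_TP_iff _).mp (hδTP h₀ h₀TP) with h | h
      · have : h₀ + δ = h₀ + 0 := by rw [add_zero]; exact h
        exact add_left_cancel this
      · exfalso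
        have hmem : h₀ + δ ∈ P ⊓ H := by
          rw [AddSubgroup.mem_inf]
          exact ⟨h.1, add_mem h₀H hδH⟩
        rw [hPH, AddSubgroup.mem_bot] at hmem
        exact h.2 hmem
    · -- pδ ≠ 0 : derive a contradiction
      exfalso
      have step1 : hδ = -h₀ := by
        rcases (mem_TP_iff _).mp (hδTP h₀ h₀TP) with h | h
        · exfalso
          have hδ0 : δ = 0 := by
            have : h₀ + δ = h₀ + 0 := by rw [add_zero]; exact h
            exact add_left_cancel this
          have hcontra : pδ ∈ P ⊓ H := by
            rw [AddSubgroup.mem_inf]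
            refine ⟨hpδ, ?_⟩
            have hp_eq : pδ = δ - hδ := by rw [← hsum]; abel
            rw [hp_eq, hδ0, zero_sub]
            exact neg_mem hhδ
          rw [hPH, AddSubgroup.mem_bot] at hcontra
          exact hpδ0 hcontra
        · have hmem : h₀ + hδ ∈ P ⊓ H := by
            rw [AddSubgroup.mem_inf]
            constructor
            · have heq2 : h₀ + hδ = (h₀ + δ) - pδ := by rw [← hsum]; abel
              rw [heq2]
              exact sub_mem h.1 hpδ
            · exact add_mem h₀H hhδ
          rw [hPH, AddSubgroup.mem_bot] at hmem
          exact (neg_eq_of_add_eq_zero_right hmem).symm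
      have hnegTP : -pδ ∈ TP :=
        (mem_TP_iff _).mpr (Or.inr ⟨neg_mem hpδ, neg_ne_zero.mpr hpδ0⟩)
      have h2 := hδTP _ hnegTP
      have heq3 : -pδ + δ = hδ := by rw [← hsum]; abel
      rw [heq3] at h2
      rcases (mem_TP_iff _).mp h2 with h | h
      · -- hδ = h₀ together with hδ = -h₀
        apply h₀2
        have hh0eq : h₀ = -h₀ := h.symm.trans step1
        nth_rewrite 2 [hh0eq]
        simp
      · have hmem : hδ ∈ P ⊓ H := by
          rw [AddSubgroup.mem_inf]
          exact ⟨h.1, hhδ⟩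
        rw [hPH, AddSubgroup.mem_bot] at hmem
        exact h.2 hmem
  -- the transversal of H
  refine ⟨TP + T₀, ?_, ?_⟩
  · -- IsFactorization ↑H (TP + T₀)
    have uniqT : ∀ {x₁ y₁ x₂ y₂ : G}, x₁ ∈ H → y₁ ∈ TP + T₀ → x₂ ∈ H → y₂ ∈ TP + T₀ →
        x₁ + y₁ = x₂ + y₂ → x₁ = x₂ ∧ y₁ = y₂ := by
      intro x₁ y₁ x₂ y₂ hx₁ hy₁ hx₂ hy₂ heq
      obtain ⟨τ₁, hτ₁, o₁, ho₁, hy₁'⟩ := Set.mem_add.mp hy₁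
      obtain ⟨τ₂, hτ₂, o₂, ho₂, hy₂'⟩ := Set.mem_add.mp hy₂
      have e1 : x₁ + (τ₁ + o₁) = x₂ + (τ₂ + o₂) := by rw [hy₁', hy₂']; exact heq
      have hmkeq : ((o₁ : G) : G ⧸ K) = ((o₂ : G) : G ⧸ K) := by
        have h6 := congrArg (fun z : G => ((z : G ⧸ K))) e1
        simpa [QuotientAddGroup.mk_add, (memK_iff _).mpr (hHK hx₁),
          (memK_iff _).mpr (hHK hx₂), (memK_iff _).mpr (TPK _ hτ₁),
          (memK_iff _).mpr (TPK _ hτ₂)] using h6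
      have ho₁₂ : o₁ = o₂ := by
        have h7 := out_mk _ ho₁
        rw [hmkeq, out_mk _ ho₂] at h7
        exact h7.symm
      have e2 : (x₁ + τ₁) + o₁ = (x₂ + τ₂) + o₁ := by
        rw [← add_assoc, ← add_assoc] at e1
        rw [e1, ho₁₂]
      have e3 : x₁ + τ₁ = x₂ + τ₂ := add_right_cancel e2
      obtain ⟨a₁, b₁, ha₁, hb₁, hab₁, hz₁, hnz₁⟩ := decTP _ hτ₁
      obtain ⟨a₂, b₂, ha₂, hb₂, hab₂, hz₂, hnz₂⟩ := decTP _ hτ₂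
      have e4 : (x₁ + a₁) + b₁ = (x₂ + a₂) + b₂ := by
        rw [hab₁, hab₂] at e3
        rw [add_assoc, add_assoc]
        exact e3
      obtain ⟨e5, e6⟩ := uniqHP (add_mem hx₁ ha₁) hb₁ (add_mem hx₂ ha₂) hb₂ e4
      have hττ : τ₁ = τ₂ := by
        by_cases hb : b₁ = 0
        · rw [hz₁ hb, hz₂ (by rw [← e6]; exact hb)]
        · rw [← hnz₁ hb, ← hnz₂ (by rw [← e6]; exact hb)]
          exact e6
      have hxx : x₁ = x₂ := by
        rw [hττ] at e3
        exact add_right_cancel e3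
      refine ⟨hxx, ?_⟩
      rw [← hy₁', ← hy₂', hττ, ho₁₂]
    intro g
    set o : G := Quotient.out ((g : G ⧸ K)) with ho
    have hoT₀ : o ∈ T₀ := ⟨_, rfl⟩
    have hgoK : g - o ∈ K := by
      rw [← memK_iff]
      rw [QuotientAddGroup.mk_sub, ho, QuotientAddGroup.out_eq', sub_self]
    clear_value o
    obtain ⟨h1, hh1, p1, hp1, hsum⟩ := AddSubgroup.mem_sup.mp hgoK
    by_cases hp10 : p1 = 0
    · rw [hp10, add_zero] at hsum
      refine ⟨(h1 - h₀, h₀ + o), ⟨sub_mem hh1 h₀H, Set.add_mem_add h₀TP hoT₀, ?_⟩, ?_⟩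
      · show (h1 - h₀) + (h₀ + o) = g
        rw [hsum]; abel
      · rintro ⟨x, y⟩ ⟨hx, hy, hxy⟩
        have h8 : (h1 - h₀ : G) + (h₀ + o) = g := by rw [hsum]; abel
        obtain ⟨u1, u2⟩ := uniqT (by exact hx) hy (sub_mem hh1 h₀H)
          (Set.add_mem_add h₀TP hoT₀) (hxy.trans h8.symm)
        exact Prod.ext u1 u2
    · refine ⟨(h1, p1 + o), ⟨hh1, Set.add_mem_add ((mem_TP_iff _).mpr (Or.inr ⟨hp1, hp10⟩)) hoT₀, ?_⟩, ?_⟩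
      · show h1 + (p1 + o) = g
        rw [← add_assoc, hsum]; abel
      · rintro ⟨x, y⟩ ⟨hx, hy, hxy⟩
        have h8 : (h1 : G) + (p1 + o) = g := by rw [← add_assoc, hsum]; abel
        obtain ⟨u1, u2⟩ := uniqT (by exact hx) hy hh1
          (Set.add_mem_add ((mem_TP_iff _).mpr (Or.inr ⟨hp1, hp10⟩)) hoT₀) (hxy.trans h8.symm)
        exact Prod.ext u1 u2
  · -- periods (TP + T₀) = ⊥
    rw [eq_bot_iff]
    intro t ht
    have hT : ∀ x ∈ TP + T₀, t + x ∈ TP + T₀ := fun x hx => add_mem_of_periods ht hx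
    have key : ∀ o ∈ T₀, t + o ∈ T₀ := by
      intro o hoT₀
      set F : G := Quotient.out (((t + o : G)) : G ⧸ K) with hF
      have hFT₀ : F ∈ T₀ := ⟨_, rfl⟩
      have hmkF : ((F : G) : G ⧸ K) = ((t + o : G) : G ⧸ K) := by
        rw [hF]; exact QuotientAddGroup.out_eq' _
      clear_value F
      have hδK : t + o - F ∈ K := by
        rw [← memK_iff, QuotientAddGroup.mk_sub, hmkF, sub_self]
      have hδTP : ∀ τ ∈ TP, τ + (t + o - F) ∈ TP := by
        intro τ hτ
        have hx : τ + o ∈ TP + T₀ := Set.add_mem_add hτ hoT₀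
        obtain ⟨τ', hτ', o', ho', hrep⟩ := Set.mem_add.mp (hT _ hx)
        have hmk : ((o' : G) : G ⧸ K) = ((t + o : G) : G ⧸ K) := by
          have h6 := congrArg (fun z : G => ((z : G ⧸ K))) hrep
          simp only [QuotientAddGroup.mk_add] at h6
          rw [(memK_iff _).mpr (TPK _ hτ'), (memK_iff _).mpr (TPK _ hτ), zero_add] at h6
          rw [h6, QuotientAddGroup.mk_add, zero_add]
        have ho'F : o' = F := by
          have h7 := out_mk _ ho'
          rw [hmk, ← hF] at h7
          exact h7.symm
        have hτ'eq : τ' = τ + (t + o - F) := by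
          have h9 : τ' + o' = t + (τ + o) := hrep
          rw [ho'F] at h9
          have h10 : τ' = t + (τ + o) - F := eq_sub_of_add_eq h9
          rw [h10]; abel
        rw [← hτ'eq]; exact hτ'
      have hδ0 := sub_TP _ hδK hδTP
      have h11 : t + o = F := by rwa [sub_eq_zero] at hδ0
      rw [h11]; exact hFT₀
    exact (AddSubgroup.mem_bot).mpr (period_T₀_zero t (mem_periods_of_forall key))


end PCodeAux

/-- If `G` is a Hajós group, `Cay(G,S)` is a connected non-complete Cayley graph
of `G`, `C` is a perfect code in it, and `|S₀|` is a prime, then `S₀` is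
aperiodic and `C = g + L_C` for some `g ∈ G`; in particular `C` is a coset of a
subgroup of `G`. -/
theorem code_is_coset_of_prime_deg {G : Type*} [AddCommGroup G] [Fintype G]
    (hG : IsHajos G) (S C : Set G)
    (hconn : AddSubgroup.closure S = ⊤)
    (hncomp : S ⊂ {(0 : G)}ᶜ)
    (hC : IsPerfectCode S C)
    (hp : ((insert (0 : G) S).ncard).Prime) :
    ¬ IsPeriodic (insert (0 : G) S) ∧
      ∃ g : G, C = (fun x => g + x) '' (periods C : Set G) := by
  classical
  have hfact : IsFactorization (insert (0 : G) S) C := hC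
  set S₀ : Set G := insert 0 S with hS₀
  have hS₀0 : (0 : G) ∈ S₀ := Set.mem_insert _ _
  have hS₀gen : AddSubgroup.closure S₀ = ⊤ := by
    apply top_unique
    rw [← hconn]
    exact AddSubgroup.closure_mono (Set.subset_insert _ _)
  -- Part 1 : S₀ is aperiodic
  have key1 : ¬ IsPeriodic S₀ := by
    intro hper
    have huniv : S₀ = Set.univ := PCodeAux.eq_univ_of_periodic S₀ hS₀0 hp hS₀gen hper
    have hSeq : S = {(0 : G)}ᶜ := by
      apply Set.Subset.antisymm hncomp.subset
      intro x hx
      have hxS₀ : x ∈ S₀ := huniv ▸ Set.mem_univ x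
      rcases hxS₀ with h | h
      · exact absurd h (by simpa using hx)
      · exact h
    rw [hSeq] at hncomp
    exact (ssubset_irrefl _) hncomp
  refine ⟨key1, ?_⟩
  -- Part 2 : C is a coset of its period group
  set L := periods C with hL
  set π : G →+ G ⧸ L := QuotientAddGroup.mk' L with hπ
  have hπsurj : Function.Surjective π := QuotientAddGroup.mk'_surjective L
  obtain ⟨a0, -, c₀, hc₀C, -⟩ := PCodeAux.fact_cover hfact 0
  have hπeq : ∀ x y : G, π x = π y ↔ x - y ∈ L := by
    intro x y
    constructor
    · intro h
      have h' : -x + y ∈ L := QuotientAddGroup.eq.mp h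
      have he : x - y = -(-x + y) := by abel
      rw [he]; exact neg_mem h'
    · intro h
      apply QuotientAddGroup.eq.mpr
      have he : -x + y = -(x - y) := by abel
      rw [he]; exact neg_mem h
  have hsubL : ∀ x c : G, c ∈ C → π x = π c → x ∈ C := by
    intro x c hcC hxc
    have hl : x - c ∈ L := (hπeq x c).mp hxc
    have hx : x = (x - c) + c := by abel
    rw [hx]
    exact PCodeAux.add_mem_of_periods hl hcC
  have hinj : Set.InjOn π S₀ := by
    intro s₁ hs₁ s₂ hs₂ he
    have hl : s₁ - s₂ ∈ L := (hπeq s₁ s₂).mp he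
    have hmem : (s₁ - s₂) + c₀ ∈ C := PCodeAux.add_mem_of_periods hl hc₀C
    have hsum : s₂ + ((s₁ - s₂) + c₀) = s₁ + c₀ := by abel
    exact (PCodeAux.fact_unique hfact hs₁ hc₀C hs₂ hmem hsum.symm).1
  -- the quotient factorization
  have factQ : IsFactorization (π '' S₀) (π '' C) := by
    intro g₁
    obtain ⟨g, rfl⟩ := hπsurj g₁
    obtain ⟨s, hs, c, hcC, hsc⟩ := PCodeAux.fact_cover hfact g
    refine ⟨(π s, π c), ⟨⟨s, hs, rfl⟩, ⟨c, hcC, rfl⟩, by rw [← map_add, hsc]⟩, ?_⟩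
    rintro ⟨x, y⟩ ⟨⟨s', hs', rfl⟩, ⟨c', hc', rfl⟩, hxy⟩
    have hl : (s' + c') - g ∈ L := by
      apply (hπeq _ _).mp
      rw [map_add]
      exact hxy
    have hl' : g - (s' + c') ∈ L := by
      have he : g - (s' + c') = -((s' + c') - g) := by abel
      rw [he]; exact neg_mem hl
    have hcc : (g - (s' + c')) + c' ∈ C := PCodeAux.add_mem_of_periods hl' hc'
    have hgdec : s' + ((g - (s' + c')) + c') = g := by abel
    obtain ⟨e1, e2⟩ := PCodeAux.fact_unique hfact hs' hcc hs hcC (by rw [hgdec, hsc])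
    have hy : π c' = π c := by
      rw [← e2, map_add]
      have hz : π (g - (s' + c')) = 0 := (QuotientAddGroup.eq_zero_iff _).mpr hl'
      rw [hz, zero_add]
    rw [Prod.ext_iff]
    exact ⟨by simp [e1], by simpa using hy⟩
  have hCb_ne : (π '' C).Nonempty := ⟨π c₀, c₀, hc₀C, rfl⟩
  have hSb0 : (0 : G ⧸ L) ∈ π '' S₀ := ⟨0, hS₀0, map_zero π⟩
  have hSbcard : (π '' S₀).ncard = S₀.ncard := Set.ncard_image_of_injOn hinj
  have hCb_aper : periods (π '' C) = ⊥ := by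
    rw [eq_bot_iff]
    intro t₁ ht₁
    obtain ⟨t, rfl⟩ := hπsurj t₁
    have htL : t ∈ L := by
      rw [hL]
      apply PCodeAux.mem_periods_of_forall
      intro c hcC
      have himg : π t + π c ∈ π '' C := PCodeAux.add_mem_of_periods ht₁ ⟨c, hcC, rfl⟩
      obtain ⟨c', hc', he⟩ := himg
      exact hsubL (t + c) c' hc' (by rw [map_add]; exact he.symm)
    rw [AddSubgroup.mem_bot]
    exact (QuotientAddGroup.eq_zero_iff t).mpr htL
  by_cases hSbper : IsPeriodic (π '' S₀)
  · -- the winning branch : π '' S₀ is all of the quotient, C is a single coset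
    have hSbgen : AddSubgroup.closure (π '' S₀) = ⊤ := by
      rw [← AddMonoidHom.map_closure, hS₀gen]
      exact AddSubgroup.map_top_of_surjective π hπsurj
    have hSbprime : ((π '' S₀).ncard).Prime := by rw [hSbcard]; exact hp
    have huniv := PCodeAux.eq_univ_of_periodic _ hSb0 hSbprime hSbgen hSbper
    have hsingle : ∀ y ∈ π '' C, y = π c₀ := by
      intro y hy
      have h1 : -y ∈ π '' S₀ := by rw [huniv]; trivial
      have h2 : -(π c₀) ∈ π '' S₀ := by rw [huniv]; trivial
      have h3 : -y + y = -(π c₀) + π c₀ := by abel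
      exact ((PCodeAux.fact_unique factQ h1 hy h2 ⟨c₀, hc₀C, rfl⟩ h3).2)
    refine ⟨c₀, ?_⟩
    ext x
    constructor
    · intro hxC
      have hx : π x = π c₀ := hsingle _ ⟨x, hxC, rfl⟩
      have hxl : x - c₀ ∈ L := (hπeq x c₀).mp hx
      refine ⟨x - c₀, hxl, ?_⟩
      show c₀ + (x - c₀) = x
      abel
    · rintro ⟨l, hl, rfl⟩
      show c₀ + l ∈ C
      have : l + c₀ ∈ C := PCodeAux.add_mem_of_periods hl hc₀C
      rwa [add_comm] at this
  · -- the impossible branch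
    exfalso
    have hSbbot : periods (π '' S₀) = ⊥ := not_ne_iff.mp hSbper
    haveI : Finite (G ⧸ L) := Quotient.finite _
    have hcardQ : Nat.card (G ⧸ L) = S₀.ncard * (π '' C).ncard := by
      have h := PCodeAux.fact_card factQ
      rw [hSbcard] at h
      exact h
    -- there is an element of the quotient that is not 2-torsion
    have hexp : ∃ x : G ⧸ L, x + x ≠ 0 := by
      by_contra hall
      push_neg at hall
      have hp2 : S₀.ncard = 2 := by
        by_contra hne2
        haveI : Fact (Nat.Prime S₀.ncard) := ⟨hp⟩
        haveI : Fintype (G ⧸ L) := Fintype.ofFinite _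
        have hdvd : S₀.ncard ∣ Fintype.card (G ⧸ L) := by
          rw [← Nat.card_eq_fintype_card, hcardQ]
          exact Dvd.intro _ rfl
        obtain ⟨x, hx⟩ := exists_prime_addOrderOf_dvd_card (S₀.ncard) hdvd
        have h2 : addOrderOf x ∣ 2 := by
          apply addOrderOf_dvd_of_nsmul_eq_zero
          rw [two_nsmul]
          exact hall x
        rw [hx] at h2
        exact hne2 ((Nat.prime_dvd_prime_iff_eq hp Nat.prime_two).mp h2)
      have hSb2 : (π '' S₀).ncard = 2 := by rw [hSbcard, hp2]
      obtain ⟨sb, hsbSb, hsb0⟩ :=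
        Set.exists_ne_of_one_lt_ncard (by rw [hSb2]; norm_num) (0 : G ⧸ L)
      have hpair : ({0, sb} : Set (G ⧸ L)) ⊆ π '' S₀ := by
        rintro x (rfl | rfl)
        · exact hSb0
        · exact hsbSb
      have hpaireq : ({0, sb} : Set (G ⧸ L)) = π '' S₀ :=
        Set.eq_of_subset_of_ncard_le hpair
          (by rw [hSb2, Set.ncard_pair (Ne.symm hsb0)]) (Set.toFinite _)
      have hsper : sb ∈ periods (π '' S₀) := by
        apply PCodeAux.mem_periods_of_forall
        intro a haSb
        rw [← hpaireq] at haSb ⊢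
        simp only [Set.mem_insert_iff, Set.mem_singleton_iff] at haSb ⊢
        rcases haSb with h | h
        · right; rw [h, add_zero]
        · left; rw [h]; exact hall sb
      rw [hSbbot, AddSubgroup.mem_bot] at hsper
      exact hsb0 hsper
    obtain ⟨x₀, hx₀⟩ := hexp
    obtain ⟨ψ, hψ⟩ := PCodeAux.exists_injective_quotient_hom L
    set A' : Set G := ψ '' (π '' S₀) with hA'
    set B' : Set G := ψ '' (π '' C) with hB'
    set HH : AddSubgroup G := ψ.range with hHH
    have hA'H : A' ⊆ (HH : Set G) := by
      rintro _ ⟨q, -, rfl⟩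
      exact ⟨q, rfl⟩
    have hB'H : B' ⊆ (HH : Set G) := by
      rintro _ ⟨q, -, rfl⟩
      exact ⟨q, rfl⟩
    have h₀mem : ψ x₀ ∈ HH := ⟨x₀, rfl⟩
    have h₀2 : ψ x₀ + ψ x₀ ≠ 0 := by
      rw [← map_add]
      intro h
      exact hx₀ (hψ (by rw [h, map_zero]))
    obtain ⟨T, factT, aperT⟩ := PCodeAux.exists_aperiodic_transversal HH h₀mem h₀2
    -- the factorization of the subgroup HH transported from the quotient
    have factH : ∀ h ∈ HH, ∃! ab : G × G, ab.1 ∈ A' ∧ ab.2 ∈ B' ∧ ab.1 + ab.2 = h := by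
      rintro h ⟨q, rfl⟩
      obtain ⟨⟨x, y⟩, ⟨hx, hy, hxy⟩, huniq⟩ := factQ q
      refine ⟨(ψ x, ψ y), ⟨⟨x, hx, rfl⟩, ⟨y, hy, rfl⟩, by rw [← map_add, hxy]⟩, ?_⟩
      rintro ⟨u, v⟩ ⟨⟨x', hx', rfl⟩, ⟨y', hy', rfl⟩, huv⟩
      have he : (x', y') = (x, y) :=
        huniq (x', y') ⟨hx', hy', hψ (by rw [map_add]; exact huv)⟩
      have he1 : x' = x := congrArg Prod.fst he
      have he2 : y' = y := congrArg Prod.snd he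
      rw [Prod.ext_iff]
      exact ⟨by rw [he1], by rw [he2]⟩
    -- the big factorization of G
    have factX : IsFactorization (A' + T) B' := by
      intro g
      obtain ⟨⟨h, t⟩, ⟨hh, ht, hht⟩, huniqT⟩ := factT g
      obtain ⟨⟨a, b⟩, ⟨ha, hb, hab⟩, huniqH⟩ := factH h hh
      refine ⟨(a + t, b), ⟨Set.add_mem_add ha ht, hb, ?_⟩, ?_⟩
      · show (a + t) + b = g
        have he : (a + t) + b = (a + b) + t := by abel
        rw [he, hab]
        exact hht
      · rintro ⟨u, v⟩ ⟨hu, hv, huv⟩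
        have huA : u ∈ A' + T := hu
        have hvB : v ∈ B' := hv
        have huvg : u + v = g := huv
        obtain ⟨a', ha', t', ht', hu'⟩ := Set.mem_add.mp huA
        have hav : a' + v ∈ (HH : Set G) := by
          have h1 : a' ∈ HH := hA'H ha'
          have h2 : v ∈ HH := hB'H hvB
          exact AddSubgroup.add_mem _ h1 h2
        have hsum2 : (a' + v) + t' = g := by
          have he : (a' + v) + t' = (a' + t') + v := by abel
          rw [he, hu']
          exact huvg
        have eT : (a' + v, t') = (h, t) := huniqT (a' + v, t') ⟨hav, ht', hsum2⟩
        have eT1 : a' + v = h := congrArg Prod.fst eT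
        have eT2 : t' = t := congrArg Prod.snd eT
        have eH : (a', v) = (a, b) := huniqH (a', v) ⟨ha', hvB, eT1⟩
        have eH1 : a' = a := congrArg Prod.fst eH
        have eH2 : v = b := congrArg Prod.snd eH
        rw [Prod.ext_iff]
        constructor
        · show u = a + t
          rw [← hu', eH1, eT2]
        · exact eH2
    -- Hajós gives a periodic factor, both cases are impossible
    have hA'aper : periods A' = ⊥ :=
      PCodeAux.periods_image_eq_bot ψ hψ hSbbot ⟨0, hSb0⟩
    have hB'aper : periods B' = ⊥ :=
      PCodeAux.periods_image_eq_bot ψ hψ hCb_aper hCb_ne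
    rcases hG _ _ factX with hXper | hB'per
    · -- A' + T would be periodic
      have hex : ∃ t, t ∈ periods (A' + T) ∧ t ≠ 0 := by
        by_contra hno
        push_neg at hno
        apply hXper
        rw [eq_bot_iff]
        intro x hx
        rw [AddSubgroup.mem_bot]
        exact hno x hx
      obtain ⟨t, htper, ht0⟩ := hex
      have hstep : ∀ τ ∈ T, t + τ ∈ T := by
        intro τ hτ
        obtain ⟨⟨hτt, oτ⟩, ⟨hhτ, hoτ, hsumτ⟩, huniqτ⟩ := factT (τ + t)
        have hhτ' : hτt ∈ (HH : Set G) := hhτ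
        have hoτ' : oτ ∈ T := hoτ
        have hsumτ' : hτt + oτ = τ + t := hsumτ
        have hδ : ∀ a ∈ A', a + hτt ∈ A' := by
          intro a ha
          have hx1 : a + τ ∈ A' + T := Set.add_mem_add ha hτ
          have hx2 : t + (a + τ) ∈ A' + T := PCodeAux.add_mem_of_periods htper hx1
          obtain ⟨a2, ha2, t2, ht2, hrep⟩ := Set.mem_add.mp hx2
          obtain ⟨⟨hg, tg⟩, ⟨hhg, htg, hsumg⟩, huniqg⟩ := factT (t + (a + τ))
          have d1 : (a2, t2) = (hg, tg) := huniqg (a2, t2) ⟨hA'H ha2, ht2, hrep⟩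
          have d2 : (a + hτt, oτ) = (hg, tg) := by
            apply huniqg
            refine ⟨?_, hoτ', ?_⟩
            · have h1 : a ∈ HH := hA'H ha
              have h2 : hτt ∈ HH := hhτ'
              exact AddSubgroup.add_mem _ h1 h2
            · have he : (a + hτt) + oτ = a + (hτt + oτ) := by abel
              show (a + hτt) + oτ = t + (a + τ)
              rw [he, hsumτ']
              abel
          have d3 : a2 = a + hτt := congrArg Prod.fst (d1.trans d2.symm)
          rw [← d3]
          exact ha2
        have hδper : hτt ∈ periods A' := by
          apply PCodeAux.mem_periods_of_forall
          intro a ha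
          rw [add_comm]
          exact hδ a ha
        rw [hA'aper, AddSubgroup.mem_bot] at hδper
        have hτeq : τ + t = oτ := by
          rw [← hsumτ', hδper, zero_add]
        rw [add_comm]
        rw [hτeq]
        exact hoτ'
      have : t ∈ periods T := PCodeAux.mem_periods_of_forall hstep
      rw [aperT, AddSubgroup.mem_bot] at this
      exact ht0 this
    · rw [IsPeriodic, hB'aper] at hB'per
      exact hB'per rfl
end

section
/- Let p be an odd prime, let G = Z_p × Z_p, let S be a proper subset of G∖{0} that generates G, and let S₀ = S ∪ {(0,0)}. Then a subset C of G is a perfect code in Cay(G,S) if and only if |S| = p − 1 and there exist a, b ∈ Z_p such that {a·s₁ − b·s₂ : (s₁,s₂) ∈ S₀} = Z_p and C = {(b·n + c, a·n + d) : n ∈ Z_p} for some c, d ∈ Z_p. -/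
open Pointwise

open Polynomial Finset

namespace PCode

variable {p : ℕ} [Fact p.Prime]

abbrev GG (p : ℕ) := ZMod p × ZMod p


def phi (a b : ZMod p) : GG p →+ ZMod p :=
  AddMonoidHom.mk' (fun v => a * v.1 - b * v.2) (by intro x y; simp; ring)

lemma phi_apply (a b : ZMod p) (v : GG p) : phi a b v = a * v.1 - b * v.2 := rfl

lemma phi_surj {a b : ZMod p} (h : ¬(a = 0 ∧ b = 0)) : Function.Surjective (phi a b) := by
  intro w
  rcases eq_or_ne a 0 with ha | ha
  · have hb : b ≠ 0 := by tauto
    exact ⟨(0, -(b⁻¹ * w)), by simp [phi_apply, ha]; field_simp⟩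
  · exact ⟨(a⁻¹ * w, 0), by simp [phi_apply]; field_simp⟩

lemma mem_line_iff {a b : ZMod p} (h : ¬(a = 0 ∧ b = 0)) (z : GG p) :
    (∃ n, ((b * n, a * n) : GG p) = z) ↔ phi a b z = 0 := by
  constructor
  · rintro ⟨n, rfl⟩; simp [phi_apply]; ring
  · intro hz
    rcases eq_or_ne a 0 with ha | ha
    · have hb : b ≠ 0 := by tauto
      have hz2 : z.2 = 0 := by
        have := hz; rw [phi_apply, ha] at this; simp at this
        rcases this with h1 | h2
        · exact absurd h1 hb
        · exact h2
      refine ⟨b⁻¹ * z.1, ?_⟩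
      have : b * (b⁻¹ * z.1) = z.1 := by field_simp
      rw [this, ha, zero_mul, hz2.symm]
    · refine ⟨a⁻¹ * z.2, ?_⟩
      have h2 : a * (a⁻¹ * z.2) = z.2 := by field_simp
      have h1 : b * (a⁻¹ * z.2) = z.1 := by
        rw [phi_apply, sub_eq_zero] at hz
        field_simp
        rw [← hz]
      rw [h1, h2]



-- the equivalence coming from a factorization
noncomputable def facEquiv {A B : Set (GG p)} (hF : IsFactorization A B) :
    (A × B) ≃ GG p := by
  refine Equiv.ofBijective (fun x => x.1.1 + x.2.1) ⟨?_, ?_⟩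
  · rintro ⟨⟨a₁, ha₁⟩, ⟨b₁, hb₁⟩⟩ ⟨⟨a₂, ha₂⟩, ⟨b₂, hb₂⟩⟩ h
    simp only at h
    have := (hF (a₁ + b₁)).unique (y₁ := (a₁, b₁)) (y₂ := (a₂, b₂))
      ⟨ha₁, hb₁, rfl⟩ ⟨ha₂, hb₂, h.symm⟩
    simp only [Prod.mk.injEq] at this
    simp [Prod.ext_iff, this.1, this.2]
  · intro g
    obtain ⟨⟨a, b⟩, ⟨ha, hb, hab⟩, -⟩ := hF g
    exact ⟨⟨⟨a, ha⟩, ⟨b, hb⟩⟩, hab⟩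

lemma factorization_ncard_mul {A B : Set (GG p)} (hF : IsFactorization A B) :
    A.ncard * B.ncard = p * p := by
  have := Nat.card_congr (facEquiv hF)
  rwa [Nat.card_prod, Nat.card_coe_set_eq, Nat.card_coe_set_eq,
    Nat.card_prod, Nat.card_zmod] at this



/-- fiber counting function -/
noncomputable def mf (A : Set (GG p)) (φ : GG p →+ ZMod p) (k : ZMod p) : ℕ :=
  ((Set.toFinite A).toFinset.filter fun s => φ s = k).card

lemma mf_sum (A : Set (GG p)) (φ : GG p →+ ZMod p) :
    ∑ k : ZMod p, mf A φ k = A.ncard := by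
  rw [Set.ncard_eq_toFinset_card _ (Set.toFinite A)]
  exact (Finset.card_eq_sum_card_fiberwise (f := fun s => φ s)
    (fun x _ => Finset.mem_univ _)).symm

lemma card_fiber (φ : GG p →+ ZMod p) (hφ : Function.Surjective φ) (s : ZMod p) :
    (Finset.univ.filter (fun g : GG p => φ g = s)).card = p := by
  classical
  have key : ∀ s t : ZMod p,
      (Finset.univ.filter (fun g : GG p => φ g = s)).card
        = (Finset.univ.filter (fun g : GG p => φ g = t)).card := by
    intro s t
    obtain ⟨u, hu⟩ := hφ (t - s)
    apply Finset.card_bij (fun g _ => g + u)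
    · intro g hg
      simp only [Finset.mem_filter, Finset.mem_univ, true_and] at hg ⊢
      rw [map_add, hg, hu]; abel
    · intro g₁ h₁ g₂ h₂ h
      simpa using h
    · intro g hg
      simp only [Finset.mem_filter, Finset.mem_univ, true_and] at hg
      refine ⟨g - u, ?_, by abel⟩
      simp only [Finset.mem_filter, Finset.mem_univ, true_and, map_sub, hg, hu]
      abel
  have htot : ∑ t : ZMod p, (Finset.univ.filter (fun g : GG p => φ g = t)).card
      = p * p := by
    rw [← Finset.card_eq_sum_card_fiberwise (f := fun g => φ g) (fun x _ => Finset.mem_univ _)]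
    simp [Fintype.card_prod, ZMod.card]
  have hconst : ∑ t : ZMod p, (Finset.univ.filter (fun g : GG p => φ g = t)).card
      = p * (Finset.univ.filter (fun g : GG p => φ g = s)).card := by
    rw [Finset.sum_congr rfl (fun t _ => key t s)]
    simp [Finset.sum_const, ZMod.card, mul_comm]
  have hp0 : p ≠ 0 := (Fact.out : p.Prime).ne_zero
  have := hconst.symm.trans htot
  exact Nat.eq_of_mul_eq_mul_left (Nat.pos_of_ne_zero hp0) this

lemma conv_identity {A B : Set (GG p)} (hF : IsFactorization A B)
    (φ : GG p →+ ZMod p) (hφ : Function.Surjective φ) (s : ZMod p) :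
    ∑ k : ZMod p, mf A φ k * mf B φ (s - k) = p := by
  classical
  set Af := (Set.toFinite A).toFinset with hAf
  set Bf := (Set.toFinite B).toFinset with hBf
  set T := (Af ×ˢ Bf).filter (fun ab : GG p × GG p => φ (ab.1 + ab.2) = s) with hT
  have hTcard : T.card = p := by
    refine Eq.trans ?_ (card_fiber φ hφ s)
    apply Finset.card_bij (fun ab _ => ab.1 + ab.2)
    · rintro ⟨x, y⟩ hxy
      simp only [hT, Finset.mem_filter] at hxy
      simp [hxy.2]
    · rintro ⟨x₁, y₁⟩ h₁ ⟨x₂, y₂⟩ h₂ h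
      simp only [hT, hAf, hBf, Finset.mem_filter, Finset.mem_product, Set.Finite.mem_toFinset] at h₁ h₂
      have := (hF (x₁ + y₁)).unique (y₁ := (x₁, y₁)) (y₂ := (x₂, y₂))
        ⟨h₁.1.1, h₁.1.2, rfl⟩ ⟨h₂.1.1, h₂.1.2, h.symm⟩
      exact this
    · intro g hg
      simp only [Finset.mem_filter, Finset.mem_univ, true_and] at hg
      obtain ⟨⟨x, y⟩, ⟨hx, hy, hxy⟩, -⟩ := hF g
      refine ⟨(x, y), ?_, hxy⟩
      simp only [hT, hAf, hBf, Finset.mem_filter, Finset.mem_product, Set.Finite.mem_toFinset]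
      exact ⟨⟨hx, hy⟩, by rw [hxy, hg]⟩
  have hpart : T.card = ∑ k : ZMod p, (T.filter (fun ab => φ ab.1 = k)).card :=
    Finset.card_eq_sum_card_fiberwise (fun x _ => Finset.mem_univ _)
  have hprod : ∀ k : ZMod p, T.filter (fun ab => φ ab.1 = k)
      = (Af.filter fun x => φ x = k) ×ˢ (Bf.filter fun y => φ y = s - k) := by
    intro k
    ext ⟨x, y⟩
    simp only [hT, Finset.mem_filter, Finset.mem_product, map_add]
    constructor
    · rintro ⟨⟨⟨hx, hy⟩, hsum⟩, hk⟩
      refine ⟨⟨hx, hk⟩, hy, ?_⟩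
      rw [← hsum, hk]; ring
    · rintro ⟨⟨hx, hk⟩, hy, hyk⟩
      exact ⟨⟨⟨hx, hy⟩, by rw [hk, hyk]; ring⟩, hk⟩
  rw [hpart] at hTcard
  refine Eq.trans ?_ hTcard
  apply Finset.sum_congr rfl
  intro k _
  rw [hprod k, Finset.card_product]
  rfl



lemma exp_dvd_aux {u v : ℕ} (hle : v ≤ u) (h : u % p = v % p) :
    (X : ℤ[X]) ^ p - 1 ∣ X ^ u - X ^ v := by
  obtain ⟨m, hm⟩ := (Nat.modEq_iff_dvd' hle).mp (h.symm : Nat.ModEq p v u)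
  have hu : u = v + p * m := by omega
  have key : (X : ℤ[X]) ^ u - X ^ v = X ^ v * ((X ^ p) ^ m - 1 ^ m) := by
    rw [mul_sub, one_pow, mul_one, ← pow_mul, ← pow_add, ← hu]
  rw [key]
  exact Dvd.dvd.mul_left (sub_dvd_pow_sub_pow _ _ _) _

lemma exp_dvd {u v : ℕ} (h : u % p = v % p) :
    (X : ℤ[X]) ^ p - 1 ∣ X ^ u - X ^ v := by
  rcases le_total v u with hle | hle
  · exact exp_dvd_aux hle h
  · have := exp_dvd_aux hle h.symm
    rw [show (X:ℤ[X]) ^ u - X ^ v = -(X ^ v - X ^ u) by ring]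
    exact this.neg_right

lemma unif (f : ZMod p → ℕ) (hsum : ∑ k : ZMod p, f k = p)
    (hdvd : cyclotomic p ℤ ∣ ∑ k : ZMod p, (C (f k : ℤ)) * X ^ (k.val)) :
    ∀ k, f k = 1 := by
  haveI : NeZero p := ⟨(Fact.out : p.Prime).ne_zero⟩
  have hp2 : 2 ≤ p := (Fact.out : p.Prime).two_le
  set P := ∑ k : ZMod p, (C (f k : ℤ)) * X ^ (k.val) with hP
  have hcoeff : ∀ i : ℕ, i < p → P.coeff i = (f ((i : ℕ) : ZMod p) : ℤ) := by
    intro i hi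
    rw [hP, finset_sum_coeff]
    rw [Finset.sum_eq_single (((i : ℕ) : ZMod p))]
    · rw [coeff_C_mul, coeff_X_pow, ZMod.val_cast_of_lt hi, if_pos rfl, mul_one]
    · intro k _ hk
      rw [coeff_C_mul, coeff_X_pow, if_neg, mul_zero]
      intro he
      apply hk
      rw [he, ZMod.natCast_val, ZMod.cast_id]
    · intro h; exact absurd (Finset.mem_univ _) h
  have hdeg : P.natDegree ≤ p - 1 := by
    apply Polynomial.natDegree_sum_le_of_forall_le
    intro k _
    refine le_trans (natDegree_C_mul_le _ _) ?_
    rw [natDegree_X_pow]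
    exact Nat.le_sub_one_of_lt (ZMod.val_lt k)
  obtain ⟨q, hq⟩ := hdvd
  by_cases hP0 : P = 0
  · exfalso
    have hf0 : ∀ k : ZMod p, f k = 0 := by
      intro k
      have h1 := hcoeff k.val (ZMod.val_lt k)
      rw [ZMod.natCast_val, ZMod.cast_id, hP0, coeff_zero] at h1
      exact_mod_cast h1.symm
    rw [Finset.sum_congr rfl (fun k _ => hf0 k)] at hsum
    simp at hsum
    omega
  have hΦ0 : cyclotomic p ℤ ≠ 0 := cyclotomic_ne_zero p ℤ
  have hq0 : q ≠ 0 := by rintro rfl; rw [mul_zero] at hq; exact hP0 hq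
  have hΦdeg : (cyclotomic p ℤ).natDegree = p - 1 := by
    rw [natDegree_cyclotomic, Nat.totient_prime Fact.out]
  have hdegq : q.natDegree = 0 := by
    have h2 := natDegree_mul hΦ0 hq0
    rw [← hq, hΦdeg] at h2
    omega
  obtain ⟨co, hco⟩ := natDegree_eq_zero.mp hdegq
  have hgeom : ∀ n : ℕ, n < p → (∑ i ∈ Finset.range p, (X:ℤ[X]) ^ i).coeff n = 1 := by
    intro n hn
    rw [finset_sum_coeff]
    rw [Finset.sum_congr rfl (fun i _ => coeff_X_pow i n)]
    rw [Finset.sum_ite_eq (Finset.range p) n (fun _ => (1:ℤ))]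
    simp [hn]
  have hfco : ∀ k : ZMod p, (f k : ℤ) = co := by
    intro k
    have h1 := hcoeff k.val (ZMod.val_lt k)
    rw [ZMod.natCast_val, ZMod.cast_id] at h1
    have h2 : P.coeff k.val = co := by
      rw [hq, ← hco, coeff_mul_C, cyclotomic_prime, hgeom _ (ZMod.val_lt k), one_mul]
    rw [h2] at h1
    exact h1.symm
  have hpco : (p : ℤ) = p * co := by
    calc (p : ℤ) = ((∑ k : ZMod p, f k : ℕ) : ℤ) := by rw [hsum]
    _ = ∑ k : ZMod p, (f k : ℤ) := by push_cast; ring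
    _ = ∑ _k : ZMod p, co := Finset.sum_congr rfl (fun k _ => hfco k)
    _ = p * co := by simp [Finset.sum_const, ZMod.card, mul_comm]
  have hco1 : co = 1 := by
    have hp0 : (p : ℤ) ≠ 0 := by exact_mod_cast (Fact.out : p.Prime).ne_zero
    have := hpco.symm.trans (mul_one (p:ℤ)).symm
    exact mul_left_cancel₀ hp0 this
  intro k
  have := hfco k
  rw [hco1] at this
  exact_mod_cast this


lemma trans_of_mf_one {A : Set (GG p)} (φ : GG p →+ ZMod p)
    (h : ∀ k, mf A φ k = 1) : ∀ w, ∃! s, s ∈ A ∧ φ s = w := by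
  intro w
  obtain ⟨x, hx⟩ := Finset.card_eq_one.mp (h w)
  have hxmem : x ∈ A ∧ φ x = w := by
    have : x ∈ (Set.toFinite A).toFinset.filter fun s => φ s = w := by
      rw [hx]; exact Finset.mem_singleton_self x
    rw [Finset.mem_filter, Set.Finite.mem_toFinset] at this
    exact this
  refine ⟨x, hxmem, ?_⟩
  intro y hy
  have : y ∈ (Set.toFinite A).toFinset.filter fun s => φ s = w := by
    rw [Finset.mem_filter, Set.Finite.mem_toFinset]; exact hy
  rw [hx, Finset.mem_singleton] at this
  exact this

lemma dichotomy {A B : Set (GG p)} (hF : IsFactorization A B)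
    (hA : A.ncard = p) (hB : B.ncard = p)
    (φ : GG p →+ ZMod p) (hφ : Function.Surjective φ) :
    (∀ w, ∃! s, s ∈ A ∧ φ s = w) ∨ (∀ w, ∃! s, s ∈ B ∧ φ s = w) := by
  haveI : NeZero p := ⟨(Fact.out : p.Prime).ne_zero⟩
  set P := ∑ k : ZMod p, (C (mf A φ k : ℤ)) * X ^ (k.val) with hP
  set Q := ∑ k : ZMod p, (C (mf B φ k : ℤ)) * X ^ (k.val) with hQ
  have hΦdvd : cyclotomic p ℤ ∣ (X : ℤ[X]) ^ p - 1 := by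
    rw [cyclotomic_prime]
    exact ⟨X - 1, (geom_sum_mul (X : ℤ[X]) p).symm⟩
  set R := ∑ s : ZMod p, (C ((p : ℤ))) * X ^ (s.val) with hR
  have hRR : R = ∑ k : ZMod p, ∑ l : ZMod p,
      C ((mf A φ k : ℤ) * (mf B φ l : ℤ)) * X ^ ((k + l).val) := by
    rw [hR]
    have h1 : ∀ s : ZMod p, (C ((p:ℤ))) * X ^ (s.val)
        = ∑ k : ZMod p, C ((mf A φ k : ℤ) * (mf B φ (s - k) : ℤ)) * X ^ (s.val) := by
      intro s
      rw [← Finset.sum_mul, ← map_sum C]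
      congr 2
      have := conv_identity hF φ hφ s
      push_cast [← this]
      ring
    rw [Finset.sum_congr rfl (fun s _ => h1 s), Finset.sum_comm]
    apply Finset.sum_congr rfl
    intro k _
    rw [← Equiv.sum_comp (Equiv.addLeft k)
      (fun s => C ((mf A φ k : ℤ) * (mf B φ (s - k) : ℤ)) * X ^ (s.val))]
    apply Finset.sum_congr rfl
    intro l _
    simp [Equiv.addLeft]
  have hPQR : (X : ℤ[X]) ^ p - 1 ∣ P * Q - R := by
    rw [hP, hQ, Finset.sum_mul_sum, hRR, ← Finset.sum_sub_distrib]
    apply Finset.dvd_sum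
    intro k _
    rw [← Finset.sum_sub_distrib]
    apply Finset.dvd_sum
    intro l _
    have he : (C ((mf A φ k : ℤ)) * X ^ (k.val)) * (C ((mf B φ l : ℤ)) * X ^ (l.val))
        = C ((mf A φ k : ℤ) * (mf B φ l : ℤ)) * X ^ (k.val + l.val) := by
      rw [mul_mul_mul_comm, ← C_mul, ← pow_add]
    rw [he, ← mul_sub]
    apply Dvd.dvd.mul_left
    apply exp_dvd
    rw [ZMod.val_add]
    exact (Nat.mod_mod_of_dvd _ dvd_rfl).symm
  have hΦR : cyclotomic p ℤ ∣ R := by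
    have hsumval : ∑ s : ZMod p, (X:ℤ[X]) ^ s.val = ∑ i ∈ Finset.range p, X ^ i := by
      apply Finset.sum_nbij' (fun s => s.val) (fun i => ((i : ℕ) : ZMod p))
      · intro a _; exact Finset.mem_range.mpr (ZMod.val_lt a)
      · intro i _; exact Finset.mem_univ _
      · intro a _; rw [ZMod.natCast_val, ZMod.cast_id]
      · intro i hi; exact ZMod.val_cast_of_lt (Finset.mem_range.mp hi)
      · intro a _; rfl
    rw [hR, ← Finset.mul_sum, hsumval, ← cyclotomic_prime]
    exact Dvd.dvd.mul_left dvd_rfl _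
  have hΦPQ : cyclotomic p ℤ ∣ P * Q := by
    have he : P * Q = (P * Q - R) + R := by ring
    rw [he]
    exact dvd_add (hΦdvd.trans hPQR) hΦR
  have hirr : Irreducible (cyclotomic p ℤ) := cyclotomic.irreducible (Fact.out : p.Prime).pos
  have hpr : Prime (cyclotomic p ℤ) := UniqueFactorizationMonoid.irreducible_iff_prime.mp hirr
  rcases (hpr.2.2 P Q hΦPQ) with h | h
  · exact Or.inl (trans_of_mf_one φ (unif _ (by rw [mf_sum, hA]) h))
  · exact Or.inr (trans_of_mf_one φ (unif _ (by rw [mf_sum, hB]) h))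



/-- linear polynomial attached to a point of the graph of σ -/
noncomputable def ell (σ : ZMod p → ZMod p) (x : ZMod p) : Polynomial (ZMod p) :=
  C (σ x) - C x * X

/-- Rédei polynomial (bivariate, outer variable X, inner variable Y) -/
noncomputable def RF (σ : ZMod p → ZMod p) (s : Finset (ZMod p)) :
    Polynomial (Polynomial (ZMod p)) :=
  s.prod fun x => X - C (ell σ x)

noncomputable def QF (s : Finset (ZMod p)) : Polynomial (ZMod p) :=
  s.prod fun x => X + C x

lemma ell_natDegree_le (σ : ZMod p → ZMod p) (x : ZMod p) : (ell σ x).natDegree ≤ 1 := by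
  unfold ell
  refine le_trans (natDegree_sub_le _ _) ?_
  simp [natDegree_C_mul_le]
  exact le_trans (natDegree_C_mul_le _ _) (by simp)

lemma RF_monic (σ : ZMod p → ZMod p) (s : Finset (ZMod p)) : (RF σ s).Monic :=
  monic_prod_of_monic _ _ fun x _ => monic_X_sub_C _

lemma RF_natDegree (σ : ZMod p → ZMod p) (s : Finset (ZMod p)) :
    (RF σ s).natDegree = s.card := by
  unfold RF
  rw [natDegree_prod_of_monic _ _ (fun x _ => monic_X_sub_C _)]
  simp

lemma QF_monic (s : Finset (ZMod p)) : (QF s).Monic :=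
  monic_prod_of_monic _ _ fun x _ => monic_X_add_C _

lemma QF_natDegree (s : Finset (ZMod p)) : (QF s).natDegree = s.card := by
  unfold QF
  rw [natDegree_prod_of_monic _ _ (fun x _ => monic_X_add_C _)]
  simp

lemma RF_coeff_natDegree_le (σ : ZMod p → ZMod p) (s : Finset (ZMod p)) (j : ℕ) :
    ((RF σ s).coeff j).natDegree ≤ s.card - j := by
  induction s using Finset.induction generalizing j with
  | empty =>
    unfold RF
    rcases j with _ | j <;> simp [coeff_one]
  | @insert a s ha ih =>
    have hstep : RF σ (insert a s) = X * RF σ s - C (ell σ a) * RF σ s := by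
      unfold RF
      rw [Finset.prod_insert ha, sub_mul]
    rw [hstep, Finset.card_insert_of_notMem ha]
    rcases j with _ | j
    · rw [coeff_sub, mul_coeff_zero, coeff_X_zero, zero_mul, zero_sub, natDegree_neg,
        coeff_C_mul]
      refine le_trans (natDegree_mul_le) ?_
      have h1 := ell_natDegree_le σ a
      have h2 := ih 0
      omega
    · rw [coeff_sub, coeff_X_mul, coeff_C_mul]
      refine le_trans (natDegree_sub_le _ _) ?_
      have h1 := ih j
      have h4 : ((ell σ a) * ((RF σ s).coeff (j+1))).natDegree ≤ s.card - j := by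
        by_cases hj : j + 1 ≤ s.card
        · refine le_trans (natDegree_mul_le) ?_
          have := ell_natDegree_le σ a
          have := ih (j+1)
          omega
        · rw [coeff_eq_zero_of_natDegree_lt (by rw [RF_natDegree]; omega), mul_zero]
          simp
      have he : s.card + 1 - (j+1) = s.card - j := by omega
      rw [he]
      exact sup_le h1 h4


lemma ellc_coeff_succ (u v : ZMod p) (q : Polynomial (ZMod p)) (k : ℕ) :
    ((C u - C v * X) * q).coeff (k+1) = u * q.coeff (k+1) - v * q.coeff k := by
  rw [sub_mul, coeff_sub, coeff_C_mul, mul_assoc, coeff_C_mul, coeff_X_mul]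

lemma ellc_coeff_zero (u v : ZMod p) (q : Polynomial (ZMod p)) :
    ((C u - C v * X) * q).coeff 0 = u * q.coeff 0 := by
  rw [sub_mul, coeff_sub, coeff_C_mul, mul_assoc, coeff_C_mul, mul_coeff_zero,
    coeff_X_zero, zero_mul, mul_zero, sub_zero]

lemma RF_coeff_coeff (σ : ZMod p → ZMod p) (s : Finset (ZMod p)) (j : ℕ) :
    ((RF σ s).coeff j).coeff (s.card - j) = (QF s).coeff j := by
  induction s using Finset.induction generalizing j with
  | empty =>
    unfold RF QF
    rcases j with _ | j <;> simp [coeff_one]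
  | @insert a s ha ih =>
    have hstep : RF σ (insert a s) = X * RF σ s - C (ell σ a) * RF σ s := by
      unfold RF
      rw [Finset.prod_insert ha, sub_mul]
    have hq : QF (insert a s) = X * QF s + C a * QF s := by
      unfold QF
      rw [Finset.prod_insert ha, add_mul]
    rw [Finset.card_insert_of_notMem ha]
    rcases j with _ | j
    · rw [hstep, hq, coeff_sub, mul_coeff_zero, coeff_X_zero, zero_mul, zero_sub,
        coeff_C_mul, coeff_neg]
      have hell : ell σ a = C (σ a) - C a * X := rfl
      have h0 : ((RF σ s).coeff 0).coeff (s.card + 1) = 0 :=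
        coeff_eq_zero_of_natDegree_lt
          (lt_of_le_of_lt (RF_coeff_natDegree_le σ s 0) (by omega))
      have hs1 : s.card + 1 - 0 = (s.card - 0) + 1 := by omega
      rw [hs1, hell, ellc_coeff_succ]
      simp only [Nat.sub_zero]
      have h5 := ih 0
      simp only [Nat.sub_zero] at h5
      rw [h0, mul_zero, h5]
      rw [coeff_add, mul_coeff_zero, coeff_X_zero, zero_mul, mul_coeff_zero, coeff_C]
      simp
    · by_cases hj : j + 1 ≤ s.card
      · -- main subcase
        have hidx : s.card + 1 - (j + 1) = (s.card - (j+1)) + 1 := by omega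
        rw [hstep, hq]
        rw [coeff_sub, coeff_X_mul, coeff_C_mul, hidx]
        have hell : ell σ a = C (σ a) - C a * X := rfl
        rw [coeff_sub, hell, ellc_coeff_succ]
        have h1 : ((RF σ s).coeff j).coeff (s.card - (j+1) + 1) = (QF s).coeff j := by
          have he : s.card - (j+1) + 1 = s.card - j := by omega
          rw [he]; exact ih j
        have h2 : ((RF σ s).coeff (j+1)).coeff (s.card - (j+1) + 1) = 0 :=
          coeff_eq_zero_of_natDegree_lt
            (lt_of_le_of_lt (RF_coeff_natDegree_le σ s (j+1)) (by omega))
        have h3 : ((RF σ s).coeff (j+1)).coeff (s.card - (j+1)) = (QF s).coeff (j+1) :=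
          ih (j+1)
        rw [h1, h2, h3, coeff_add, coeff_X_mul, coeff_C_mul]
        ring
      · rcases eq_or_lt_of_le (Nat.succ_le_of_lt (not_le.mp hj)) with hje | hjl
        · -- j = s.card : leading coefficients
          have hj' : j = s.card := by omega
          subst hj'
          have hlead : (RF σ (insert a s)).coeff (s.card + 1) = 1 := by
            have hm := RF_monic σ (insert a s)
            have hd : (RF σ (insert a s)).natDegree = s.card + 1 := by
              rw [RF_natDegree, Finset.card_insert_of_notMem ha]
            rw [← hd]
            exact hm.coeff_natDegree
          have hleadq : (QF (insert a s)).coeff (s.card + 1) = 1 := by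
            have hm := QF_monic (insert a s)
            have hd : (QF (insert a s)).natDegree = s.card + 1 := by
              rw [QF_natDegree, Finset.card_insert_of_notMem ha]
            rw [← hd]
            exact hm.coeff_natDegree
          rw [hlead, hleadq]
          simp
        · -- j > s.card : everything vanishes
          have hz1 : (RF σ (insert a s)).coeff (j+1) = 0 := by
            apply coeff_eq_zero_of_natDegree_lt
            rw [RF_natDegree, Finset.card_insert_of_notMem ha]
            omega
          have hz2 : (QF (insert a s)).coeff (j+1) = 0 := by
            apply coeff_eq_zero_of_natDegree_lt
            rw [QF_natDegree, Finset.card_insert_of_notMem ha]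
            omega
          rw [hz1, hz2]
          simp


lemma not_monic_zero' {K : Type*} [Field K] : ¬ (0 : K[X]).Monic := not_monic_zero

lemma monic_dvd_eq {K : Type*} [Field K] {f g : K[X]} (hf : f.Monic) (hg : g.Monic)
    (hdvd : f ∣ g) (hdeg : g.natDegree ≤ f.natDegree) : f = g := by
  obtain ⟨u, rfl⟩ := hdvd
  have hf0 : f ≠ 0 := hf.ne_zero
  have hu0 : u ≠ 0 := by rintro rfl; rw [mul_zero] at hg; exact not_monic_zero hg
  have hdm := natDegree_mul hf0 hu0
  have hu : u.natDegree = 0 := by omega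
  obtain ⟨c, hc⟩ := natDegree_eq_zero.mp hu
  have h2 : (f * u).leadingCoeff = c := by
    rw [leadingCoeff_mul, hf.leadingCoeff, one_mul, ← hc, leadingCoeff_C]
  have hc1 : c = 1 := by rw [← h2]; exact hg
  rw [← hc, hc1, map_one, mul_one]

lemma prod_X_sub_C_univ :
    ∏ x : ZMod p, ((X : (ZMod p)[X]) - C x) = X ^ p - X := by
  have hp2 : 2 ≤ p := (Fact.out : p.Prime).two_le
  have hcard : Fintype.card (ZMod p) = p := ZMod.card p
  have hmonic2 : ((X : (ZMod p)[X]) ^ p - X).Monic := by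
    have h1 : ((X : (ZMod p)[X]) ^ (p - 1 + 1) - X).Monic := by
      apply monic_X_pow_sub
      rw [degree_X]
      exact_mod_cast (by omega : 1 < p - 1 + 1)
    rwa [show p - 1 + 1 = p from by omega] at h1
  have h1 : (∏ x : ZMod p, ((X : (ZMod p)[X]) - C x)) ∣ X ^ p - X := by
    have h2 := prod_multiset_X_sub_C_dvd ((X : (ZMod p)[X]) ^ p - X)
    have h3 : ((X : (ZMod p)[X]) ^ p - X).roots = Finset.univ.val := by
      have := FiniteField.roots_X_pow_card_sub_X (ZMod p)
      rwa [hcard] at this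
    rw [h3] at h2
    rw [Finset.prod_eq_multiset_prod]
    exact h2
  refine monic_dvd_eq (monic_prod_of_monic _ _ fun x _ => monic_X_sub_C _) hmonic2 h1 ?_
  rw [natDegree_prod_of_monic _ _ (fun x _ => monic_X_sub_C _)]
  rw [FiniteField.X_pow_card_sub_X_natDegree_eq _ (by omega : 1 < p)]
  simp [hcard]

lemma QF_univ : QF (univ : Finset (ZMod p)) = X ^ p - X := by
  unfold QF
  rw [← prod_X_sub_C_univ]
  exact Fintype.prod_equiv (Equiv.neg (ZMod p)) _ _ (fun x => by simp)

noncomputable def fy (σ : ZMod p → ZMod p) (y : ZMod p) : Polynomial (ZMod p) :=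
  ∏ x : ZMod p, (X - C (σ x - x * y))

lemma fy_eq_map (σ : ZMod p → ZMod p) (y : ZMod p) :
    fy σ y = (RF σ univ).map (evalRingHom y) := by
  unfold fy RF
  rw [Polynomial.map_prod]
  apply Finset.prod_congr rfl
  intro x _
  simp [ell]

lemma fy_coeff (σ : ZMod p → ZMod p) (y : ZMod p) (j : ℕ) :
    (fy σ y).coeff j = ((RF σ univ).coeff j).eval y := by
  rw [fy_eq_map, coeff_map]
  rfl

lemma fy_monic (σ : ZMod p → ZMod p) (y : ZMod p) : (fy σ y).Monic :=
  monic_prod_of_monic _ _ fun x _ => monic_X_sub_C _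

lemma fy_natDegree (σ : ZMod p → ZMod p) (y : ZMod p) : (fy σ y).natDegree = p := by
  unfold fy
  rw [natDegree_prod_of_monic _ _ (fun x _ => monic_X_sub_C _)]
  have h1 : ∀ x : ZMod p, ((X : (ZMod p)[X]) - C (σ x - x * y)).natDegree = 1 :=
    fun x => natDegree_X_sub_C _
  rw [Finset.sum_congr rfl (fun x _ => h1 x)]
  simp [ZMod.card]

lemma dvd_derivative_of_pow_dvd {K : Type*} [CommRing K] {f : K[X]} {c : K} {m : ℕ}
    (h : (X - C c) ^ m ∣ f) : (X - C c) ^ (m - 1) ∣ derivative f := by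
  obtain ⟨q, rfl⟩ := h
  rw [derivative_mul, derivative_pow, derivative_X_sub_C, mul_one]
  cases m with
  | zero => simp
  | succ n =>
    rw [Nat.succ_sub_one]
    apply dvd_add
    · exact ⟨C ((n : K) + 1) * q, by push_cast; ring⟩
    · exact Dvd.dvd.mul_right (pow_dvd_pow _ (by omega)) _


lemma redei_graph (σ : ZMod p → ZMod p)
    (hD : 2 * (univ.filter (fun t : ZMod p =>
        ∃ x y : ZMod p, x ≠ y ∧ σ x - σ y = t * (x - y))).card ≤ p + 1) :
    ∃ m c : ZMod p, ∀ x, σ x = m * x + c := by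
  classical
  have hp2 : 2 ≤ p := (Fact.out : p.Prime).two_le
  set D := univ.filter (fun t : ZMod p =>
      ∃ x y : ZMod p, x ≠ y ∧ σ x - σ y = t * (x - y)) with hDdef
  have hmemD : ∀ x y : ZMod p, x ≠ y → (σ x - σ y) * (x - y)⁻¹ ∈ D := by
    intro x y hxy
    rw [hDdef, Finset.mem_filter]
    refine ⟨Finset.mem_univ _, x, y, hxy, ?_⟩
    have hne : (x - y) ≠ 0 := sub_ne_zero.mpr hxy
    field_simp
  have hDne : D.Nonempty := ⟨_, hmemD 0 1 zero_ne_one⟩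
  by_cases hd1 : D.card ≤ 1
  · -- all slopes equal : affine directly
    have hcard1 : D.card = 1 := le_antisymm hd1 (Finset.card_pos.mpr hDne)
    obtain ⟨t₀, ht₀⟩ := Finset.card_eq_one.mp hcard1
    have hall : ∀ x y : ZMod p, x ≠ y → σ x - σ y = t₀ * (x - y) := by
      intro x y hxy
      have hs := hmemD x y hxy
      rw [ht₀, Finset.mem_singleton] at hs
      have hne : (x - y) ≠ 0 := sub_ne_zero.mpr hxy
      have h2 : σ x - σ y = ((σ x - σ y) * (x - y)⁻¹) * (x - y) := by field_simp
      rw [h2, hs]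
    refine ⟨t₀, σ 0, ?_⟩
    intro x
    by_cases hx : x = 0
    · subst hx; simp
    · have := hall x 0 hx
      linear_combination this
  · -- main case
    have hd2 : 2 ≤ D.card := by omega
    have hr0 : ∀ j : ℕ, D.card ≤ j → j ≤ p - 1 → (RF σ univ).coeff j = 0 := by
      intro j hdj hjp
      have hj2 : 2 ≤ j := le_trans hd2 hdj
      have htop : ((RF σ univ).coeff j).coeff (p - j) = 0 := by
        have h1 := RF_coeff_coeff σ univ j
        rw [Finset.card_univ, ZMod.card] at h1
        rw [h1, QF_univ, coeff_sub, coeff_X_pow, coeff_X]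
        rw [if_neg (by omega), if_neg (by omega)]
        ring
      have hdeg : ((RF σ univ).coeff j).natDegree ≤ p - j := by
        have := RF_coeff_natDegree_le σ univ j
        rwa [Finset.card_univ, ZMod.card] at this
      by_cases h0 : (RF σ univ).coeff j = 0
      · exact h0
      have hdeg2 : ((RF σ univ).coeff j).natDegree < p - D.card := by
        rcases lt_or_eq_of_le hdeg with h | h
        · omega
        · exfalso
          have hlc := leadingCoeff_ne_zero.mpr h0
          rw [Polynomial.leadingCoeff, h] at hlc
          exact hlc htop
      have hvanish : ∀ y ∈ Dᶜ, ((RF σ univ).coeff j).eval y = 0 := by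
        intro y hy
        rw [Finset.mem_compl, hDdef, Finset.mem_filter] at hy
        push_neg at hy
        have hyslope := hy (Finset.mem_univ y)
        have hvinj : Function.Injective (fun x : ZMod p => σ x - x * y) := by
          intro x x' hxx
          by_contra hne
          apply hyslope x x' hne
          simp only at hxx
          linear_combination hxx
        have hfy : fy σ y = X ^ p - X := by
          unfold fy
          rw [← prod_X_sub_C_univ]
          exact Fintype.prod_bijective _ ((Finite.injective_iff_bijective).mp hvinj) _ _
            (fun x => rfl)
        have h3 := fy_coeff σ y j
        rw [hfy, coeff_sub, coeff_X_pow, coeff_X, if_neg (by omega), if_neg (by omega)] at h3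
        simp at h3
        exact h3.symm
      apply Polynomial.eq_zero_of_natDegree_lt_card_of_eval_eq_zero' _ Dᶜ hvanish
      have hcc : Dᶜ.card = p - D.card := by
        rw [Finset.card_compl]
        simp [ZMod.card]
      omega
    obtain ⟨y, hy⟩ := hDne
    have hyD := hy
    rw [hDdef, Finset.mem_filter] at hyD
    obtain ⟨-, x₁, x₂, hx12, hslope⟩ := hyD
    set v : ZMod p → ZMod p := fun x => σ x - x * y with hv
    have hvcol : v x₁ = v x₂ := by
      rw [hv]; simp only; linear_combination hslope
    set g : Polynomial (ZMod p) := fy σ y - X ^ p with hg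
    have hfg : fy σ y = X ^ p + g := by rw [hg]; ring
    have hgdeg : g.natDegree ≤ D.card - 1 := by
      rw [Polynomial.natDegree_le_iff_coeff_eq_zero]
      intro N hN
      rw [hg, coeff_sub, coeff_X_pow]
      rcases lt_trichotomy N p with h | h | h
      · rw [if_neg (by omega), fy_coeff, hr0 N (by omega) (by omega), eval_zero, sub_zero]
      · subst h
        rw [if_pos rfl]
        have := (fy_monic σ y).coeff_natDegree
        rw [fy_natDegree] at this
        rw [this, sub_self]
      · rw [if_neg (by omega), coeff_eq_zero_of_natDegree_lt (by rw [fy_natDegree]; omega),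
          sub_self]
    have hroot : ∀ x : ZMod p, (fy σ y).eval (v x) = 0 := by
      intro x
      unfold fy
      rw [eval_prod]
      apply Finset.prod_eq_zero (Finset.mem_univ x)
      rw [eval_sub, eval_X, eval_C, hv]
      simp
    have hfyprod : fy σ y = ((Finset.univ.val.map v).map (fun c => X - C c)).prod := by
      rw [Multiset.map_map]
      rfl
    by_cases hg' : derivative g = 0
    · -- affine conclusion
      have hgC : g = C (g.coeff 0) := by
        apply Polynomial.eq_C_of_natDegree_le_zero
        rw [Polynomial.natDegree_le_iff_coeff_eq_zero]
        intro N hN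
        rcases N with _ | n
        · omega
        · have hder := congrArg (fun q => Polynomial.coeff q n) hg'
          simp only [Polynomial.coeff_derivative, Polynomial.coeff_zero] at hder
          rcases mul_eq_zero.mp hder with h | h
          · exact h
          · have hpn : (p : ℕ) ∣ n + 1 := by
              have : ((n + 1 : ℕ) : ZMod p) = 0 := by push_cast; exact_mod_cast h
              exact (ZMod.natCast_eq_zero_iff _ _).mp this
            have hnp : p ≤ n + 1 := Nat.le_of_dvd (by omega) hpn
            apply coeff_eq_zero_of_natDegree_lt
            omega
      refine ⟨y, -(g.coeff 0), ?_⟩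
      intro x
      have h1 := hroot x
      rw [hfg, eval_add, eval_pow, eval_X, hgC, eval_C, ZMod.pow_card] at h1
      rw [hv] at h1
      simp only at h1
      linear_combination h1
    · exfalso
      have hdf : derivative (fy σ y) = derivative g := by
        rw [hfg, derivative_add, derivative_X_pow]
        rw [ZMod.natCast_self, map_zero, zero_mul, zero_add]
      by_cases hXg : (X : Polynomial (ZMod p)) + g = 0
      · have hgX : g = -X := by linear_combination hXg
        have hfyXX : fy σ y = X ^ p - X := by rw [hfg, hgX]; ring
        set c := v x₁ with hc
        have hdd : ((X : Polynomial (ZMod p)) - C c) ^ 2 ∣ fy σ y := by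
          unfold fy
          rw [← Finset.mul_prod_erase _ _ (Finset.mem_univ x₁)]
          have hx2mem : x₂ ∈ Finset.univ.erase x₁ :=
            Finset.mem_erase.mpr ⟨Ne.symm hx12, Finset.mem_univ _⟩
          rw [← Finset.mul_prod_erase _ _ hx2mem]
          refine ⟨((Finset.univ.erase x₁).erase x₂).prod fun x => X - C (σ x - x * y), ?_⟩
          rw [show σ x₁ - x₁ * y = c from rfl, show σ x₂ - x₂ * y = c from hvcol.symm]
          ring
        have hd1' : (X : Polynomial (ZMod p)) - C c ∣ derivative (fy σ y) := by
          have := dvd_derivative_of_pow_dvd hdd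
          simpa using this
        rw [hfyXX] at hd1'
        have hderXX : derivative ((X : Polynomial (ZMod p)) ^ p - X) = -1 := by
          rw [derivative_sub, derivative_X_pow, derivative_X, ZMod.natCast_self, map_zero,
            zero_mul, zero_sub]
        rw [hderXX] at hd1'
        obtain ⟨u, hu⟩ := hd1'
        have hev := congrArg (Polynomial.eval c) hu
        simp at hev
      · have hdvd : fy σ y ∣ (X + g) * derivative g := by
          rw [hfyprod]
          have hle : (Finset.univ.val.map v) ≤ ((X + g) * derivative g).roots := by
            rw [Multiset.le_iff_count]
            intro c
            set m := (Finset.univ.val.map v).count c with hm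
            rcases Nat.eq_zero_or_pos m with h0 | hpos
            · omega
            · have hcmem : c ∈ Finset.univ.val.map v := Multiset.count_pos.mp hpos
              have hceval : (fy σ y).eval c = 0 := by
                obtain ⟨x, -, rfl⟩ := Multiset.mem_map.mp hcmem
                exact hroot x
              have hne0 : ((X : Polynomial (ZMod p)) + g) * derivative g ≠ 0 :=
                mul_ne_zero hXg hg'
              rw [Polynomial.roots_mul hne0, Multiset.count_add, Polynomial.count_roots,
                Polynomial.count_roots]
              have hr1 : 1 ≤ rootMultiplicity c (X + g) := by
                apply (Polynomial.rootMultiplicity_pos hXg).mpr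
                rw [Polynomial.IsRoot, eval_add, eval_X]
                have h4 : c + g.eval c = c ^ p + g.eval c := by rw [ZMod.pow_card]
                rw [h4]
                rw [hfg, eval_add, eval_pow, eval_X] at hceval
                exact hceval
              have hr2 : m - 1 ≤ rootMultiplicity c (derivative g) := by
                rw [Polynomial.le_rootMultiplicity_iff hg']
                rw [← hdf]
                apply dvd_derivative_of_pow_dvd (m := m)
                have hrep : Multiset.replicate m c ≤ Finset.univ.val.map v :=
                  Multiset.le_count_iff_replicate_le.mp (le_of_eq hm)
                calc ((X : Polynomial (ZMod p)) - C c) ^ m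
                    = ((Multiset.replicate m c).map (fun c => X - C c)).prod := by
                      rw [Multiset.map_replicate, Multiset.prod_replicate]
                  _ ∣ fy σ y := by
                      rw [hfyprod]
                      exact Multiset.prod_dvd_prod_of_le (Multiset.map_le_map hrep)
              omega
          exact dvd_trans (Multiset.prod_dvd_prod_of_le (Multiset.map_le_map hle))
            (prod_multiset_X_sub_C_dvd _)
        have hdbound : (((X : Polynomial (ZMod p)) + g) * derivative g).natDegree ≤ p - 2 := by
          refine le_trans (natDegree_mul_le) ?_
          have h1 : ((X : Polynomial (ZMod p)) + g).natDegree ≤ D.card - 1 := by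
            refine le_trans (natDegree_add_le _ _) ?_
            rw [natDegree_X]
            exact sup_le (by omega) hgdeg
          have h2 : (derivative g).natDegree ≤ D.card - 2 := by
            have := Polynomial.natDegree_derivative_le g
            omega
          omega
        have hne0 : ((X : Polynomial (ZMod p)) + g) * derivative g ≠ 0 :=
          mul_ne_zero hXg hg'
        have hfin := Polynomial.natDegree_le_of_dvd hdvd hne0
        rw [fy_natDegree] at hfin
        omega



/-- directions indexed by `Option (ZMod p)`; `none` is the vertical direction. -/
noncomputable def dphi : Option (ZMod p) → (GG p →+ ZMod p)
  | none => phi 1 0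
  | some t => phi t 1

lemma not_trans_of_collide {X : Set (GG p)} {φ : GG p →+ ZMod p} {P Q : GG p}
    (hP : P ∈ X) (hQ : Q ∈ X) (hPQ : P ≠ Q) (hφ : φ P = φ Q) :
    ¬ (∀ w, ∃! s, s ∈ X ∧ φ s = w) := by
  intro h
  obtain ⟨s, -, huniq⟩ := h (φ P)
  exact hPQ ((huniq P ⟨hP, rfl⟩).trans (huniq Q ⟨hQ, hφ.symm⟩).symm)

lemma graph_of_trans {X : Set (GG p)} (h : ∀ w, ∃! s, s ∈ X ∧ phi 1 0 s = w) :
    ∃ σ : ZMod p → ZMod p, X = Set.range (fun u : ZMod p => (u, σ u)) := by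
  have hphi : ∀ s : GG p, phi 1 0 s = s.1 := by intro s; rw [phi_apply]; ring
  choose f h1 h2 using h
  refine ⟨fun u => (f u).2, ?_⟩
  ext z
  constructor
  · intro hz
    refine ⟨z.1, ?_⟩
    have huni := h2 z.1 z ⟨hz, hphi z⟩
    show (z.1, (f z.1).2) = z
    rw [← huni]
  · rintro ⟨u, rfl⟩
    have hfu := h1 u
    have h3 : f u = (u, (f u).2) := by
      have h4 := hfu.2
      rw [hphi] at h4
      exact Prod.ext h4 rfl
    show (u, (f u).2) ∈ X
    rw [← h3]
    exact hfu.1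

lemma trans_image (e : GG p ≃+ GG p) (φ ψ : GG p →+ ZMod p)
    (hcomp : ∀ z, ψ (e z) = φ z) {X : Set (GG p)}
    (h : ∀ w, ∃! s, s ∈ X ∧ φ s = w) :
    ∀ w, ∃! s, s ∈ (⇑e '' X) ∧ ψ s = w := by
  intro w
  obtain ⟨s, ⟨hs, hsval⟩, huniq⟩ := h w
  refine ⟨e s, ⟨⟨s, hs, rfl⟩, by rw [hcomp]; exact hsval⟩, ?_⟩
  rintro z ⟨⟨x, hx, rfl⟩, hz⟩
  rw [hcomp] at hz
  rw [huniq x ⟨hx, hz⟩]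

def Mequiv (t : ZMod p) : GG p ≃+ GG p where
  toFun := fun z => (t * z.1 - z.2, z.1)
  invFun := fun w => (w.2, t * w.2 - w.1)
  left_inv := by intro z; simp [Prod.ext_iff]
  right_inv := by intro w; simp [Prod.ext_iff]
  map_add' := by intro z w; simp [Prod.ext_iff]; ring

lemma redei_wrapper (X : Set (GG p)) (T : Finset (Option (ZMod p)))
    (hT : ∀ o ∈ T, ∀ w, ∃! s, s ∈ X ∧ dphi o s = w)
    (hTcard : p + 1 ≤ 2 * T.card) :
    ∃ a b : ZMod p, ¬(a = 0 ∧ b = 0) ∧ ∃ c d : ZMod p,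
      X = Set.range (fun n : ZMod p => (b * n + c, a * n + d)) := by
  classical
  have hp2 : 2 ≤ p := (Fact.out : p.Prime).two_le
  have hoptcard : Fintype.card (Option (ZMod p)) = p + 1 := by
    simp [Fintype.card_option, ZMod.card]
  have hTne : T.Nonempty := by
    rw [← Finset.card_pos]
    omega
  have hcompl : Tᶜ.card = p + 1 - T.card := by
    rw [Finset.card_compl, hoptcard]
  obtain ⟨o₀, ho₀⟩ := hTne
  rcases o₀ with _ | t
  · -- X is already a graph over the first coordinate
    obtain ⟨σ, hσ⟩ := graph_of_trans (hT none ho₀)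
    have hDD : 2 * (univ.filter (fun t : ZMod p =>
        ∃ x y : ZMod p, x ≠ y ∧ σ x - σ y = t * (x - y))).card ≤ p + 1 := by
      have hinj : ∀ t ∈ (univ.filter (fun t : ZMod p =>
          ∃ x y : ZMod p, x ≠ y ∧ σ x - σ y = t * (x - y))), (some t) ∈ Tᶜ := by
        intro t ht
        rw [Finset.mem_filter] at ht
        obtain ⟨-, x, x', hxx, hsl⟩ := ht
        rw [Finset.mem_compl]
        intro hmem
        apply not_trans_of_collide (X := X) (φ := dphi (some t))
          (P := (x, σ x)) (Q := (x', σ x')) (by rw [hσ]; exact ⟨x, rfl⟩)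
          (by rw [hσ]; exact ⟨x', rfl⟩)
          (by simp [Prod.ext_iff]; intro h; exact absurd h hxx)
          ?_ (hT _ hmem)
        show phi t 1 _ = phi t 1 _
        rw [phi_apply, phi_apply]
        simp only
        linear_combination -hsl
      have hcard := Finset.card_le_card_of_injOn _ hinj
        (by intro a _ b _ h; exact Option.some_injective _ h)
      omega
    obtain ⟨m, c, hmc⟩ := redei_graph σ hDD
    refine ⟨m, 1, by simp, 0, c, ?_⟩
    rw [hσ]
    apply congrArg Set.range
    funext u
    rw [hmc u]
    simp [Prod.ext_iff]
  · -- coordinate change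
    have hcomp : ∀ z : GG p, phi 1 0 ((Mequiv t) z) = phi t 1 z := by
      intro z
      rw [phi_apply, phi_apply]
      show 1 * (t * z.1 - z.2) - 0 * z.1 = _
      ring
    have htr' := trans_image (Mequiv t) (phi t 1) (phi 1 0) hcomp (hT _ ho₀)
    obtain ⟨σ, hσ⟩ := graph_of_trans htr'
    set hdir : ZMod p → Option (ZMod p) :=
      fun s => if s = 0 then none else some (t - s⁻¹) with hh
    have hmaps : ∀ s ∈ (univ.filter (fun s : ZMod p =>
        ∃ x y : ZMod p, x ≠ y ∧ σ x - σ y = s * (x - y))), hdir s ∈ Tᶜ := by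
      intro s hs
      rw [Finset.mem_filter] at hs
      obtain ⟨-, x, x', hxx, hsl⟩ := hs
      have hP' : ((x, σ x) : GG p) ∈ ⇑(Mequiv t) '' X := by rw [hσ]; exact ⟨x, rfl⟩
      have hQ' : ((x', σ x') : GG p) ∈ ⇑(Mequiv t) '' X := by rw [hσ]; exact ⟨x', rfl⟩
      obtain ⟨P, hPX, hMP⟩ := hP'
      obtain ⟨Q, hQX, hMQ⟩ := hQ'
      have hMPc : (t * P.1 - P.2, P.1) = ((x, σ x) : GG p) := hMP
      have hMQc : (t * Q.1 - Q.2, Q.1) = ((x', σ x') : GG p) := hMQ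
      rw [Prod.mk.injEq] at hMPc hMQc
      obtain ⟨hP2, hP1⟩ := hMPc
      obtain ⟨hQ2, hQ1⟩ := hMQc
      have hPQ : P ≠ Q := by
        intro h
        apply hxx
        rw [h] at hP2
        rw [hP2] at hQ2
        exact hQ2
      rcases eq_or_ne s 0 with hs0 | hs0
      · have hnone : hdir s = none := by rw [hh]; simp [hs0]
        rw [hnone, Finset.mem_compl]
        intro hmem
        apply not_trans_of_collide (X := X) (φ := dphi none) hPX hQX hPQ ?_ (hT _ hmem)
        show phi 1 0 P = phi 1 0 Q
        rw [phi_apply, phi_apply]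
        have hσeq : σ x = σ x' := by
          have h5 := hsl
          rw [hs0] at h5
          simp only [zero_mul] at h5
          linear_combination h5
        rw [hP1, hQ1, hσeq]
        ring
      · have hsome : hdir s = some (t - s⁻¹) := by rw [hh]; simp [hs0]
        rw [hsome, Finset.mem_compl]
        intro hmem
        apply not_trans_of_collide (X := X) (φ := dphi (some (t - s⁻¹))) hPX hQX hPQ ?_
          (hT _ hmem)
        show phi (t - s⁻¹) 1 P = phi (t - s⁻¹) 1 Q
        rw [phi_apply, phi_apply]
        have hPP2 : P.2 = t * σ x - x := by rw [← hP1]; linear_combination -hP2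
        have hQQ2 : Q.2 = t * σ x' - x' := by rw [← hQ1]; linear_combination -hQ2
        rw [hP1, hQ1, hPP2, hQQ2]
        have hinv : s⁻¹ * s = 1 := inv_mul_cancel₀ hs0
        linear_combination (-s⁻¹) * hsl + (x' - x) * hinv
    have hDD : 2 * (univ.filter (fun s : ZMod p =>
        ∃ x y : ZMod p, x ≠ y ∧ σ x - σ y = s * (x - y))).card ≤ p + 1 := by
      have hinj : Set.InjOn hdir (univ.filter (fun s : ZMod p =>
          ∃ x y : ZMod p, x ≠ y ∧ σ x - σ y = s * (x - y))) := by
        intro a _ b _ hab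
        rw [hh] at hab
        simp only at hab
        rcases eq_or_ne a 0 with ha | ha <;> rcases eq_or_ne b 0 with hb | hb
        · rw [ha, hb]
        · rw [if_pos ha, if_neg hb] at hab; exact absurd hab (by simp)
        · rw [if_neg ha, if_pos hb] at hab; exact absurd hab (by simp)
        · rw [if_neg ha, if_neg hb] at hab
          have h2 := Option.some_injective _ hab
          have h3 : a⁻¹ = b⁻¹ := by linear_combination -h2
          have := inv_injective h3
          exact this
      have hcard := Finset.card_le_card_of_injOn _ hmaps hinj
      omega
    obtain ⟨m, c, hmc⟩ := redei_graph σ hDD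
    refine ⟨t * m - 1, m, ?_, c, t * c, ?_⟩
    · rintro ⟨h1, h2⟩
      rw [h2] at h1
      simp at h1
    · have hXimg : X = ⇑(Mequiv t).symm '' (⇑(Mequiv t) '' X) := by
        rw [Set.image_image]
        simp
      rw [hXimg, hσ, ← Set.range_comp]
      apply congrArg Set.range
      funext u
      show (Mequiv t).symm (u, σ u) = _
      have hsymm : (Mequiv t).symm (u, σ u) = (σ u, t * σ u - u) := rfl
      rw [hsymm, hmc u]
      simp only [Prod.mk.injEq]
      refine ⟨trivial, ?_⟩; ring



lemma backward {S C : Set (GG p)} (hS0 : (0:GG p) ∉ S) (hcard : S.ncard = p - 1)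
    (a b c d : ZMod p)
    (himg : (fun s : GG p => a * s.1 - b * s.2) '' insert 0 S = Set.univ)
    (hC : C = Set.range fun n : ZMod p => (b * n + c, a * n + d)) :
    IsFactorization (insert 0 S) C := by
  classical
  have hp1 : 1 < p := (Fact.out : p.Prime).one_lt
  set S₀ : Set (GG p) := insert 0 S with hS₀
  have hab : ¬(a = 0 ∧ b = 0) := by
    rintro ⟨rfl, rfl⟩
    have h1 : (1 : ZMod p) ∈ (fun s : GG p => 0 * s.1 - 0 * s.2) '' S₀ :=
      himg ▸ Set.mem_univ 1
    obtain ⟨s, -, hs⟩ := h1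
    simp at hs
  have hphi : (fun s : GG p => a * s.1 - b * s.2) = ⇑(phi a b) := rfl
  rw [hphi] at himg
  have hfin : S₀.Finite := Set.toFinite _
  have hcard₀ : S₀.ncard = p := by
    rw [hS₀, Set.ncard_insert_of_notMem hS0 (Set.toFinite S), hcard]; omega
  have hinj : Set.InjOn (phi a b) S₀ := by
    have h1 : (hfin.toFinset.image (phi a b)) = Finset.univ := by
      apply Finset.coe_injective
      rw [Finset.coe_image, Set.Finite.coe_toFinset, himg, Finset.coe_univ]
    have h2 : (hfin.toFinset.image (phi a b)).card = hfin.toFinset.card := by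
      rw [h1, Finset.card_univ, ZMod.card, ← Set.ncard_eq_toFinset_card _ hfin, hcard₀]
    have := Finset.injOn_of_card_image_eq h2
    rwa [Set.Finite.coe_toFinset] at this
  have hCmem : ∀ z : GG p, z ∈ C ↔ phi a b z = a * c - b * d := by
    intro z
    rw [hC]
    constructor
    · rintro ⟨n, rfl⟩
      simp only [phi_apply]; ring
    · intro hz
      have h0 : phi a b (z - (c, d)) = 0 := by
        rw [map_sub, hz, phi_apply]
        simp
      obtain ⟨n, hn⟩ := (mem_line_iff hab _).2 h0
      refine ⟨n, ?_⟩
      have : z = (b * n, a * n) + (c, d) := by rw [hn]; abel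
      rw [this]
      rfl
  intro g
  have hw : phi a b g - (a * c - b * d) ∈ ⇑(phi a b) '' S₀ := himg ▸ Set.mem_univ _
  obtain ⟨s, hsmem, hs⟩ := hw
  refine ⟨(s, g - s), ⟨hsmem, ?_, by simp⟩, ?_⟩
  · rw [hCmem, map_sub, hs]
    abel
  · rintro ⟨x, y⟩ ⟨hx, hy, hxy⟩
    have hyval : phi a b y = a * c - b * d := (hCmem y).1 hy
    have hxval : phi a b x = phi a b g - (a * c - b * d) := by
      have := congrArg (phi a b) hxy
      rw [map_add, hyval] at this
      linear_combination this
    have hxs : x = s := hinj hx hsmem (by rw [hxval, hs])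
    have : y = g - s := by rw [← hxs]; linear_combination hxy
    simp [hxs, this]



lemma transversal_image {S₀ C : Set (GG p)} (hfac : IsFactorization S₀ C)
    {a b c d : ZMod p} (hab : ¬(a = 0 ∧ b = 0))
    (hC : C = Set.range fun n : ZMod p => (b * n + c, a * n + d)) :
    (fun s : GG p => a * s.1 - b * s.2) '' S₀ = Set.univ := by
  apply Set.eq_univ_of_forall
  intro w
  obtain ⟨g, hg⟩ := phi_surj hab (w + (a * c - b * d))
  obtain ⟨⟨s, cc⟩, ⟨hs, hcc, hsum⟩, -⟩ := hfac g
  refine ⟨s, hs, ?_⟩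
  have hccval : phi a b cc = a * c - b * d := by
    rw [hC] at hcc
    obtain ⟨n, rfl⟩ := hcc
    rw [phi_apply]
    simp only
    ring
  have h2 := congrArg (phi a b) hsum
  rw [map_add, hccval, hg] at h2
  rw [phi_apply] at h2
  show a * s.1 - b * s.2 = w
  linear_combination h2

end PCode

open PCode Finset in
/-- Perfect codes in Cayley graphs of `Z_p × Z_p` for an odd prime `p`. -/
theorem perfect_code_Zp_Zp (p : ℕ) (hp : p.Prime) (hodd : Odd p)
    (S : Set (ZMod p × ZMod p))
    (hS : S ⊂ {(0 : ZMod p × ZMod p)}ᶜ)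
    (hgen : AddSubgroup.closure S = ⊤)
    (C : Set (ZMod p × ZMod p)) :
    IsPerfectCode S C ↔
      S.ncard = p - 1 ∧
        ∃ a b : ZMod p,
          (fun s : ZMod p × ZMod p => a * s.1 - b * s.2) '' insert 0 S = Set.univ ∧
          ∃ c d : ZMod p, C = Set.range fun n : ZMod p => (b * n + c, a * n + d) := by
  haveI : Fact p.Prime := ⟨hp⟩
  classical
  have hp2 : 2 ≤ p := hp.two_le
  have h0S : (0 : ZMod p × ZMod p) ∉ S := by
    intro h
    exact (hS.1 h) rfl
  constructor
  · intro hPC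
    have hfac : IsFactorization (insert 0 S) C := hPC
    -- cardinalities
    have hprod := factorization_ncard_mul hfac
    have hS0big : 2 ≤ (insert 0 S).ncard := by
      have hSne : S.Nonempty := by
        by_contra h
        rw [Set.not_nonempty_iff_eq_empty] at h
        rw [h, AddSubgroup.closure_empty] at hgen
        exact absurd hgen bot_ne_top
      obtain ⟨s₀, hs₀⟩ := hSne
      have hpair : ({0, s₀} : Set (ZMod p × ZMod p)) ⊆ insert 0 S := by
        intro z hz
        rcases hz with hz | hz
        · rw [hz]; exact Set.mem_insert _ _
        · exact Set.mem_insert_of_mem _ (hz ▸ hs₀)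
      have hne : (0 : ZMod p × ZMod p) ≠ s₀ := fun h => h0S (h ▸ hs₀)
      calc 2 = ({0, s₀} : Set (ZMod p × ZMod p)).ncard := (Set.ncard_pair hne).symm
        _ ≤ (insert 0 S).ncard := Set.ncard_le_ncard hpair (Set.toFinite _)
    have hS0small : (insert 0 S).ncard < p * p := by
      obtain ⟨g, hg1, hg2⟩ := Set.exists_of_ssubset hS
      have hgne : g ∉ insert 0 S := by
        intro h
        rcases h with h | h
        · exact hg1 (by rw [h]; rfl)
        · exact hg2 h
      have hss : insert 0 S ⊂ Set.univ := by
        refine ⟨Set.subset_univ _, fun h => hgne (h (Set.mem_univ g))⟩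
      have := Set.ncard_lt_ncard hss (Set.toFinite _)
      rwa [Set.ncard_univ, Nat.card_prod, Nat.card_zmod] at this
    have hS0card : (insert 0 S).ncard = p := by
      have hdvd : (insert 0 S).ncard ∣ p ^ 2 := ⟨C.ncard, by rw [pow_two]; exact hprod.symm⟩
      obtain ⟨k, hk2, hke⟩ := (Nat.dvd_prime_pow hp).mp hdvd
      interval_cases k
      · rw [pow_zero] at hke; omega
      · simpa using hke
      · rw [hke] at hS0small
        have : p ^ 2 = p * p := by ring
        omega
    have hCcard : C.ncard = p := by
      rw [hS0card] at hprod
      have hp0 : 0 < p := by omega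
      exact Nat.eq_of_mul_eq_mul_left hp0 hprod
    have hScard : S.ncard = p - 1 := by
      rw [Set.ncard_insert_of_notMem h0S (Set.toFinite S)] at hS0card
      omega
    -- dichotomy over directions
    have hsurj : ∀ o : Option (ZMod p), Function.Surjective (dphi o) := by
      intro o
      rcases o with _ | t
      · exact phi_surj (fun h => one_ne_zero h.1)
      · exact phi_surj (fun h => one_ne_zero h.2)
    set TC := univ.filter (fun o : Option (ZMod p) =>
      ∀ w, ∃! s, s ∈ C ∧ dphi o s = w) with hTC
    set TS := univ.filter (fun o : Option (ZMod p) =>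
      ∀ w, ∃! s, s ∈ insert 0 S ∧ dphi o s = w) with hTS
    have hunion : ∀ o : Option (ZMod p), o ∈ TC ∨ o ∈ TS := by
      intro o
      rcases dichotomy hfac hS0card hCcard (dphi o) (hsurj o) with h | h
      · exact Or.inr (Finset.mem_filter.mpr ⟨Finset.mem_univ _, h⟩)
      · exact Or.inl (Finset.mem_filter.mpr ⟨Finset.mem_univ _, h⟩)
    have hcardsum : p + 1 ≤ TC.card + TS.card := by
      have hsub : (univ : Finset (Option (ZMod p))) ⊆ TC ∪ TS := by
        intro o _
        rcases hunion o with h | h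
        · exact Finset.mem_union_left _ h
        · exact Finset.mem_union_right _ h
      have h1 := Finset.card_le_card hsub
      have h2 := Finset.card_union_le TC TS
      have h3 : (univ : Finset (Option (ZMod p))).card = p + 1 := by
        simp [Fintype.card_option, ZMod.card]
      omega
    refine ⟨hScard, ?_⟩
    rcases le_or_gt (p+1) (2 * TC.card) with hbig | hsmall
    · obtain ⟨a, b, hab, c, d, hC⟩ := redei_wrapper C TC
        (fun o ho => (Finset.mem_filter.mp ho).2) hbig
      exact ⟨a, b, transversal_image hfac hab hC, c, d, hC⟩
    · exfalso
      have hbigS : p + 1 ≤ 2 * TS.card := by omega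
      obtain ⟨a, b, hab, c, d, hS0⟩ := redei_wrapper (insert 0 S) TS
        (fun o ho => (Finset.mem_filter.mp ho).2) hbigS
      have h0mem : (0 : ZMod p × ZMod p) ∈ insert 0 S := Set.mem_insert _ _
      rw [hS0] at h0mem
      obtain ⟨n₀, hn₀⟩ := h0mem
      have hn₀' : ((b * n₀ + c, a * n₀ + d) : ZMod p × ZMod p) = 0 := hn₀
      have hker : ∀ z ∈ insert 0 S, phi a b z = 0 := by
        intro z hz
        rw [hS0] at hz
        obtain ⟨n, rfl⟩ := hz
        have h1 : phi a b ((b * n₀ + c, a * n₀ + d) : ZMod p × ZMod p) = 0 := by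
          rw [hn₀']
          exact map_zero _
        rw [phi_apply] at h1 ⊢
        show a * (b * n + c) - b * (a * n + d) = 0
        linear_combination h1
      have hsub : AddSubgroup.closure S ≤ (phi a b).ker := by
        apply AddSubgroup.closure_le _ |>.mpr
        intro z hz
        exact hker z (Set.mem_insert_of_mem _ hz)
      rw [hgen] at hsub
      obtain ⟨v, hv⟩ := phi_surj hab (1 : ZMod p)
      have hv0 : phi a b v = 0 := hsub (AddSubgroup.mem_top v)
      rw [hv] at hv0
      exact one_ne_zero hv0
  · rintro ⟨hcard, a, b, himg, c, d, hC⟩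
    exact backward h0S hcard a b c d himg hC
end

section
/- Let p and q be distinct primes, let G = Z_p × Z_q, let S be a proper subset of G∖{0} that generates G, and let C ⊆ G with 0 ∈ C. Then C is a perfect code in Cay(G,S) if and only if one of the following holds: (1) there exist integers α_i (i ∈ [p]) with α_0 = 0 such that S₀ = {(i, α_i) : i ∈ [p]} and C = {(0, i) : i ∈ [q]}; (2) there exist integers α_i (i ∈ [q]) with α_0 = 0 such that S₀ = {(α_i, i) : i ∈ [q]} and C = {(i, 0) : i ∈ [p]}. (Integer entries are interpreted modulo the order of the corresponding coordinate.) -/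
open Pointwise

open Polynomial Finset

/-- Sum over `ZMod n` of a function of `val` equals sum over `range n`. -/
lemma sum_zmod_val {M : Type*} [AddCommMonoid M] (n : ℕ) [NeZero n] (g : ℕ → M) :
    ∑ a : ZMod n, g a.val = ∑ i ∈ range n, g i := by
  refine Finset.sum_nbij' (fun a => a.val) (fun i => (i : ZMod n)) ?_ ?_ ?_ ?_ ?_
  · intro a _; exact Finset.mem_range.2 (ZMod.val_lt a)
  · intro a _; exact Finset.mem_univ _
  · intro a _; simp [ZMod.natCast_val, ZMod.cast_id]
  · intro i hi; exact ZMod.val_cast_of_lt (Finset.mem_range.1 hi)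
  · intro a _; rfl

lemma pow_val_add {n : ℕ} [NeZero n] {z : ℂ} (hz : z ^ n = 1) (a b : ZMod n) :
    z ^ (a + b).val = z ^ a.val * z ^ b.val := by
  rw [ZMod.val_add, ← pow_eq_pow_mod _ hz, pow_add]

/-- Conjugation: a rational polynomial vanishing at one primitive `n`-th root
vanishes at any other. -/
lemma aeval_conj {n : ℕ} (hn : 0 < n) {ζ ζ' : ℂ} (hζ : IsPrimitiveRoot ζ n)
    (hζ' : IsPrimitiveRoot ζ' n) (P : Polynomial ℚ) (h : aeval ζ P = 0) :
    aeval ζ' P = 0 := by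
  have h1 : minpoly ℚ ζ ∣ P := minpoly.dvd ℚ ζ h
  rw [← Polynomial.cyclotomic_eq_minpoly_rat hζ hn] at h1
  obtain ⟨Q, rfl⟩ := h1
  rw [map_mul, Polynomial.cyclotomic_eq_minpoly_rat hζ' hn, minpoly.aeval, zero_mul]

/-- Averaging: if all nontrivial character-twists of `c` vanish then `c` is constant
(in the averaged form). -/
lemma avg_of_vanishing {n : ℕ} [NeZero n] (hn : 1 < n) {ζ : ℂ} (hζ : IsPrimitiveRoot ζ n)
    (c : ZMod n → ℂ) (hv : ∀ t, 0 < t → t < n → ∑ b : ZMod n, c b * ζ ^ (t * b.val) = 0)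
    (b₀ : ZMod n) : (n : ℂ) * c b₀ = ∑ b : ZMod n, c b := by
  have hζ1 : ζ ^ n = 1 := hζ.pow_eq_one
  set x : ℂ := ζ ^ (n - b₀.val) with hx
  have key : ∀ b : ZMod n, ∑ t ∈ range n, (ζ ^ b.val * x) ^ t
      = if b = b₀ then (n : ℂ) else 0 := by
    intro b
    have hyn : (ζ ^ b.val * x) ^ n = 1 := by
      rw [mul_pow, ← pow_mul, ← pow_mul, mul_comm (b.val) n, mul_comm (n - b₀.val) n,
        pow_mul, pow_mul, hζ1, one_pow, one_pow, one_mul]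
    by_cases hb : b = b₀
    · have h1 : ζ ^ b.val * x = 1 := by
        rw [hb, hx, ← pow_add, Nat.add_sub_cancel' (le_of_lt (ZMod.val_lt b₀)), hζ1]
      rw [if_pos hb, h1]; simp
    · have h1 : ζ ^ b.val * x ≠ 1 := by
        intro hcon
        have : ζ ^ (b.val + (n - b₀.val)) = 1 := by rw [pow_add]; exact hcon
        have hdvd : n ∣ b.val + (n - b₀.val) := hζ.dvd_of_pow_eq_one _ this
        have hlt : b.val + (n - b₀.val) < 2 * n := by
          have := ZMod.val_lt b; omega
        have hb₀ : b₀.val < n := ZMod.val_lt b₀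
        have hbv : b.val < n := ZMod.val_lt b
        rcases hdvd with ⟨k, hk⟩
        match k, hk with
        | 0, hk => omega
        | 1, hk => exact hb (ZMod.val_injective n (by omega))
        | (k+2), hk =>
          have hexp : n * (k + 2) = n * k + 2 * n := by ring
          omega
      rw [if_neg hb, geom_sum_eq h1, hyn, sub_self, zero_div]
  have main : ∑ t ∈ range n, (∑ b : ZMod n, c b * ζ ^ (t * b.val)) * x ^ t
      = (n : ℂ) * c b₀ := by
    have : ∀ t ∈ range n, (∑ b : ZMod n, c b * ζ ^ (t * b.val)) * x ^ t
        = ∑ b : ZMod n, c b * (ζ ^ b.val * x) ^ t := by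
      intro t _
      rw [Finset.sum_mul]
      refine Finset.sum_congr rfl fun b _ => ?_
      rw [mul_comm t b.val, pow_mul, mul_assoc, ← mul_pow]
    rw [Finset.sum_congr rfl this, Finset.sum_comm]
    have : ∀ b : ZMod n, ∑ t ∈ range n, c b * (ζ ^ b.val * x) ^ t
        = c b * (if b = b₀ then (n : ℂ) else 0) := by
      intro b; rw [← Finset.mul_sum, key b]
    rw [Finset.sum_congr rfl fun b _ => this b]
    simp [mul_comm]
  have main2 : ∑ t ∈ range n, (∑ b : ZMod n, c b * ζ ^ (t * b.val)) * x ^ t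
      = ∑ b : ZMod n, c b := by
    rw [Finset.sum_eq_single_of_mem 0 (Finset.mem_range.2 (by omega))]
    · simp
    · intro t ht ht0
      rw [hv t (Nat.pos_of_ne_zero ht0) (Finset.mem_range.1 ht), zero_mul]
  rw [← main, main2]

section
variable {n : ℕ}

lemma aeval_sum_CX {ι : Type*} (s : Finset ι) (F : ι → ℤ) (e : ι → ℕ) (z : ℂ) :
    Polynomial.aeval z (∑ i ∈ s, Polynomial.C ((F i : ℚ)) * Polynomial.X ^ e i)
      = ∑ i ∈ s, (F i : ℂ) * z ^ e i := by
  rw [map_sum]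
  refine Finset.sum_congr rfl fun i _ => ?_
  simp [Polynomial.aeval_C]

lemma const_of_root_sum_zero [NeZero n] (hn : n.Prime) {ζ : ℂ} (hζ : IsPrimitiveRoot ζ n)
    (f : ZMod n → ℤ) (h : ∑ a : ZMod n, (f a : ℂ) * ζ ^ a.val = 0) :
    ∀ a a' : ZMod n, f a = f a' := by
  set P : Polynomial ℚ := ∑ a : ZMod n, C ((f a : ℚ)) * X ^ a.val with hP
  have hPζ : aeval ζ P = 0 := by
    rw [hP, aeval_sum_CX]; exact h
  have hconj : ∀ t, 0 < t → t < n → ∑ a : ZMod n, (f a : ℂ) * ζ ^ (t * a.val) = 0 := by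
    intro t ht htn
    have hcop : t.Coprime n :=
      Nat.Coprime.symm ((hn.coprime_iff_not_dvd).2
        (fun hd => absurd (Nat.le_of_dvd ht hd) (not_le.2 htn)))
    have hζt := hζ.pow_of_coprime t hcop
    have h0 := aeval_conj hn.pos hζ hζt P hPζ
    rw [hP, aeval_sum_CX] at h0
    simp_rw [← pow_mul] at h0
    exact h0
  intro a a'
  have h1 := avg_of_vanishing hn.one_lt hζ (fun b => (f b : ℂ)) hconj a
  have h2 := avg_of_vanishing hn.one_lt hζ (fun b => (f b : ℂ)) hconj a'
  have hne : (n : ℂ) ≠ 0 := by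
    exact_mod_cast hn.ne_zero
  have : (f a : ℂ) = f a' := mul_left_cancel₀ hne (h1.trans h2.symm)
  exact_mod_cast this

end

lemma fiber_sums_const {p q : ℕ} [NeZero p] [NeZero q] (hp : p.Prime) (hq : q.Prime) (hpq : p ≠ q) {ζ : ℂ}
    (hζ : IsPrimitiveRoot ζ (p * q)) (F : ZMod p × ZMod q → ℤ)
    (h : ∑ ab : ZMod p × ZMod q, (F ab : ℂ) * ((ζ ^ q) ^ ab.1.val * (ζ ^ p) ^ ab.2.val) = 0) :
    ∀ b b' : ZMod q, (∑ a : ZMod p, (F (a, b) : ℂ) * (ζ ^ q) ^ a.val)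
      = ∑ a : ZMod p, (F (a, b') : ℂ) * (ζ ^ q) ^ a.val := by
  have hpqpos : 0 < p * q := Nat.mul_pos hp.pos hq.pos
  have hζq : IsPrimitiveRoot (ζ ^ p) q := hζ.pow hpqpos rfl
  have hco : p.Coprime q := (Nat.coprime_primes hp hq).2 hpq
  set c : ZMod q → ℂ := fun b => ∑ a : ZMod p, (F (a, b) : ℂ) * (ζ ^ q) ^ a.val with hc
  set P : Polynomial ℚ :=
    ∑ ab : ZMod p × ZMod q, C ((F ab : ℚ)) * X ^ (q * ab.1.val + p * ab.2.val) with hP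
  have hPζ : aeval ζ P = 0 := by
    rw [hP, aeval_sum_CX, ← h]
    refine Finset.sum_congr rfl fun ab _ => ?_
    rw [pow_add, pow_mul, pow_mul]
  have hz1p : (ζ ^ q) ^ p = 1 := by rw [← pow_mul, mul_comm q p, hζ.pow_eq_one]
  have hz2q : (ζ ^ p) ^ q = 1 := by rw [← pow_mul, hζ.pow_eq_one]
  have hv : ∀ t, 0 < t → t < q → ∑ b : ZMod q, c b * (ζ ^ p) ^ (t * b.val) = 0 := by
    intro t ht htq
    obtain ⟨u, hu⟩ := Nat.chineseRemainder hco 1 t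
    have hu1 : u % p = 1 := by
      have h1 := hu.1
      unfold Nat.ModEq at h1
      rwa [Nat.mod_eq_of_lt hp.one_lt] at h1
    have hut : u % q = t := by
      have h1 := hu.2
      unfold Nat.ModEq at h1
      rwa [Nat.mod_eq_of_lt htq] at h1
    have hcopu : u.Coprime (p * q) := by
      refine Nat.Coprime.mul_right ?_ ?_
      · refine Nat.Coprime.symm ((hp.coprime_iff_not_dvd).2 (fun hd => ?_))
        rcases hd with ⟨k, rfl⟩
        rw [Nat.mul_mod_right] at hu1; omega
      · refine Nat.Coprime.symm ((hq.coprime_iff_not_dvd).2 (fun hd => ?_))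
        rcases hd with ⟨k, rfl⟩
        rw [Nat.mul_mod_right] at hut; omega
    have hζu := hζ.pow_of_coprime u hcopu
    have h0 := aeval_conj hpqpos hζ hζu P hPζ
    rw [hP, aeval_sum_CX] at h0
    have hz1u : (ζ ^ q) ^ u = ζ ^ q := by
      have hdm := Nat.div_add_mod u p
      have hdiv : u = p * (u / p) + 1 := by omega
      conv_lhs => rw [hdiv]
      rw [pow_add, pow_mul, hz1p, one_pow, pow_one, one_mul]
    have hz2u : (ζ ^ p) ^ u = (ζ ^ p) ^ t := by
      have hdm := Nat.div_add_mod u q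
      have hdiv : u = q * (u / q) + t := by omega
      conv_lhs => rw [hdiv]
      rw [pow_add, pow_mul, hz2q, one_pow, one_mul]
    calc ∑ b : ZMod q, c b * (ζ ^ p) ^ (t * b.val)
        = ∑ b : ZMod q, ∑ a : ZMod p, (F (a, b) : ℂ) * ((ζ ^ q) ^ a.val * (ζ ^ p) ^ (t * b.val)) := by
          refine Finset.sum_congr rfl fun b _ => ?_
          rw [hc, Finset.sum_mul]
          exact Finset.sum_congr rfl fun a _ => by ring
      _ = ∑ ab : ZMod p × ZMod q, (F ab : ℂ) * ((ζ ^ q) ^ ab.1.val * (ζ ^ p) ^ (t * ab.2.val)) := by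
          rw [Fintype.sum_prod_type, Finset.sum_comm]
      _ = ∑ ab : ZMod p × ZMod q, (F ab : ℂ) * (ζ ^ u) ^ (q * ab.1.val + p * ab.2.val) := by
          refine Finset.sum_congr rfl fun ab _ => ?_
          congr 1
          have e1 : (ζ ^ u) ^ q = ζ ^ q := by rw [← pow_mul, mul_comm u q, pow_mul, hz1u]
          have e2 : (ζ ^ u) ^ p = (ζ ^ p) ^ t := by rw [← pow_mul, mul_comm u p, pow_mul, hz2u]
          conv_rhs => rw [pow_add, pow_mul, pow_mul, e1, e2]
          rw [pow_mul (ζ ^ p) t ab.2.val]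
      _ = 0 := h0
  intro b b'
  have h1 := avg_of_vanishing hq.one_lt hζq c hv b
  have h2 := avg_of_vanishing hq.one_lt hζq c hv b'
  have hne : (q : ℂ) ≠ 0 := by exact_mod_cast hq.ne_zero
  exact mul_left_cancel₀ hne (h1.trans h2.symm)

section Fact
variable {G : Type*} [AddCommGroup G] [Fintype G] {A B : Set G}

lemma fact_sum (h : IsFactorization A B) (φ : G → ℂ)
    (hφ : ∀ x y, φ (x + y) = φ x * φ y) :
    (∑ a ∈ A.toFinite.toFinset, φ a) * (∑ b ∈ B.toFinite.toFinset, φ b) = ∑ g : G, φ g := by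
  classical
  rw [Finset.sum_mul_sum, ← Finset.sum_product']
  refine Finset.sum_nbij' (fun x => x.1 + x.2) (fun g => Classical.choose (h g).exists)
    ?_ ?_ ?_ ?_ ?_
  · intro x _; exact Finset.mem_univ _
  · intro g _
    have hg := Classical.choose_spec (h g).exists
    rw [Finset.mem_product, Set.Finite.mem_toFinset, Set.Finite.mem_toFinset]
    exact ⟨hg.1, hg.2.1⟩
  · intro x hx
    rw [Finset.mem_product, Set.Finite.mem_toFinset, Set.Finite.mem_toFinset] at hx
    exact (h (x.1 + x.2)).unique (Classical.choose_spec (h (x.1 + x.2)).exists)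
      ⟨hx.1, hx.2, rfl⟩
  · intro g _
    exact (Classical.choose_spec (h g).exists).2.2
  · intro x _
    exact (hφ x.1 x.2).symm

lemma fact_card (h : IsFactorization A B) :
    A.toFinite.toFinset.card * B.toFinite.toFinset.card = Fintype.card G := by
  classical
  rw [← Finset.card_product, ← Finset.card_univ]
  refine Finset.card_nbij (fun x => x.1 + x.2) (fun x _ => Finset.mem_univ _) ?_ ?_
  · intro x hx y hy hxy
    rw [Finset.mem_coe, Finset.mem_product, Set.Finite.mem_toFinset,
      Set.Finite.mem_toFinset] at hx hy
    exact (h (x.1 + x.2)).unique ⟨hx.1, hx.2, rfl⟩ ⟨hy.1, hy.2, hxy.symm⟩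
  · intro g _
    have hg := Classical.choose_spec (h g).exists
    refine ⟨Classical.choose (h g).exists, ?_, hg.2.2⟩
    rw [Finset.mem_coe, Finset.mem_product, Set.Finite.mem_toFinset, Set.Finite.mem_toFinset]
    exact ⟨hg.1, hg.2.1⟩

end Fact

lemma fibers_structure {p q : ℕ} [NeZero p] [NeZero q] (hp : p.Prime) (hq : q.Prime)
    (hpq : p ≠ q) {ζ : ℂ} (hζ : IsPrimitiveRoot ζ (p * q)) (T : Set (ZMod p × ZMod q))
    (h : ∑ x ∈ T.toFinite.toFinset, (ζ ^ q) ^ x.1.val * (ζ ^ p) ^ x.2.val = 0) :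
    (∀ (a : ZMod p) (b b' : ZMod q), ((a, b) ∈ T ↔ (a, b') ∈ T))
      ∨ (∀ b : ZMod q, (∀ a, (a, b) ∈ T) ∨ (∀ a, (a, b) ∉ T)) := by
  classical
  have hζp : IsPrimitiveRoot (ζ ^ q) p := hζ.pow (Nat.mul_pos hp.pos hq.pos) (mul_comm p q)
  set F : ZMod p × ZMod q → ℤ := fun ab => if ab ∈ T then 1 else 0 with hF
  have hF01 : ∀ ab, F ab = 0 ∨ F ab = 1 := by
    intro ab; by_cases hab : ab ∈ T <;> simp [hF, hab]
  have hmem : ∀ ab, ab ∈ T ↔ F ab = 1 := by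
    intro ab; by_cases hab : ab ∈ T <;> simp [hF, hab]
  have hsum : ∑ ab : ZMod p × ZMod q, (F ab : ℂ) * ((ζ ^ q) ^ ab.1.val * (ζ ^ p) ^ ab.2.val)
      = 0 := by
    rw [← h]
    rw [show T.toFinite.toFinset = Finset.univ.filter (fun ab => ab ∈ T) by
      ext ab; simp only [Set.Finite.mem_toFinset, Finset.mem_filter, Finset.mem_univ, true_and]]
    rw [Finset.sum_filter]
    refine Finset.sum_congr rfl fun ab _ => ?_
    by_cases hab : ab ∈ T <;> simp [hF, hab]
  have hconst := fiber_sums_const hp hq hpq hζ F hsum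
  have hpair : ∀ (b b' : ZMod q) (a a' : ZMod p),
      F (a, b) - F (a, b') = F (a', b) - F (a', b') := by
    intro b b'
    apply const_of_root_sum_zero hp hζp (fun a => F (a, b) - F (a, b'))
    push_cast
    simp_rw [sub_mul]
    rw [Finset.sum_sub_distrib, hconst b b', sub_self]
  by_cases hcase : ∀ (a : ZMod p) (b b' : ZMod q), F (a, b) = F (a, b')
  · left
    intro a b b'
    rw [hmem, hmem, hcase a b b']
  · right
    push_neg at hcase
    obtain ⟨a0, b1, b2, hne⟩ := hcase
    -- one of the two fibers is empty
    have hkey : ∃ b0 : ZMod q, ∀ a, F (a, b0) = 0 := by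
      rcases hF01 (a0, b1) with h1 | h1 <;> rcases hF01 (a0, b2) with h2 | h2
      · exact absurd (h1.trans h2.symm) hne
      · -- F(a0,b1)=0, F(a0,b2)=1 : fiber b1 empty
        refine ⟨b1, fun a => ?_⟩
        have := hpair b1 b2 a a0
        rcases hF01 (a, b1) with h3 | h3 <;> rcases hF01 (a, b2) with h4 | h4 <;> omega
      · refine ⟨b2, fun a => ?_⟩
        have := hpair b1 b2 a a0
        rcases hF01 (a, b1) with h3 | h3 <;> rcases hF01 (a, b2) with h4 | h4 <;> omega
      · exact absurd (h1.trans h2.symm) hne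
    obtain ⟨b0, hb0⟩ := hkey
    have hc0 : ∀ b : ZMod q, ∑ a : ZMod p, (F (a, b) : ℂ) * (ζ ^ q) ^ a.val = 0 := by
      intro b
      rw [hconst b b0]
      simp [hb0]
    intro b
    have hfib : ∀ a a' : ZMod p, F (a, b) = F (a', b) :=
      const_of_root_sum_zero hp hζp (fun a => F (a, b)) (hc0 b)
    rcases hF01 (0, b) with h0 | h0
    · right; intro a hmemT
      have := (hmem (a, b)).1 hmemT
      have := hfib a 0
      omega
    · left; intro a
      rw [hmem]
      rw [hfib a 0, h0]

/-! ### small helpers -/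

lemma natCast_val_self {n : ℕ} [NeZero n] (a : ZMod n) : ((a.val : ℕ) : ZMod n) = a := by
  simp [ZMod.natCast_val, ZMod.cast_id]

lemma line_eq_q {p q : ℕ} [NeZero p] [NeZero q] :
    {x : ZMod p × ZMod q | x.1 = 0} = {x : ZMod p × ZMod q | ∃ i < q, x = (0, (i : ZMod q))} := by
  ext x
  constructor
  · intro hx
    refine ⟨x.2.val, ZMod.val_lt x.2, ?_⟩
    rw [Prod.ext_iff]
    exact ⟨hx, (natCast_val_self x.2).symm⟩
  · rintro ⟨i, hi, rfl⟩; rfl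

lemma line_eq_p {p q : ℕ} [NeZero p] [NeZero q] :
    {x : ZMod p × ZMod q | x.2 = 0} = {x : ZMod p × ZMod q | ∃ i < p, x = ((i : ZMod p), 0)} := by
  ext x
  constructor
  · intro hx
    refine ⟨x.1.val, ZMod.val_lt x.1, ?_⟩
    rw [Prod.ext_iff]
    exact ⟨(natCast_val_self x.1).symm, hx⟩
  · rintro ⟨i, hi, rfl⟩; rfl

lemma shape_left {p q : ℕ} [NeZero p] [NeZero q] (T : Set (ZMod p × ZMod q))
    (hstr : ∀ (a : ZMod p) (b b' : ZMod q), ((a, b) ∈ T ↔ (a, b') ∈ T)) :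
    ∃ A : Set (ZMod p), (∀ x : ZMod p × ZMod q, x ∈ T ↔ x.1 ∈ A) ∧
      T.toFinite.toFinset.card = A.toFinite.toFinset.card * q := by
  classical
  refine ⟨{a | (a, (0 : ZMod q)) ∈ T}, fun x => ?_, ?_⟩
  · have : x = (x.1, x.2) := rfl
    rw [this]
    exact hstr x.1 x.2 0
  · have : T.toFinite.toFinset
        = ({a | (a, (0 : ZMod q)) ∈ T} : Set (ZMod p)).toFinite.toFinset ×ˢ Finset.univ := by
      ext ⟨a, b⟩
      simp only [Set.Finite.mem_toFinset, Finset.mem_product, Finset.mem_univ, and_true,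
        Set.mem_setOf_eq]
      exact hstr a b 0
    rw [this, Finset.card_product, Finset.card_univ, ZMod.card]

lemma shape_right {p q : ℕ} [NeZero p] [NeZero q] (T : Set (ZMod p × ZMod q))
    (hstr : ∀ b : ZMod q, (∀ a, (a, b) ∈ T) ∨ (∀ a, (a, b) ∉ T)) :
    ∃ B : Set (ZMod q), (∀ x : ZMod p × ZMod q, x ∈ T ↔ x.2 ∈ B) ∧
      T.toFinite.toFinset.card = p * B.toFinite.toFinset.card := by
  classical
  have hmem : ∀ x : ZMod p × ZMod q, x ∈ T ↔ (∀ a, (a, x.2) ∈ T) := by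
    intro x
    rcases hstr x.2 with h | h
    · exact ⟨fun _ => h, fun _ => h x.1⟩
    · exact ⟨fun hx => absurd hx (h x.1), fun hx => absurd (hx 0) (h 0)⟩
  refine ⟨{b | ∀ a, (a, b) ∈ T}, fun x => hmem x, ?_⟩
  · have : T.toFinite.toFinset
        = (Finset.univ : Finset (ZMod p)) ×ˢ
            ({b | ∀ a, (a, b) ∈ T} : Set (ZMod q)).toFinite.toFinset := by
      ext ⟨a, b⟩
      simp only [Set.Finite.mem_toFinset, Finset.mem_product, Finset.mem_univ, true_and,
        Set.mem_setOf_eq]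
      exact hmem (a, b)
    rw [this, Finset.card_product, Finset.card_univ, ZMod.card]

lemma set_eq_univ_of_card {n : ℕ} [NeZero n] (A : Set (ZMod n))
    (h : A.toFinite.toFinset.card = n) : A = Set.univ := by
  have h2 : A.toFinite.toFinset = Finset.univ :=
    Finset.eq_univ_of_card _ (by rw [h]; exact (ZMod.card n).symm)
  ext a
  simp only [Set.mem_univ, iff_true]
  have : a ∈ A.toFinite.toFinset := h2 ▸ Finset.mem_univ a
  rwa [Set.Finite.mem_toFinset] at this

lemma set_all_zero_of_card {n : ℕ} [NeZero n] (A : Set (ZMod n)) (h0 : (0 : ZMod n) ∈ A)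
    (h : A.toFinite.toFinset.card = 1) : ∀ a ∈ A, a = (0 : ZMod n) := by
  obtain ⟨x, hx⟩ := Finset.card_eq_one.1 h
  intro a ha
  have h1 : a ∈ ({x} : Finset (ZMod n)) := hx ▸ (Set.Finite.mem_toFinset _).2 ha
  have h2 : (0 : ZMod n) ∈ ({x} : Finset (ZMod n)) := hx ▸ (Set.Finite.mem_toFinset _).2 h0
  rw [Finset.mem_singleton] at h1 h2
  rw [h1, ← h2]

lemma gen_contra_fst {p q : ℕ} [NeZero p] [NeZero q] (hp1 : 1 < p)
    (S : Set (ZMod p × ZMod q)) (hgen : AddSubgroup.closure S = ⊤)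
    (hfst : ∀ s ∈ S, s.1 = 0) : False := by
  haveI : Fact (1 < p) := ⟨hp1⟩
  have hle : AddSubgroup.closure S ≤ AddSubgroup.prod ⊥ ⊤ := by
    rw [AddSubgroup.closure_le]
    intro s hs
    exact AddSubgroup.mem_prod.2 ⟨AddSubgroup.mem_bot.2 (hfst s hs), AddSubgroup.mem_top _⟩
  rw [hgen] at hle
  have h1 : ((1 : ZMod p), (0 : ZMod q)) ∈ AddSubgroup.prod (⊥ : AddSubgroup (ZMod p)) ⊤ :=
    hle (AddSubgroup.mem_top _)
  have h2 := (AddSubgroup.mem_prod.1 h1).1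
  rw [AddSubgroup.mem_bot] at h2
  exact one_ne_zero h2

lemma gen_contra_snd {p q : ℕ} [NeZero p] [NeZero q] (hq1 : 1 < q)
    (S : Set (ZMod p × ZMod q)) (hgen : AddSubgroup.closure S = ⊤)
    (hsnd : ∀ s ∈ S, s.2 = 0) : False := by
  haveI : Fact (1 < q) := ⟨hq1⟩
  have hle : AddSubgroup.closure S ≤ AddSubgroup.prod ⊤ ⊥ := by
    rw [AddSubgroup.closure_le]
    intro s hs
    exact AddSubgroup.mem_prod.2 ⟨AddSubgroup.mem_top _, AddSubgroup.mem_bot.2 (hsnd s hs)⟩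
  rw [hgen] at hle
  have h1 : ((0 : ZMod p), (1 : ZMod q)) ∈ AddSubgroup.prod ⊤ (⊥ : AddSubgroup (ZMod q)) :=
    hle (AddSubgroup.mem_top _)
  have h2 := (AddSubgroup.mem_prod.1 h1).2
  rw [AddSubgroup.mem_bot] at h2
  exact one_ne_zero h2

/-! ### graph extraction -/

lemma graph_of_fact_line_q {p q : ℕ} [NeZero p] [NeZero q] (A : Set (ZMod p × ZMod q))
    (h0A : (0 : ZMod p × ZMod q) ∈ A)
    (hfact : IsFactorization A {x : ZMod p × ZMod q | x.1 = 0}) :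
    ∃ α : ℕ → ℤ, α 0 = 0 ∧
      A = {x : ZMod p × ZMod q | ∃ i < p, x = ((i : ZMod p), (α i : ZMod q))} := by
  classical
  have hex : ∀ i : ZMod p, ∃ s : ZMod p × ZMod q, s ∈ A ∧ s.1 = i := by
    intro i
    obtain ⟨⟨s, c⟩, ⟨hsA, hcC, hsum⟩, -⟩ := hfact (i, 0)
    refine ⟨s, hsA, ?_⟩
    have h1 := congrArg Prod.fst hsum
    have h2 : c.1 = 0 := hcC
    simpa [h2] using h1
  have huniq : ∀ s ∈ A, ∀ s' ∈ A, s.1 = s'.1 → s = s' := by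
    intro s hs s' hs' h11
    have key := (hfact (s.1, (0 : ZMod q))).unique
      (⟨hs, (show ((0 : ZMod p), -s.2).1 = 0 from rfl), by
        rw [Prod.ext_iff]; constructor <;> simp⟩ :
        (s, ((0 : ZMod p), -s.2)).1 ∈ A ∧ _ ∧ _)
      (⟨hs', (show ((0 : ZMod p), -s'.2).1 = 0 from rfl), by
        rw [Prod.ext_iff]; constructor <;> simp [h11.symm]⟩ :
        (s', ((0 : ZMod p), -s'.2)).1 ∈ A ∧ _ ∧ _)
    exact congrArg Prod.fst key
  set σ : ZMod p → ZMod p × ZMod q := fun i => Classical.choose (hex i) with hσ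
  have hσspec : ∀ i, σ i ∈ A ∧ (σ i).1 = i := fun i => Classical.choose_spec (hex i)
  have hσ0 : σ 0 = 0 := huniq (σ 0) (hσspec 0).1 0 h0A ((hσspec 0).2.trans rfl)
  refine ⟨fun n => (((σ (n : ZMod p)).2).val : ℤ), ?_, ?_⟩
  · show (((σ ((0 : ℕ) : ZMod p)).2).val : ℤ) = 0
    rw [Nat.cast_zero, hσ0]
    simp
  · ext x
    constructor
    · intro hx
      refine ⟨x.1.val, ZMod.val_lt x.1, ?_⟩
      have hxeq : x = σ x.1 := huniq x hx (σ x.1) (hσspec x.1).1 ((hσspec x.1).2).symm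
      rw [Prod.ext_iff]
      constructor
      · exact (natCast_val_self x.1).symm
      · dsimp only
        rw [natCast_val_self x.1, Int.cast_natCast, natCast_val_self]
        exact congrArg Prod.snd hxeq
    · rintro ⟨i, hip, rfl⟩
      have : (((i : ZMod p)), ((((σ (i : ZMod p)).2).val : ℤ) : ZMod q)) = σ (i : ZMod p) := by
        rw [Prod.ext_iff]
        constructor
        · exact ((hσspec (i : ZMod p)).2).symm
        · rw [Int.cast_natCast, natCast_val_self]
      rw [this]
      exact (hσspec (i : ZMod p)).1

lemma graph_of_fact_line_p {p q : ℕ} [NeZero p] [NeZero q] (A : Set (ZMod p × ZMod q))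
    (h0A : (0 : ZMod p × ZMod q) ∈ A)
    (hfact : IsFactorization A {x : ZMod p × ZMod q | x.2 = 0}) :
    ∃ α : ℕ → ℤ, α 0 = 0 ∧
      A = {x : ZMod p × ZMod q | ∃ i < q, x = ((α i : ZMod p), (i : ZMod q))} := by
  classical
  have hex : ∀ j : ZMod q, ∃ s : ZMod p × ZMod q, s ∈ A ∧ s.2 = j := by
    intro j
    obtain ⟨⟨s, c⟩, ⟨hsA, hcC, hsum⟩, -⟩ := hfact (0, j)
    refine ⟨s, hsA, ?_⟩
    have h1 := congrArg Prod.snd hsum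
    have h2 : c.2 = 0 := hcC
    simpa [h2] using h1
  have huniq : ∀ s ∈ A, ∀ s' ∈ A, s.2 = s'.2 → s = s' := by
    intro s hs s' hs' h22
    have key := (hfact ((0 : ZMod p), s.2)).unique
      (⟨hs, (show (-s.1, (0 : ZMod q)).2 = 0 from rfl), by
        rw [Prod.ext_iff]; constructor <;> simp⟩ :
        (s, (-s.1, (0 : ZMod q))).1 ∈ A ∧ _ ∧ _)
      (⟨hs', (show (-s'.1, (0 : ZMod q)).2 = 0 from rfl), by
        rw [Prod.ext_iff]; constructor <;> simp [h22.symm]⟩ :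
        (s', (-s'.1, (0 : ZMod q))).1 ∈ A ∧ _ ∧ _)
    exact congrArg Prod.fst key
  set σ : ZMod q → ZMod p × ZMod q := fun j => Classical.choose (hex j) with hσ
  have hσspec : ∀ j, σ j ∈ A ∧ (σ j).2 = j := fun j => Classical.choose_spec (hex j)
  have hσ0 : σ 0 = 0 := huniq (σ 0) (hσspec 0).1 0 h0A ((hσspec 0).2.trans rfl)
  refine ⟨fun n => (((σ (n : ZMod q)).1).val : ℤ), ?_, ?_⟩
  · show (((σ ((0 : ℕ) : ZMod q)).1).val : ℤ) = 0
    rw [Nat.cast_zero, hσ0]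
    simp
  · ext x
    constructor
    · intro hx
      refine ⟨x.2.val, ZMod.val_lt x.2, ?_⟩
      have hxeq : x = σ x.2 := huniq x hx (σ x.2) (hσspec x.2).1 ((hσspec x.2).2).symm
      rw [Prod.ext_iff]
      constructor
      · dsimp only
        rw [natCast_val_self x.2, Int.cast_natCast, natCast_val_self]
        exact congrArg Prod.fst hxeq
      · exact (natCast_val_self x.2).symm
    · rintro ⟨i, hip, rfl⟩
      have : (((((σ (i : ZMod q)).1).val : ℤ) : ZMod p), ((i : ZMod q))) = σ (i : ZMod q) := by
        rw [Prod.ext_iff]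
        constructor
        · rw [Int.cast_natCast, natCast_val_self]
        · exact ((hσspec (i : ZMod q)).2).symm
      rw [this]
      exact (hσspec (i : ZMod q)).1

/-! ### reverse direction -/

lemma reverse_case1 {p q : ℕ} [NeZero p] [NeZero q] (S C : Set (ZMod p × ZMod q)) (α : ℕ → ℤ)
    (hs : insert 0 S = {x : ZMod p × ZMod q | ∃ i < p, x = ((i : ZMod p), (α i : ZMod q))})
    (hc : C = {x : ZMod p × ZMod q | ∃ i < q, x = (0, (i : ZMod q))}) :
    IsFactorization (insert 0 S) C := by
  have hCmem : ∀ x : ZMod p × ZMod q, x ∈ C ↔ x.1 = 0 := by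
    intro x
    rw [hc, ← line_eq_q]
    exact Iff.rfl
  set γ : ZMod p → ZMod p × ZMod q := fun i => (i, ((α i.val : ℤ) : ZMod q)) with hγ
  have hγS : ∀ i : ZMod p, γ i ∈ insert 0 S := by
    intro i
    rw [hs]
    refine ⟨i.val, ZMod.val_lt i, ?_⟩
    rw [Prod.ext_iff]
    exact ⟨(natCast_val_self i).symm, rfl⟩
  have hSgraph : ∀ x ∈ insert 0 S, x = γ x.1 := by
    intro x hx
    rw [hs] at hx
    obtain ⟨i, hip, rfl⟩ := hx
    have hv : ((i : ZMod p)).val = i := ZMod.val_cast_of_lt hip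
    rw [Prod.ext_iff]
    refine ⟨rfl, ?_⟩
    dsimp only [hγ]
    simp only [hγ, hv]
  intro g
  refine ⟨(γ g.1, g - γ g.1), ⟨hγS g.1, ?_, by rw [add_comm, sub_add_cancel]⟩, ?_⟩
  · rw [hCmem]
    have : (g - γ g.1).1 = g.1 - (γ g.1).1 := rfl
    rw [this]
    have : (γ g.1).1 = g.1 := rfl
    rw [this, sub_self]
  · rintro ⟨s, c⟩ ⟨hsS, hcC, hsum⟩
    have hs1 : s = γ s.1 := hSgraph s hsS
    have hc1 : c.1 = 0 := (hCmem c).1 hcC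
    have hfst : s.1 = g.1 := by
      have h1 := congrArg Prod.fst hsum
      have h2 : (s + c).1 = s.1 + c.1 := rfl
      rw [h2, hc1, add_zero] at h1
      exact h1
    have hseq : s = γ g.1 := by rw [hs1, hfst]
    have hceq : c = g - γ g.1 := by
      have h3 : c = g - s := eq_sub_of_add_eq' hsum
      rw [h3, hseq]
    rw [Prod.ext_iff]
    exact ⟨hseq, hceq⟩

lemma reverse_case2 {p q : ℕ} [NeZero p] [NeZero q] (S C : Set (ZMod p × ZMod q)) (α : ℕ → ℤ)
    (hs : insert 0 S = {x : ZMod p × ZMod q | ∃ i < q, x = ((α i : ZMod p), (i : ZMod q))})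
    (hc : C = {x : ZMod p × ZMod q | ∃ i < p, x = ((i : ZMod p), 0)}) :
    IsFactorization (insert 0 S) C := by
  have hCmem : ∀ x : ZMod p × ZMod q, x ∈ C ↔ x.2 = 0 := by
    intro x
    rw [hc, ← line_eq_p]
    exact Iff.rfl
  set γ : ZMod q → ZMod p × ZMod q := fun j => (((α j.val : ℤ) : ZMod p), j) with hγ
  have hγS : ∀ j : ZMod q, γ j ∈ insert 0 S := by
    intro j
    rw [hs]
    refine ⟨j.val, ZMod.val_lt j, ?_⟩
    rw [Prod.ext_iff]
    exact ⟨rfl, (natCast_val_self j).symm⟩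
  have hSgraph : ∀ x ∈ insert 0 S, x = γ x.2 := by
    intro x hx
    rw [hs] at hx
    obtain ⟨i, hip, rfl⟩ := hx
    have hv : ((i : ZMod q)).val = i := ZMod.val_cast_of_lt hip
    rw [Prod.ext_iff]
    refine ⟨?_, rfl⟩
    dsimp only [hγ]
    simp only [hγ, hv]
  intro g
  refine ⟨(γ g.2, g - γ g.2), ⟨hγS g.2, ?_, by rw [add_comm, sub_add_cancel]⟩, ?_⟩
  · rw [hCmem]
    have : (g - γ g.2).2 = g.2 - (γ g.2).2 := rfl
    rw [this]
    have : (γ g.2).2 = g.2 := rfl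
    rw [this, sub_self]
  · rintro ⟨s, c⟩ ⟨hsS, hcC, hsum⟩
    have hs1 : s = γ s.2 := hSgraph s hsS
    have hc1 : c.2 = 0 := (hCmem c).1 hcC
    have hsnd : s.2 = g.2 := by
      have h1 := congrArg Prod.snd hsum
      have h2 : (s + c).2 = s.2 + c.2 := rfl
      rw [h2, hc1, add_zero] at h1
      exact h1
    have hseq : s = γ g.2 := by rw [hs1, hsnd]
    have hceq : c = g - γ g.2 := by
      have h3 : c = g - s := eq_sub_of_add_eq' hsum
      rw [h3, hseq]
    rw [Prod.ext_iff]
    exact ⟨hseq, hceq⟩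

/-- Perfect codes in Cayley graphs of `Z_p × Z_q` for distinct primes `p`, `q`. -/
theorem perfect_code_Zp_Zq (p q : ℕ) (hp : p.Prime) (hq : q.Prime) (hpq : p ≠ q)
    (S : Set (ZMod p × ZMod q))
    (hS : S ⊂ {(0 : ZMod p × ZMod q)}ᶜ)
    (hgen : AddSubgroup.closure S = ⊤)
    (C : Set (ZMod p × ZMod q)) (h0C : (0 : ZMod p × ZMod q) ∈ C) :
    IsPerfectCode S C ↔
      ((∃ α : ℕ → ℤ, α 0 = 0 ∧
          insert 0 S = {x : ZMod p × ZMod q | ∃ i < p, x = ((i : ZMod p), (α i : ZMod q))} ∧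
          C = {x : ZMod p × ZMod q | ∃ i < q, x = (0, (i : ZMod q))}) ∨
        (∃ α : ℕ → ℤ, α 0 = 0 ∧
          insert 0 S = {x : ZMod p × ZMod q | ∃ i < q, x = ((α i : ZMod p), (i : ZMod q))} ∧
          C = {x : ZMod p × ZMod q | ∃ i < p, x = ((i : ZMod p), 0)})) := by
  haveI : NeZero p := ⟨hp.ne_zero⟩
  haveI : NeZero q := ⟨hq.ne_zero⟩
  constructor
  · intro hPC
    have hfact : IsFactorization (insert 0 S) C := hPC
    have h0S : (0 : ZMod p × ZMod q) ∈ insert 0 S := Set.mem_insert _ _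
    have hSne : ∃ s ∈ S, s ≠ (0 : ZMod p × ZMod q) := by
      rcases Set.eq_empty_or_nonempty S with hE | ⟨s0, hs0⟩
      · exfalso
        rw [hE, AddSubgroup.closure_empty] at hgen
        have h1 : ((1 : ZMod p), (0 : ZMod q)) ∈ (⊥ : AddSubgroup (ZMod p × ZMod q)) := by
          rw [hgen]; exact AddSubgroup.mem_top _
        rw [AddSubgroup.mem_bot] at h1
        haveI : Fact (1 < p) := ⟨hp.one_lt⟩
        exact one_ne_zero (congrArg Prod.fst h1)
      · exact ⟨s0, hs0, hS.1 hs0⟩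
    obtain ⟨s0, hs0S, hs0ne⟩ := hSne
    have hS2 : 2 ≤ (insert 0 S : Set (ZMod p × ZMod q)).toFinite.toFinset.card := by
      rw [Nat.succ_le_iff, Finset.one_lt_card]
      exact ⟨0, (Set.Finite.mem_toFinset _).2 h0S, s0,
        (Set.Finite.mem_toFinset _).2 (Set.mem_insert_of_mem _ hs0S), fun h => hs0ne h.symm⟩
    have hSnotuniv : (insert 0 S : Set (ZMod p × ZMod q)) ≠ Set.univ := by
      obtain ⟨z, hz1, hz2⟩ := Set.exists_of_ssubset hS
      intro hU
      have hz3 : z ∈ insert 0 S := hU ▸ Set.mem_univ z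
      rcases Set.mem_insert_iff.1 hz3 with h | h
      · exact hz1 h
      · exact hz2 h
    have hcard := fact_card hfact
    rw [Fintype.card_prod, ZMod.card, ZMod.card] at hcard
    have hpq0 : (p * q : ℕ) ≠ 0 := Nat.mul_ne_zero hp.ne_zero hq.ne_zero
    set ζ : ℂ := Complex.exp (2 * Real.pi * Complex.I / ((p * q : ℕ) : ℂ)) with hζdef
    have hζ : IsPrimitiveRoot ζ (p * q) := Complex.isPrimitiveRoot_exp _ hpq0
    have hζp : IsPrimitiveRoot (ζ ^ q) p := hζ.pow (Nat.pos_of_ne_zero hpq0) (mul_comm p q)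
    have hz1 : (ζ ^ q) ^ p = 1 := by rw [← pow_mul, mul_comm q p, hζ.pow_eq_one]
    have hz2 : (ζ ^ p) ^ q = 1 := by rw [← pow_mul, hζ.pow_eq_one]
    set φ : ZMod p × ZMod q → ℂ := fun g => (ζ ^ q) ^ g.1.val * (ζ ^ p) ^ g.2.val with hφdef
    have hφ : ∀ x y, φ (x + y) = φ x * φ y := by
      intro x y
      show (ζ ^ q) ^ (x + y).1.val * (ζ ^ p) ^ (x + y).2.val
          = (ζ ^ q) ^ x.1.val * (ζ ^ p) ^ x.2.val * ((ζ ^ q) ^ y.1.val * (ζ ^ p) ^ y.2.val)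
      have e1 : (x + y).1 = x.1 + y.1 := rfl
      have e2 : (x + y).2 = x.2 + y.2 := rfl
      rw [e1, e2, pow_val_add hz1, pow_val_add hz2]
      ring
    have hsumG : ∑ g : ZMod p × ZMod q, φ g = 0 := by
      rw [Fintype.sum_prod_type]
      have hrow : ∀ a : ZMod p, ∑ b : ZMod q, φ (a, b)
          = (ζ ^ q) ^ a.val * ∑ b : ZMod q, (ζ ^ p) ^ b.val := by
        intro a
        rw [Finset.mul_sum]
      rw [Finset.sum_congr rfl fun a _ => hrow a, ← Finset.sum_mul]
      have h1 : ∑ a : ZMod p, (ζ ^ q) ^ a.val = 0 := by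
        rw [sum_zmod_val p (fun i => (ζ ^ q) ^ i)]
        exact hζp.geom_sum_eq_zero hp.one_lt
      rw [h1, zero_mul]
    have hmul := fact_sum hfact φ hφ
    rw [hsumG] at hmul
    rcases mul_eq_zero.1 hmul with hv | hv
    · exfalso
      have hstr := fibers_structure hp hq hpq hζ (insert 0 S) hv
      rcases hstr with hl | hr
      · obtain ⟨A, hmem, hcA⟩ := shape_left _ hl
        rw [hcA] at hcard
        have h2 : A.toFinite.toFinset.card * C.toFinite.toFinset.card * q = p * q := by
          rw [← hcard]; ring
        have h3 := Nat.eq_of_mul_eq_mul_right hq.pos h2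
        have hdvd : A.toFinite.toFinset.card ∣ p := ⟨_, h3.symm⟩
        rcases hp.eq_one_or_self_of_dvd _ hdvd with h4 | h4
        · have h0A : (0 : ZMod p) ∈ A := (hmem 0).1 h0S
          have hall := set_all_zero_of_card A h0A h4
          exact gen_contra_fst hp.one_lt S hgen
            (fun s hs => hall s.1 ((hmem s).1 (Set.mem_insert_of_mem _ hs)))
        · have hAuniv := set_eq_univ_of_card A h4
          apply hSnotuniv
          ext x
          simp only [Set.mem_univ, iff_true]
          rw [hmem x, hAuniv]
          trivial
      · obtain ⟨B, hmem, hcB⟩ := shape_right _ hr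
        rw [hcB] at hcard
        have h2 : p * (B.toFinite.toFinset.card * C.toFinite.toFinset.card) = p * q := by
          rw [← hcard]; ring
        have h3 := Nat.eq_of_mul_eq_mul_left hp.pos h2
        have hdvd : B.toFinite.toFinset.card ∣ q := ⟨_, h3.symm⟩
        rcases hq.eq_one_or_self_of_dvd _ hdvd with h4 | h4
        · have h0B : (0 : ZMod q) ∈ B := (hmem 0).1 h0S
          have hall := set_all_zero_of_card B h0B h4
          exact gen_contra_snd hq.one_lt S hgen
            (fun s hs => hall s.2 ((hmem s).1 (Set.mem_insert_of_mem _ hs)))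
        · have hBuniv := set_eq_univ_of_card B h4
          apply hSnotuniv
          ext x
          simp only [Set.mem_univ, iff_true]
          rw [hmem x, hBuniv]
          trivial
    · have hstr := fibers_structure hp hq hpq hζ C hv
      rcases hstr with hl | hr
      · left
        obtain ⟨A, hmem, hcA⟩ := shape_left _ hl
        rw [hcA] at hcard
        have h3 : (insert 0 S : Set (ZMod p × ZMod q)).toFinite.toFinset.card
            * A.toFinite.toFinset.card = p := by
          refine Nat.eq_of_mul_eq_mul_right hq.pos ?_
          rw [← hcard]; ring
        have hdvd : (insert 0 S : Set (ZMod p × ZMod q)).toFinite.toFinset.card ∣ p :=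
          ⟨_, h3.symm⟩
        have hSp : (insert 0 S : Set (ZMod p × ZMod q)).toFinite.toFinset.card = p := by
          rcases hp.eq_one_or_self_of_dvd _ hdvd with h4 | h4
          · omega
          · exact h4
        have hA1 : A.toFinite.toFinset.card = 1 := by
          rw [hSp] at h3
          exact Nat.eq_of_mul_eq_mul_left hp.pos (by rw [mul_one]; exact h3)
        have h0A : (0 : ZMod p) ∈ A := (hmem 0).1 h0C
        have hall := set_all_zero_of_card A h0A hA1
        have hCline : C = {x : ZMod p × ZMod q | x.1 = 0} := by
          ext x
          rw [hmem x]
          exact ⟨fun h => hall x.1 h, fun h => by rw [Set.mem_setOf_eq] at h; rw [h]; exact h0A⟩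
        obtain ⟨α, hα0, hαS⟩ := graph_of_fact_line_q (insert 0 S) h0S
          (by rw [← hCline]; exact hfact)
        exact ⟨α, hα0, hαS, by rw [hCline, line_eq_q]⟩
      · right
        obtain ⟨B, hmem, hcB⟩ := shape_right _ hr
        rw [hcB] at hcard
        have h3 : (insert 0 S : Set (ZMod p × ZMod q)).toFinite.toFinset.card
            * B.toFinite.toFinset.card = q := by
          refine Nat.eq_of_mul_eq_mul_left hp.pos ?_
          rw [← hcard]; ring
        have hdvd : (insert 0 S : Set (ZMod p × ZMod q)).toFinite.toFinset.card ∣ q :=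
          ⟨_, h3.symm⟩
        have hSq : (insert 0 S : Set (ZMod p × ZMod q)).toFinite.toFinset.card = q := by
          rcases hq.eq_one_or_self_of_dvd _ hdvd with h4 | h4
          · omega
          · exact h4
        have hB1 : B.toFinite.toFinset.card = 1 := by
          rw [hSq] at h3
          exact Nat.eq_of_mul_eq_mul_left hq.pos (by rw [mul_one]; exact h3)
        have h0B : (0 : ZMod q) ∈ B := (hmem 0).1 h0C
        have hall := set_all_zero_of_card B h0B hB1
        have hCline : C = {x : ZMod p × ZMod q | x.2 = 0} := by
          ext x
          rw [hmem x]
          exact ⟨fun h => hall x.2 h, fun h => by rw [Set.mem_setOf_eq] at h; rw [h]; exact h0B⟩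
        obtain ⟨α, hα0, hαS⟩ := graph_of_fact_line_p (insert 0 S) h0S
          (by rw [← hCline]; exact hfact)
        exact ⟨α, hα0, hαS, by rw [hCline, line_eq_p]⟩
  · rintro (⟨α, hα0, hs, hc⟩ | ⟨α, hα0, hs, hc⟩)
    · exact reverse_case1 S C α hs hc
    · exact reverse_case2 S C α hs hc
end

section
/- Let p be a prime, let G = Z_{p²}, let S be a proper subset of G∖{0} that generates G, and let C ⊆ G with 0 ∈ C. Then C is a perfect code in Cay(G,S) if and only if S₀ = {i + α_i·p : i ∈ [p]} (computed modulo p²) for some integers α_i (i ∈ [p]) with α_0 = 0, and C = {i·p : i ∈ [p]}, the subgroup pZ_{p²}. -/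
open Pointwise

section Aux

open Polynomial Finset

/-- Membership in the subgroup `pZ_{p²}` described as `{i·p : i < p}`, via the
reduction map `Z_{p²} → Z_p`. -/
theorem mem_coset_iff (p : ℕ) (hp : p.Prime) (x : ZMod (p ^ 2)) :
    x ∈ {x : ZMod (p ^ 2) | ∃ i < p, x = (i : ZMod (p ^ 2)) * (p : ZMod (p ^ 2))} ↔
      ZMod.castHom (dvd_pow_self p two_ne_zero) (ZMod p) x = 0 := by
  haveI : NeZero (p ^ 2) := ⟨pow_ne_zero 2 hp.ne_zero⟩
  constructor
  · rintro ⟨i, hi, rfl⟩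
    rw [map_mul, map_natCast, map_natCast, ZMod.natCast_self, mul_zero]
  · intro h
    have hx : ((x.val : ℕ) : ZMod p) = 0 := by
      rw [ZMod.natCast_val, ← ZMod.castHom_apply (h := dvd_pow_self p two_ne_zero), h]
    have hdvd : p ∣ x.val := (ZMod.natCast_eq_zero_iff _ _).mp hx
    obtain ⟨m, hm⟩ := hdvd
    have hxlt : x.val < p ^ 2 := x.val_lt
    have hmlt : m < p := by
      by_contra hge
      push_neg at hge
      have h2 : p * p ≤ p * m := Nat.mul_le_mul_left p hge
      have hxlt' : x.val < p * p := by rw [← pow_two]; exact hxlt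
      linarith
    refine ⟨m, hmlt, ?_⟩
    have hxv : ((x.val : ℕ) : ZMod (p ^ 2)) = x := by
      rw [ZMod.natCast_val, ZMod.cast_id]
    rw [← hxv, hm]
    push_cast
    ring

/-- If the mask sum of a `p`-element subset `A ∋ 0` of `Z_{p²}` vanishes at a
primitive `p²`-th root of unity, then `A = pZ_{p²}`. -/
theorem coset_of_sum_zero (p : ℕ) (hp : p.Prime) {ζ : ℂ} (hζ : IsPrimitiveRoot ζ (p ^ 2))
    (A : Set (ZMod (p ^ 2))) (hfin : A.Finite) (h0 : (0 : ZMod (p ^ 2)) ∈ A)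
    (hcard : hfin.toFinset.card = p)
    (hsum : ∑ a ∈ hfin.toFinset, ζ ^ a.val = 0) :
    A = {x : ZMod (p ^ 2) | ∃ i < p, x = (i : ZMod (p ^ 2)) * (p : ZMod (p ^ 2))} := by
  classical
  haveI : NeZero (p ^ 2) := ⟨pow_ne_zero 2 hp.ne_zero⟩
  have hn : 1 < p ^ 2 := Nat.one_lt_pow (by norm_num) hp.one_lt
  set f : ℚ[X] := ∑ a ∈ hfin.toFinset, X ^ a.val with hf
  have hcoeff : ∀ m : ℕ, m < p ^ 2 →
      f.coeff m = if ((m : ZMod (p ^ 2)) ∈ A) then 1 else 0 := by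
    intro m hm
    rw [hf, finset_sum_coeff]
    have hco : ∀ a ∈ hfin.toFinset, ((X : ℚ[X]) ^ a.val).coeff m
        = if a = ((m : ZMod (p ^ 2))) then 1 else 0 := by
      intro a _
      rw [coeff_X_pow]
      congr 1
      apply propext
      constructor
      · rintro rfl
        rw [ZMod.natCast_val, ZMod.cast_id]
      · rintro rfl
        rw [ZMod.val_cast_of_lt hm]
    rw [Finset.sum_congr rfl hco,
      Finset.sum_ite_eq' hfin.toFinset ((m : ZMod (p ^ 2))) (fun _ => (1 : ℚ))]
    simp only [Set.Finite.mem_toFinset]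
  have hcoeff0 : ∀ m : ℕ, p ^ 2 ≤ m → f.coeff m = 0 := by
    intro m hm
    rw [hf, finset_sum_coeff]
    apply Finset.sum_eq_zero
    intro a _
    rw [coeff_X_pow, if_neg]
    intro hh
    exact absurd (hh ▸ a.val_lt) (by omega)
  have hfne : f ≠ 0 := by
    intro hzero
    have h1 := hcoeff 0 (by positivity)
    rw [hzero] at h1
    simp [h0] at h1
  have hdeg : f.natDegree < p ^ 2 := by
    by_contra hle
    push_neg at hle
    exact (Polynomial.leadingCoeff_ne_zero.mpr hfne) (hcoeff0 _ hle)
  have haeval : Polynomial.aeval ζ f = 0 := by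
    rw [hf, map_sum]
    simp only [map_pow, Polynomial.aeval_X]
    exact hsum
  have hmin : cyclotomic (p ^ 2) ℚ = minpoly ℚ ζ :=
    Polynomial.cyclotomic_eq_minpoly_rat hζ (by positivity)
  have hdvd : cyclotomic (p ^ 2) ℚ ∣ f := hmin ▸ minpoly.dvd ℚ ζ haeval
  obtain ⟨Q, hQ⟩ := hdvd
  have hQ0 : Q ≠ 0 := by
    rintro rfl
    rw [mul_zero] at hQ
    exact hfne hQ
  have hcyc : cyclotomic (p ^ 2) ℚ = ∑ i ∈ range p, (X : ℚ[X]) ^ (p * i) := by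
    have h := Polynomial.cyclotomic_prime_pow_eq_geom_sum (R := ℚ) (n := 1) hp
    norm_num at h
    rw [h]
    exact Finset.sum_congr rfl fun i _ => by rw [← pow_mul]
  have hdegΦ : (cyclotomic (p ^ 2) ℚ).natDegree = p * (p - 1) := by
    rw [natDegree_cyclotomic, Nat.totient_prime_pow hp (by norm_num)]
    norm_num
  have hpp : p * (p - 1) + p = p ^ 2 := by
    obtain ⟨r, hr⟩ := Nat.exists_eq_succ_of_ne_zero hp.pos.ne'
    subst hr
    simp only [Nat.succ_sub_one, pow_two, Nat.succ_eq_add_one]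
    ring
  have hdegQ : Q.natDegree < p := by
    have hmul := Polynomial.natDegree_mul (p := cyclotomic (p ^ 2) ℚ) (q := Q)
      (cyclotomic_ne_zero _ ℚ) hQ0
    rw [← hQ, hdegΦ] at hmul
    omega
  have hkey : ∀ j < p, ∀ k < p, f.coeff (j * p + k) = Q.coeff k := by
    intro j hj k hk
    rw [hQ, hcyc, Finset.sum_mul, finset_sum_coeff]
    rw [Finset.sum_eq_single j]
    · rw [mul_comm ((X : ℚ[X]) ^ (p * j)) Q, coeff_mul_X_pow', if_pos (by
        rw [mul_comm p j]; omega)]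
      congr 1
      rw [mul_comm j p, Nat.add_sub_cancel_left]
    · intro i hi hne
      rw [mul_comm ((X : ℚ[X]) ^ (p * i)) Q, coeff_mul_X_pow']
      by_cases hle : p * i ≤ j * p + k
      · rw [if_pos hle]
        apply Polynomial.coeff_eq_zero_of_natDegree_lt
        have hij : i < j := by
          by_contra hge
          push_neg at hge
          have hor : i = j ∨ j < i := by omega
          rcases hor with rfl | hlt
          · exact hne rfl
          · have h2 : p * (j + 1) ≤ p * i := Nat.mul_le_mul_left p hlt
            rw [Nat.mul_succ, mul_comm p j] at h2
            omega
        have h2 : p * (i + 1) ≤ p * j := Nat.mul_le_mul_left p hij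
        rw [Nat.mul_succ] at h2
        have h3 : p + p * i ≤ j * p + k := by
          rw [mul_comm j p]; omega
        exact lt_of_lt_of_le hdegQ (Nat.le_sub_of_add_le h3)
      · rw [if_neg hle]
    · intro hj'
      exact absurd (Finset.mem_range.mpr hj) hj'
  have hmem : ∀ j < p, ∀ k < p,
      (((j * p + k : ℕ) : ZMod (p ^ 2)) ∈ A ↔ ((k : ℕ) : ZMod (p ^ 2)) ∈ A) := by
    intro j hj k hk
    have hbound : j * p + k < p ^ 2 := by
      have h1 : j * p + k < (j + 1) * p := by rw [add_mul, one_mul]; omega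
      have h2 : (j + 1) * p ≤ p * p := Nat.mul_le_mul_right p hj
      rw [pow_two]; omega
    have e1 := (hcoeff (j * p + k) hbound).symm.trans (hkey j hj k hk)
    have e2' := hkey 0 hp.pos k hk
    rw [zero_mul, zero_add] at e2'
    have e2 := (hcoeff k (lt_of_lt_of_le hk (Nat.le_self_pow (by norm_num) p))).symm.trans e2'
    have e3 := e1.trans e2.symm
    by_cases h1 : ((j * p + k : ℕ) : ZMod (p ^ 2)) ∈ A <;>
      by_cases h2 : ((k : ℕ) : ZMod (p ^ 2)) ∈ A <;>
      simp [h1, h2] at e3 ⊢ <;> exact e3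
  set P : Set (ZMod (p ^ 2)) :=
    {x : ZMod (p ^ 2) | ∃ i < p, x = (i : ZMod (p ^ 2)) * (p : ZMod (p ^ 2))} with hP
  have hPA : P ⊆ A := by
    rintro x ⟨i, hi, rfl⟩
    have hh := (hmem i hi 0 hp.pos).mpr (by simpa using h0)
    rw [show ((i * p + 0 : ℕ) : ZMod (p ^ 2)) = (i : ZMod (p ^ 2)) * (p : ZMod (p ^ 2)) by
      push_cast; ring] at hh
    exact hh
  have hinj : Set.InjOn (fun i : ℕ => (i : ZMod (p ^ 2)) * (p : ZMod (p ^ 2)))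
      ↑(Finset.range p) := by
    intro i hi j hj hij
    simp only [Finset.coe_range, Set.mem_Iio] at hi hj
    have hi2 : i * p < p ^ 2 := by
      rw [pow_two]; exact (Nat.mul_lt_mul_right hp.pos).mpr hi
    have hj2 : j * p < p ^ 2 := by
      rw [pow_two]; exact (Nat.mul_lt_mul_right hp.pos).mpr hj
    have hc : ((i * p : ℕ) : ZMod (p ^ 2)) = ((j * p : ℕ) : ZMod (p ^ 2)) := by
      push_cast
      simpa using hij
    have hv := congrArg ZMod.val hc
    rw [ZMod.val_cast_of_lt hi2, ZMod.val_cast_of_lt hj2] at hv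
    exact Nat.eq_of_mul_eq_mul_right hp.pos hv
  have hPfin : P = ↑((Finset.range p).image
      (fun i : ℕ => (i : ZMod (p ^ 2)) * (p : ZMod (p ^ 2)))) := by
    ext x
    simp [hP, eq_comm]
  have hPcard : P.ncard = p := by
    rw [hPfin, Set.ncard_coe_finset, Finset.card_image_of_injOn hinj, Finset.card_range]
  have hAcard : A.ncard = p := by
    rw [Set.ncard_eq_toFinset_card A hfin]
    exact hcard
  exact (Set.eq_of_subset_of_ncard_le hPA (by rw [hPcard, hAcard]) hfin).symm

/-- Uniqueness of representations in a factorization. -/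
theorem factorization_unique {G : Type*} [AddCommGroup G] {A B : Set G}
    (h : IsFactorization A B) {a b a' b' : G} (ha : a ∈ A) (hb : b ∈ B)
    (ha' : a' ∈ A) (hb' : b' ∈ B) (heq : a + b = a' + b') : a = a' ∧ b = b' := by
  obtain ⟨w, -, hu⟩ := h (a + b)
  have e1 := hu (a, b) ⟨ha, hb, rfl⟩
  have e2 := hu (a', b') ⟨ha', hb', heq.symm⟩
  have e3 := e1.trans e2.symm
  exact ⟨congrArg Prod.fst e3, congrArg Prod.snd e3⟩

/-- In a factorization of `Z_n`, the product of the mask sums at a primitive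
`n`-th root of unity vanishes, and the cardinalities multiply to `n`. -/
theorem fact_sum_card {n : ℕ} [NeZero n] {ζ : ℂ} (hζ : IsPrimitiveRoot ζ n) (hn : 1 < n)
    {A B : Set (ZMod n)} (h : IsFactorization A B) (hA : A.Finite) (hB : B.Finite) :
    (∑ a ∈ hA.toFinset, ζ ^ a.val) * (∑ b ∈ hB.toFinset, ζ ^ b.val) = 0 ∧
      hA.toFinset.card * hB.toFinset.card = n := by
  classical
  have hmapsto : ∀ ab ∈ hA.toFinset ×ˢ hB.toFinset, ab.1 + ab.2 ∈ (Finset.univ : Finset (ZMod n)) :=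
    fun _ _ => Finset.mem_univ _
  have hinj : ∀ a₁ ∈ hA.toFinset ×ˢ hB.toFinset, ∀ a₂ ∈ hA.toFinset ×ˢ hB.toFinset,
      a₁.1 + a₁.2 = a₂.1 + a₂.2 → a₁ = a₂ := by
    intro a₁ h₁ a₂ h₂ heq
    rw [Finset.mem_product, Set.Finite.mem_toFinset, Set.Finite.mem_toFinset] at h₁ h₂
    obtain ⟨w, -, hu⟩ := h (a₁.1 + a₁.2)
    have e1 := hu a₁ ⟨h₁.1, h₁.2, rfl⟩
    have e2 := hu a₂ ⟨h₂.1, h₂.2, heq.symm⟩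
    exact e1.trans e2.symm
  have hsurj : ∀ g ∈ (Finset.univ : Finset (ZMod n)),
      ∃ ab, ∃ (hab : ab ∈ hA.toFinset ×ˢ hB.toFinset), ab.1 + ab.2 = g := by
    intro g _
    obtain ⟨ab, ⟨h1, h2, h3⟩, -⟩ := h g
    exact ⟨ab, Finset.mem_product.mpr
      ⟨(Set.Finite.mem_toFinset hA).mpr h1, (Set.Finite.mem_toFinset hB).mpr h2⟩, h3⟩
  have he : ∀ a b : ZMod n, ζ ^ (a + b).val = ζ ^ a.val * ζ ^ b.val := by
    intro a b
    rw [ZMod.val_add, ← pow_add]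
    conv_rhs => rw [← Nat.div_add_mod (a.val + b.val) n, pow_add, pow_mul,
      hζ.pow_eq_one, one_pow, one_mul]
  constructor
  · have hsum' : ∑ ab ∈ hA.toFinset ×ˢ hB.toFinset, ζ ^ ab.1.val * ζ ^ ab.2.val
        = ∑ g : ZMod n, ζ ^ g.val :=
      Finset.sum_bij (fun ab _ => ab.1 + ab.2) hmapsto hinj hsurj
        (fun ab _ => (he ab.1 ab.2).symm)
    have huniv : ∑ g : ZMod n, ζ ^ g.val = 0 := by
      have hbij : ∑ g : ZMod n, ζ ^ g.val = ∑ i ∈ Finset.range n, ζ ^ i :=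
        Finset.sum_bij (fun g _ => g.val) (fun g _ => Finset.mem_range.mpr g.val_lt)
          (fun a _ b _ hab => ZMod.val_injective n hab)
          (fun i hi => ⟨(i : ZMod n), Finset.mem_univ _,
            ZMod.val_cast_of_lt (Finset.mem_range.mp hi)⟩)
          (fun _ _ => rfl)
      rw [hbij]
      exact hζ.geom_sum_eq_zero hn
    rw [Finset.sum_mul_sum,
      show (∑ i ∈ hA.toFinset, ∑ j ∈ hB.toFinset, ζ ^ i.val * ζ ^ j.val)
          = ∑ ab ∈ hA.toFinset ×ˢ hB.toFinset, ζ ^ ab.1.val * ζ ^ ab.2.val from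
        by rw [Finset.sum_product],
      hsum', huniv]
  · have hcard : (hA.toFinset ×ˢ hB.toFinset).card = (Finset.univ : Finset (ZMod n)).card :=
      Finset.card_bij (fun ab _ => ab.1 + ab.2) hmapsto hinj hsurj
    rw [Finset.card_product, Finset.card_univ, ZMod.card] at hcard
    exact hcard

end Aux

/-- Perfect codes in Cayley graphs of `Z_{p²}` for a prime `p`. -/
theorem perfect_code_Zp2 (p : ℕ) (hp : p.Prime)
    (S : Set (ZMod (p ^ 2)))
    (hS : S ⊂ {(0 : ZMod (p ^ 2))}ᶜ)
    (hgen : AddSubgroup.closure S = ⊤)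
    (C : Set (ZMod (p ^ 2))) (h0C : (0 : ZMod (p ^ 2)) ∈ C) :
    IsPerfectCode S C ↔
      (∃ α : ℕ → ℤ, α 0 = 0 ∧
        insert 0 S = {x : ZMod (p ^ 2) |
          ∃ i < p, x = (i : ZMod (p ^ 2)) + (α i : ZMod (p ^ 2)) * (p : ZMod (p ^ 2))}) ∧
      C = {x : ZMod (p ^ 2) | ∃ i < p, x = (i : ZMod (p ^ 2)) * (p : ZMod (p ^ 2))} := by
  classical
  haveI : NeZero (p ^ 2) := ⟨pow_ne_zero 2 hp.ne_zero⟩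
  haveI : NeZero p := ⟨hp.ne_zero⟩
  haveI := Fact.mk hp
  have hn : 1 < p ^ 2 := Nat.one_lt_pow (by norm_num) hp.one_lt
  haveI := Fact.mk hn
  set φ := ZMod.castHom (dvd_pow_self p two_ne_zero) (ZMod p) with hφ
  have hmemP : ∀ x : ZMod (p ^ 2),
      x ∈ {x : ZMod (p ^ 2) | ∃ i < p, x = (i : ZMod (p ^ 2)) * (p : ZMod (p ^ 2))} ↔ φ x = 0 :=
    mem_coset_iff p hp
  have hφp : φ (p : ZMod (p ^ 2)) = 0 := by
    rw [map_natCast, ZMod.natCast_self]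
  constructor
  · intro hpc
    set ζ : ℂ := Complex.exp (2 * Real.pi * Complex.I / (p ^ 2 : ℕ)) with hζdef
    have hζ : IsPrimitiveRoot ζ (p ^ 2) :=
      Complex.isPrimitiveRoot_exp (p ^ 2) (NeZero.ne _)
    have hSfin : (insert (0 : ZMod (p ^ 2)) S).Finite := Set.toFinite _
    have hCfin : C.Finite := Set.toFinite _
    obtain ⟨hmulsum, hmulcard⟩ := fact_sum_card hζ hn hpc hSfin hCfin
    -- S is nonempty
    have hSne : S.Nonempty := by
      rcases Set.eq_empty_or_nonempty S with rfl | hne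
      · rw [AddSubgroup.closure_empty] at hgen
        exact absurd hgen bot_ne_top
      · exact hne
    obtain ⟨s, hs⟩ := hSne
    have hs0 : s ≠ 0 := by
      have := hS.1 hs
      simpa using this
    have h1lt : 1 < hSfin.toFinset.card := by
      rw [Finset.one_lt_card]
      exact ⟨0, (hSfin.mem_toFinset).mpr (Set.mem_insert _ _), s,
        (hSfin.mem_toFinset).mpr (Set.mem_insert_of_mem _ hs), fun h => hs0 h.symm⟩
    have hltn : hSfin.toFinset.card < p ^ 2 := by
      obtain ⟨x, hx0, hxS⟩ := Set.exists_of_ssubset hS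
      have hxne : x ≠ 0 := by simpa using hx0
      have hxnot : x ∉ insert (0 : ZMod (p ^ 2)) S := by
        simp [hxne, hxS]
      have hne : hSfin.toFinset ≠ Finset.univ := by
        intro hcontra
        exact hxnot ((Set.Finite.mem_toFinset hSfin).mp (hcontra ▸ Finset.mem_univ x))
      have := (Finset.card_lt_iff_ne_univ _).mpr hne
      rwa [ZMod.card] at this
    have hdvd : hSfin.toFinset.card ∣ p ^ 2 := ⟨_, hmulcard.symm⟩
    obtain ⟨k, hk2, hkeq⟩ := (Nat.dvd_prime_pow hp).mp hdvd
    have hScard : hSfin.toFinset.card = p := by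
      rcases k with _ | _ | _ | k
      · rw [pow_zero] at hkeq; omega
      · rwa [pow_one] at hkeq
      · rw [hkeq] at hltn; exact absurd hltn (lt_irrefl _)
      · omega
    have hCcard : hCfin.toFinset.card = p := by
      rw [hScard] at hmulcard
      have h2 : p * hCfin.toFinset.card = p * p := by rw [hmulcard, pow_two]
      exact Nat.eq_of_mul_eq_mul_left hp.pos h2
    rcases mul_eq_zero.mp hmulsum with hz | hz
    · -- then S₀ would be the subgroup pZ, contradicting that S generates
      exfalso
      have hSP := coset_of_sum_zero p hp hζ _ hSfin (Set.mem_insert 0 S) hScard hz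
      have hker : AddSubgroup.closure S ≤ φ.toAddMonoidHom.ker := by
        rw [AddSubgroup.closure_le]
        intro x hx
        have hxP : x ∈ {x : ZMod (p ^ 2) | ∃ i < p, x = (i : ZMod (p ^ 2)) * (p : ZMod (p ^ 2))} :=
          hSP ▸ Set.mem_insert_of_mem 0 hx
        exact (hmemP x).mp hxP
      have h1 : (1 : ZMod (p ^ 2)) ∈ AddSubgroup.closure S := hgen ▸ AddSubgroup.mem_top 1
      have h2 : φ 1 = 0 := hker h1
      rw [map_one] at h2
      exact one_ne_zero h2
    · have hCP := coset_of_sum_zero p hp hζ _ hCfin h0C hCcard hz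
      refine ⟨?_, hCP⟩
      have key : ∀ i : ℕ, ∃ β : ℤ,
          (i < p → ((i : ZMod (p ^ 2)) + (β : ZMod (p ^ 2)) * (p : ZMod (p ^ 2)) ∈ insert 0 S))
            ∧ (i = 0 → β = 0) := by
        intro i
        rcases eq_or_ne i 0 with rfl | hi0
        · refine ⟨0, fun _ => ?_, fun _ => rfl⟩
          simp
        · by_cases hip : i < p
          · obtain ⟨⟨s', c⟩, ⟨hsmem, hcmem, hsum⟩, -⟩ := hpc (i : ZMod (p ^ 2))
            rw [hCP] at hcmem
            obtain ⟨j, hj, rfl⟩ := hcmem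
            refine ⟨-(j : ℤ), fun _ => ?_, fun h => absurd h hi0⟩
            have heq : (i : ZMod (p ^ 2)) + ((-(j : ℤ) : ℤ) : ZMod (p ^ 2)) * (p : ZMod (p ^ 2))
                = s' := by
              push_cast
              rw [← hsum]
              ring
            rw [heq]
            exact hsmem
          · exact ⟨0, fun h => absurd h hip, fun h => absurd h hi0⟩
      choose α hα1 hα2 using key
      refine ⟨α, hα2 0 rfl, ?_⟩
      ext x
      simp only [Set.mem_setOf_eq]
      constructor
      · intro hx
        refine ⟨(φ x).val, (φ x).val_lt, ?_⟩
        set i := (φ x).val with hidef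
        have hrep := hα1 i (ZMod.val_lt (φ x))
        set r := (i : ZMod (p ^ 2)) + (α i : ZMod (p ^ 2)) * (p : ZMod (p ^ 2)) with hr
        have hφr : φ r = φ x := by
          rw [hr, map_add, map_mul, hφp, mul_zero, add_zero, map_natCast, hidef,
            ZMod.natCast_val, ZMod.cast_id]
        have hdiff : x - r ∈ C := by
          rw [hCP]
          exact (hmemP _).mpr (by rw [map_sub, hφr, sub_self])
        have huniq := factorization_unique hpc hrep hdiff hx h0C (by ring)
        exact huniq.1.symm
      · rintro ⟨i, hip, rfl⟩
        exact hα1 i hip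
  · rintro ⟨⟨α, hα0, hS0⟩, hC⟩
    intro g
    set i := (φ g).val with hidef
    have hip : i < p := ZMod.val_lt (φ g)
    set s := (i : ZMod (p ^ 2)) + (α i : ZMod (p ^ 2)) * (p : ZMod (p ^ 2)) with hsdef
    have hsmem : s ∈ insert 0 S := by
      rw [hS0]
      exact ⟨i, hip, rfl⟩
    have hφi : ((i : ℕ) : ZMod p) = φ g := by
      rw [hidef, ZMod.natCast_val, ZMod.cast_id]
    have hφs : φ s = φ g := by
      rw [hsdef, map_add, map_mul, hφp, mul_zero, add_zero, map_natCast, hφi]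
    refine ⟨(s, g - s), ⟨hsmem, ?_, by ring⟩, ?_⟩
    · rw [hC]
      exact (hmemP _).mpr (by rw [map_sub, hφs, sub_self])
    · rintro ⟨a, b⟩ ⟨ha, hb, hab⟩
      rw [hS0] at ha
      obtain ⟨i', hi'p, rfl⟩ := ha
      rw [hC] at hb
      have hφb : φ b = 0 := (hmemP _).mp hb
      have hφa : φ ((i' : ZMod (p ^ 2)) + (α i' : ZMod (p ^ 2)) * (p : ZMod (p ^ 2)))
          = ((i' : ℕ) : ZMod p) := by
        rw [map_add, map_mul, hφp, mul_zero, add_zero, map_natCast]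
      have hgval : ((i' : ℕ) : ZMod p) = φ g := by
        rw [← hab, map_add, hφb, add_zero, hφa]
      have hii : i' = i := by
        have hv := congrArg ZMod.val hgval
        rw [ZMod.val_cast_of_lt hi'p] at hv
        rw [hv, hidef]
      have ha' : (i' : ZMod (p ^ 2)) + (α i' : ZMod (p ^ 2)) * (p : ZMod (p ^ 2)) = s := by
        rw [hii, hsdef]
      have hb' : b = g - s := by
        rw [← ha']
        exact eq_sub_of_add_eq' hab
      exact Prod.ext_iff.mpr ⟨ha', hb'⟩
end
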